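/- arXiv:2101.03789 — 4 statements merged into one kernel-verified Lean document; each statement's English description precedes it below -/
import Mathlib

section
/- Let r ≥ 2 be an integer and m_1, …, m_r positive integers with s = m_1 + ⋯ + m_r. Then the multinomial coefficient s!/(m_1!⋯m_r!) equals the sum, over all ordered bipartitions (B_1, B_2) of {1, …, r} with 1 ∈ B_1, 2 ∈ B_2 and B_2 = {1,…,r} \ B_1, of the product binom(s − r + 2, S(B_2) − |B_2| + 1) · C(B_1) · C(B_2). -/
open Finset Nat
/-- `(t + k)! = t! * (t+1)(t+2)⋯(t+k)`. -/
lemma factorial_add_prod (t k : ℕ) :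
    (t + k)! = t ! * ∏ j ∈ Finset.range k, (t + j + 1) := by
  induction k with
  | zero => simp
  | succ n ih =>
      rw [Finset.prod_range_succ, ← mul_assoc, ← ih, ← Nat.add_assoc, Nat.factorial_succ,
        mul_comm]

/-- Telescoping step for the rising product. -/
lemma rising_step (w k : ℕ) :
    ∏ j ∈ Finset.range k, (w + 1 + j + 1) =
      ∏ j ∈ Finset.range k, (w + j + 1) + k * ∏ j ∈ Finset.range (k - 1), (w + 1 + j + 1) := by
  cases k with
  | zero => simp
  | succ t =>
      have h1 : ∏ j ∈ Finset.range (t + 1), (w + j + 1)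
          = (w + 1) * ∏ j ∈ Finset.range t, (w + 1 + j + 1) := by
        rw [Finset.prod_range_succ' (fun j => w + j + 1) t]
        have h4 : (∏ j ∈ Finset.range t, (w + (j + 1) + 1))
            = ∏ j ∈ Finset.range t, (w + 1 + j + 1) :=
          Finset.prod_congr rfl fun j _ => by ring
        rw [h4]; ring
      rw [Finset.prod_range_succ, h1]
      have : t + 1 - 1 = t := rfl
      rw [this]
      ring

/-- The `W` product. -/
def auxW (a : ℕ → ℕ) (x : ℕ) (C : Finset ℕ) : ℕ :=
  ∏ j ∈ Finset.range C.card, (x + (∑ i ∈ C, a i) + j + 1)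

/-- The `V` product. -/
def auxV (a : ℕ → ℕ) (y : ℕ) (E : Finset ℕ) : ℕ :=
  if E = ∅ then 1 else y * ∏ j ∈ Finset.range (E.card - 1), (y + (∑ i ∈ E, a i) + j + 1)

lemma auxV_empty (a : ℕ → ℕ) (y : ℕ) : auxV a y ∅ = 1 := by simp [auxV]

lemma auxV_zero (a : ℕ → ℕ) (E : Finset ℕ) (hE : E ≠ ∅) : auxV a 0 E = 0 := by
  simp [auxV, hE]

/-- The key one-step recursion for `V` in the `y` direction. -/
lemma auxV_step (a : ℕ → ℕ) (y : ℕ) (E : Finset ℕ) :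
    auxV a (y + 1) E = auxV a y E + ∑ i ∈ E, auxV a (y + 1 + a i) (E.erase i) := by
  rcases eq_or_ne E ∅ with h | h
  · simp [h, auxV]
  · obtain ⟨e, he⟩ : ∃ e, E.card = e + 1 :=
      ⟨E.card - 1, (Nat.succ_pred_eq_of_pos (Finset.card_pos.2 (nonempty_iff_ne_empty.2 h))).symm⟩
    set A := ∑ i ∈ E, a i with hA
    cases e with
    | zero =>
        -- E is a singleton
        obtain ⟨i₀, hi₀⟩ := Finset.card_eq_one.1 he
        subst hi₀
        simp [auxV, Finset.sum_singleton]
    | succ t =>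
        -- card E = t + 2
        have hsum : ∀ i ∈ E, auxV a (y + 1 + a i) (E.erase i)
            = (y + 1 + a i) * ∏ j ∈ Finset.range t, (y + 1 + A + j + 1) := by
          intro i hi
          have hcard : (E.erase i).card = t + 1 := by
            rw [Finset.card_erase_of_mem hi, he]
            omega
          have hne : E.erase i ≠ ∅ := by
            intro hcontra
            rw [hcontra] at hcard; simp at hcard
          have hsub : a i + ∑ j ∈ E.erase i, a j = A := by
            rw [hA, Finset.add_sum_erase _ _ hi]
          rw [auxV, if_neg hne, hcard]
          congr 1
          have : t + 1 - 1 = t := rfl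
          rw [this]
          refine Finset.prod_congr rfl fun j _ => by omega
        rw [Finset.sum_congr rfl hsum, ← Finset.sum_mul]
        have hsum2 : ∑ i ∈ E, (y + 1 + a i) = (t + 2) * (y + 1) + A := by
          rw [Finset.sum_add_distrib, Finset.sum_const, he, hA]
          ring
        rw [hsum2]
        -- now pure product computation
        rw [auxV, if_neg h, auxV, if_neg h, he]
        have h1 : t + 1 + 1 - 1 = t + 1 := rfl
        rw [h1]
        rw [Finset.prod_range_succ (fun j => y + 1 + A + j + 1) t]
        rw [Finset.prod_range_succ' (fun j => y + A + j + 1) t]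
        have h4 : (∏ j ∈ Finset.range t, (y + A + (j + 1) + 1))
            = ∏ j ∈ Finset.range t, (y + 1 + A + j + 1) :=
          Finset.prod_congr rfl fun j _ => by ring
        rw [h4]
        ring

/-- Sum swap: over pairs (C, i) with C ⊆ M, i ∈ M \ C. -/
lemma sum_swap_pairs (M : Finset ℕ) (f : ℕ → Finset ℕ → ℕ) :
    ∑ C ∈ M.powerset, ∑ i ∈ M \ C, f i C
      = ∑ i ∈ M, ∑ C ∈ (M.erase i).powerset, f i C := by
  refine Finset.sum_comm' ?_
  intro C i
  simp only [Finset.mem_powerset, Finset.mem_sdiff, Finset.subset_erase]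
  tauto

/-- **Hurwitz-type identity.** -/
lemma hurwitz_main (a : ℕ → ℕ) (M : Finset ℕ) :
    ∀ x y : ℕ,
      ∑ C ∈ M.powerset, auxW a x C * auxV a y (M \ C)
        = ∏ j ∈ Finset.range M.card, (x + y + (∑ i ∈ M, a i) + j + 1) := by
  induction M using Finset.strongInduction with
  | _ M ih =>
    intro x y
    induction y with
    | zero =>
        rw [Finset.sum_eq_single_of_mem M (Finset.mem_powerset_self M)]
        · rw [Finset.sdiff_self, auxV_empty, mul_one, auxW]
          exact Finset.prod_congr rfl fun j _ => by ring
        · intro C hC hCne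
          have hsub : C ⊆ M := Finset.mem_powerset.1 hC
          have : M \ C ≠ ∅ := by
            intro hcontra
            exact hCne (Finset.Subset.antisymm hsub
              (Finset.sdiff_eq_empty_iff_subset.1 hcontra))
          rw [auxV_zero a _ this, mul_zero]
    | succ y ihy =>
        have hstep : ∀ C ∈ M.powerset,
            auxW a x C * auxV a (y + 1) (M \ C)
              = auxW a x C * auxV a y (M \ C)
                + ∑ i ∈ M \ C, auxW a x C * auxV a (y + 1 + a i) ((M.erase i) \ C) := by
          intro C hC
          rw [auxV_step, Nat.mul_add, Finset.mul_sum]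
          congr 1
          refine Finset.sum_congr rfl fun i hi => ?_
          rw [Finset.erase_sdiff_comm]
        rw [Finset.sum_congr rfl hstep, Finset.sum_add_distrib, ihy, sum_swap_pairs]
        have hinner : ∀ i ∈ M,
            ∑ C ∈ (M.erase i).powerset, auxW a x C * auxV a (y + 1 + a i) ((M.erase i) \ C)
              = ∏ j ∈ Finset.range (M.card - 1), (x + y + (∑ i ∈ M, a i) + 1 + j + 1) := by
          intro i hi
          rw [ih (M.erase i) (Finset.erase_ssubset hi) x (y + 1 + a i)]
          have hc : (M.erase i).card = M.card - 1 := Finset.card_erase_of_mem hi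
          have hs : a i + ∑ j ∈ M.erase i, a j = ∑ j ∈ M, a j :=
            Finset.add_sum_erase _ _ hi
          rw [hc]
          exact Finset.prod_congr rfl fun j _ => by omega
        rw [Finset.sum_congr rfl hinner, Finset.sum_const, smul_eq_mul]
        have := rising_step (x + y + (∑ i ∈ M, a i)) M.card
        have hL : ∏ j ∈ Finset.range M.card, (x + (y + 1) + (∑ i ∈ M, a i) + j + 1)
            = ∏ j ∈ Finset.range M.card, (x + y + (∑ i ∈ M, a i) + 1 + j + 1) :=
          Finset.prod_congr rfl fun j _ => by ring
        have hR : ∏ j ∈ Finset.range M.card, (x + y + (∑ i ∈ M, a i) + j + 1 )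
            = ∏ j ∈ Finset.range M.card, ((x + y + (∑ i ∈ M, a i)) + j + 1) :=
          Finset.prod_congr rfl fun j _ => by ring
        have hQ : ∏ j ∈ Finset.range (M.card - 1), (x + y + (∑ i ∈ M, a i) + 1 + j + 1)
            = ∏ j ∈ Finset.range (M.card - 1), ((x + y + (∑ i ∈ M, a i)) + 1 + j + 1) :=
          Finset.prod_congr rfl fun j _ => by ring
        rw [hL, hR, hQ]
        have hL2 : ∏ j ∈ Finset.range M.card, (x + y + (∑ i ∈ M, a i) + 1 + j + 1)
            = ∏ j ∈ Finset.range M.card, ((x + y + (∑ i ∈ M, a i)) + 1 + j + 1) :=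
          Finset.prod_congr rfl fun j _ => by ring
        rw [hL2] at *
        omega

/-- **Second identity on multinomial coefficients.**
For `r ≥ 2` and positive integers `m 1, …, m r` with `s = m 1 + ⋯ + m r`,
setting `g 1 = m 1 - 1` and `g i = m i` for `2 ≤ i`, the multinomial coefficient
`s! / (m 1 ! ⋯ m r !)` equals the sum over all ordered bipartitions `(B₁, B₂)` of
`{1, …, r}` with `1 ∈ B₁`, `2 ∈ B₂`, and `B₂ = {1,…,r} \ B₁` of
`choose (s - r + 2) (S(B₂) - |B₂| + 1) * C(B₁) * C(B₂)`, where `S(B) = ∑_{i∈B} g i`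
and `C(B) = S(B)! / ∏_{i∈B} (g i)!`. -/
theorem multinomial_identity_two
    (r : ℕ) (hr : 2 ≤ r) (m : ℕ → ℕ) (hm : ∀ i ∈ Finset.Icc 1 r, 0 < m i)
    (s : ℕ) (hs : s = ∑ i ∈ Finset.Icc 1 r, m i)
    (g : ℕ → ℕ) (hg1 : g 1 = m 1 - 1) (hg2 : ∀ i, 2 ≤ i → g i = m i) :
    s.factorial / ∏ i ∈ Finset.Icc 1 r, (m i).factorial =
      ∑ B1 ∈ (Finset.Icc 1 r).powerset.filter (fun B => 1 ∈ B ∧ 2 ∉ B),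
        (s - r + 2).choose
            ((∑ i ∈ Finset.Icc 1 r \ B1, g i) - (Finset.Icc 1 r \ B1).card + 1) *
          ((∑ i ∈ B1, g i).factorial / ∏ i ∈ B1, (g i).factorial) *
          ((∑ i ∈ Finset.Icc 1 r \ B1, g i).factorial /
            ∏ i ∈ Finset.Icc 1 r \ B1, (g i).factorial) := by
  classical
  set I : Finset ℕ := Finset.Icc 1 r with hIdef
  set M : Finset ℕ := Finset.Icc 3 r with hMdef
  set a : ℕ → ℕ := fun i => m i - 1 with hadef
  -- basic membership facts
  have h1I : 1 ∈ I := by simp [hIdef, Finset.mem_Icc]; omega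
  have h2I : 2 ∈ I := by simp [hIdef, Finset.mem_Icc]; omega
  have hMI : M ⊆ I := by
    intro i hi; simp [hMdef, Finset.mem_Icc] at hi; simp [hIdef, Finset.mem_Icc]; omega
  have h1M : 1 ∉ M := by simp [hMdef, Finset.mem_Icc]
  have h2M : 2 ∉ M := by simp [hMdef, Finset.mem_Icc]
  have hm1 : 1 ≤ m 1 := hm 1 h1I
  have hm2 : 1 ≤ m 2 := hm 2 h2I
  have cardM : M.card = r - 2 := by rw [hMdef, Nat.card_Icc]; omega
  have hIM : I = insert 1 (insert 2 M) := by
    ext i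
    simp [hIdef, hMdef, Finset.mem_Icc, Finset.mem_insert]
    omega
  have hmM : ∀ i ∈ M, m i = a i + 1 := by
    intro i hi
    have : 0 < m i := hm i (hMI hi)
    simp [hadef]; omega
  have hsM : ∑ i ∈ M, m i = (∑ i ∈ M, a i) + M.card := by
    rw [Finset.sum_congr rfl hmM, Finset.sum_add_distrib, Finset.sum_const, smul_eq_mul, mul_one]
  have h2nM : 2 ∉ insert 2 M → False := by simp
  have hs2 : s = m 1 + (m 2 + ((∑ i ∈ M, a i) + (r - 2))) := by
    rw [hs, hIM, Finset.sum_insert (by simp [h2M, h1M]), Finset.sum_insert h2M, hsM, cardM]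
  set AM : ℕ := ∑ i ∈ M, a i with hAMdef
  have hn2 : s - r + 2 = m 2 + m 1 + AM := by omega
  -- the filtered index set
  set P : Finset (Finset ℕ) := I.powerset.filter (fun B => 1 ∈ B ∧ 2 ∉ B) with hPdef
  have hmemP : ∀ B1 ∈ P, B1 ⊆ I ∧ 1 ∈ B1 ∧ 2 ∉ B1 := by
    intro B1 hB1
    simp only [hPdef, Finset.mem_filter, Finset.mem_powerset] at hB1
    tauto
  -- reconstruction of B1 from C = M \ B1
  have hrecon : ∀ B1 ∈ P, insert 1 (M \ (M \ B1)) = B1 := by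
    intro B1 hB1
    obtain ⟨hsub, h1B, h2B⟩ := hmemP B1 hB1
    rw [Finset.sdiff_sdiff_self_left]
    ext i
    simp only [Finset.mem_insert, Finset.mem_inter]
    constructor
    · rintro (rfl | ⟨_, hi⟩)
      · exact h1B
      · exact hi
    · intro hi
      rcases eq_or_ne i 1 with rfl | hne
      · exact Or.inl rfl
      · right
        refine ⟨?_, hi⟩
        have hiI := hsub hi
        simp only [hIdef, Finset.mem_Icc] at hiI
        have : i ≠ 2 := by rintro rfl; exact h2B hi
        simp only [hMdef, Finset.mem_Icc]
        omega
  -- B2 = I \ B1 = insert 2 (M \ B1)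
  have hB2eq : ∀ B1 ∈ P, I \ B1 = insert 2 (M \ B1) := by
    intro B1 hB1
    obtain ⟨hsub, h1B, h2B⟩ := hmemP B1 hB1
    ext i
    simp only [Finset.mem_sdiff, Finset.mem_insert]
    constructor
    · rintro ⟨hiI, hiB⟩
      rcases eq_or_ne i 2 with rfl | hne
      · exact Or.inl rfl
      · right
        simp only [hIdef, Finset.mem_Icc] at hiI
        have : i ≠ 1 := by rintro rfl; exact hiB h1B
        refine ⟨?_, hiB⟩
        simp only [hMdef, Finset.mem_Icc]; omega
    · rintro (rfl | ⟨hiM, hiB⟩)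
      · exact ⟨h2I, h2B⟩
      · exact ⟨hMI hiM, hiB⟩
  -- sum of g over B2 and B1
  have hgM : ∀ i ∈ M, g i = a i + 1 := by
    intro i hi
    have h3 : 3 ≤ i := by simp only [hMdef, Finset.mem_Icc] at hi; omega
    rw [hg2 i (by omega)]; exact hmM i hi
  have hS2 : ∀ B1 ∈ P, ∑ i ∈ I \ B1, g i
      = m 2 + ((∑ i ∈ M \ B1, a i) + (M \ B1).card) := by
    intro B1 hB1
    rw [hB2eq B1 hB1, Finset.sum_insert (fun h => h2M (Finset.mem_sdiff.1 h).1)]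
    congr 1
    · exact hg2 2 le_rfl
    · rw [Finset.sum_congr rfl (fun i hi => hgM i (Finset.mem_sdiff.1 hi).1),
        Finset.sum_add_distrib, Finset.sum_const, smul_eq_mul, mul_one]
  have hcardB2 : ∀ B1 ∈ P, (I \ B1).card = (M \ B1).card + 1 := by
    intro B1 hB1
    rw [hB2eq B1 hB1,
      Finset.card_insert_of_notMem (fun h => h2M (Finset.mem_sdiff.1 h).1)]
  have hS1 : ∀ B1 ∈ P, ∑ i ∈ B1, g i
      = (m 1 - 1) + ((∑ i ∈ M \ (M \ B1), a i) + (M \ (M \ B1)).card) := by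
    intro B1 hB1
    conv_lhs => rw [← hrecon B1 hB1]
    rw [Finset.sum_insert (fun h => h1M ((Finset.sdiff_subset) h)), hg1]
    congr 1
    rw [Finset.sum_congr rfl (fun i hi => hgM i ((Finset.sdiff_subset) hi)),
      Finset.sum_add_distrib, Finset.sum_const, smul_eq_mul, mul_one]
  have hACD : ∀ B1 ∈ P, (∑ i ∈ M \ B1, a i) + (∑ i ∈ M \ (M \ B1), a i) = AM := by
    intro B1 hB1
    rw [hAMdef, add_comm, ← Finset.sum_sdiff (Finset.sdiff_subset (s := M) (t := B1))]
  -- the per-term identity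
  have hterm : ∀ B1 ∈ P,
      (∏ i ∈ I, (m i).factorial) *
        ((s - r + 2).choose ((∑ i ∈ I \ B1, g i) - (I \ B1).card + 1) *
          ((∑ i ∈ B1, g i).factorial / ∏ i ∈ B1, (g i).factorial) *
          ((∑ i ∈ I \ B1, g i).factorial / ∏ i ∈ I \ B1, (g i).factorial))
      = (m 2 + m 1 + AM).factorial *
          (auxW a (m 2) (M \ B1) * auxV a (m 1) (M \ (M \ B1))) := by
    intro B1 hB1
    obtain ⟨hsub, h1B, h2B⟩ := hmemP B1 hB1
    have hs2' := hS2 B1 hB1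
    have hcard' := hcardB2 B1 hB1
    have hs1' := hS1 B1 hB1
    have hacd' := hACD B1 hB1
    -- (i) product of factorials of m over I
    have hprodm : ∏ i ∈ I, (m i).factorial = m 1 * ∏ i ∈ I, (g i).factorial := by
      rw [← Finset.mul_prod_erase I _ h1I, ← Finset.mul_prod_erase I (fun i => (g i).factorial) h1I,
        hg1, ← mul_assoc, Nat.mul_factorial_pred (Nat.one_le_iff_ne_zero.mp hm1)]
      congr 1
      refine Finset.prod_congr rfl fun i hi => ?_
      rw [Finset.mem_erase] at hi
      have hiI := hi.2
      simp only [hIdef, Finset.mem_Icc] at hiI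
      rw [hg2 i (by omega)]
    have hprodg : (∏ i ∈ I \ B1, (g i).factorial) * (∏ i ∈ B1, (g i).factorial)
        = ∏ i ∈ I, (g i).factorial := Finset.prod_sdiff hsub
    have hd1 : (∏ i ∈ B1, (g i).factorial) ∣ (∑ i ∈ B1, g i).factorial :=
      Nat.prod_factorial_dvd_factorial_sum _ _
    have hd2 : (∏ i ∈ I \ B1, (g i).factorial) ∣ (∑ i ∈ I \ B1, g i).factorial :=
      Nat.prod_factorial_dvd_factorial_sum _ _
    -- (ii) choose argument
    have hchooseArg : (∑ i ∈ I \ B1, g i) - (I \ B1).card + 1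
        = m 2 + ∑ i ∈ M \ B1, a i := by omega
    -- (iii) factorial expansions
    have w1 : (∑ i ∈ I \ B1, g i).factorial
        = (m 2 + ∑ i ∈ M \ B1, a i).factorial * auxW a (m 2) (M \ B1) := by
      have h : ∑ i ∈ I \ B1, g i = (m 2 + ∑ i ∈ M \ B1, a i) + (M \ B1).card := by omega
      rw [h, factorial_add_prod, auxW]
    have w2 : m 1 * (∑ i ∈ B1, g i).factorial
        = (m 1 + ∑ i ∈ M \ (M \ B1), a i).factorial * auxV a (m 1) (M \ (M \ B1)) := by
      rcases eq_or_ne (M \ (M \ B1)) ∅ with hDe | hDe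
      · have hAD0 : ∑ i ∈ M \ (M \ B1), a i = 0 := by rw [hDe]; simp
        have hcD0 : (M \ (M \ B1)).card = 0 := by rw [hDe]; simp
        have h : ∑ i ∈ B1, g i = m 1 - 1 := by omega
        rw [h, hAD0, hDe, auxV_empty, mul_one, add_zero, Nat.mul_factorial_pred (Nat.one_le_iff_ne_zero.mp hm1)]
      · have hDpos : 0 < (M \ (M \ B1)).card :=
          Finset.card_pos.2 (Finset.nonempty_iff_ne_empty.2 hDe)
        have h : ∑ i ∈ B1, g i
            = (m 1 + ∑ i ∈ M \ (M \ B1), a i) + ((M \ (M \ B1)).card - 1) := by omega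
        rw [h, factorial_add_prod, auxV, if_neg hDe]
        ring
    have w3 : (m 2 + m 1 + AM).choose (m 2 + ∑ i ∈ M \ B1, a i) *
          ((m 2 + ∑ i ∈ M \ B1, a i).factorial *
            (m 1 + ∑ i ∈ M \ (M \ B1), a i).factorial)
        = (m 2 + m 1 + AM).factorial := by
      have hle : m 2 + ∑ i ∈ M \ B1, a i ≤ m 2 + m 1 + AM := by omega
      have hsub2 : m 2 + m 1 + AM - (m 2 + ∑ i ∈ M \ B1, a i)
          = m 1 + ∑ i ∈ M \ (M \ B1), a i := by omega
      have hkey := Nat.choose_mul_factorial_mul_factorial hle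
      rw [hsub2] at hkey
      rw [← hkey]; ring
    -- put it together
    have e1 : (∏ i ∈ B1, (g i).factorial) * ((∑ i ∈ B1, g i).factorial / ∏ i ∈ B1, (g i).factorial)
        = (∑ i ∈ B1, g i).factorial := Nat.mul_div_cancel' hd1
    have e2 : (∏ i ∈ I \ B1, (g i).factorial) *
          ((∑ i ∈ I \ B1, g i).factorial / ∏ i ∈ I \ B1, (g i).factorial)
        = (∑ i ∈ I \ B1, g i).factorial := Nat.mul_div_cancel' hd2
    calc (∏ i ∈ I, (m i).factorial) *
        ((s - r + 2).choose ((∑ i ∈ I \ B1, g i) - (I \ B1).card + 1) *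
          ((∑ i ∈ B1, g i).factorial / ∏ i ∈ B1, (g i).factorial) *
          ((∑ i ∈ I \ B1, g i).factorial / ∏ i ∈ I \ B1, (g i).factorial))
        = (s - r + 2).choose ((∑ i ∈ I \ B1, g i) - (I \ B1).card + 1) *
            ((m 1 *
              ((∏ i ∈ B1, (g i).factorial) *
                ((∑ i ∈ B1, g i).factorial / ∏ i ∈ B1, (g i).factorial))) *
              ((∏ i ∈ I \ B1, (g i).factorial) *
                ((∑ i ∈ I \ B1, g i).factorial / ∏ i ∈ I \ B1, (g i).factorial))) := by
          rw [hprodm, ← hprodg]; ring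
      _ = (m 2 + m 1 + AM).choose (m 2 + ∑ i ∈ M \ B1, a i) *
            ((m 1 * (∑ i ∈ B1, g i).factorial) * (∑ i ∈ I \ B1, g i).factorial) := by
          rw [e1, e2, hchooseArg, hn2]
      _ = (m 2 + m 1 + AM).choose (m 2 + ∑ i ∈ M \ B1, a i) *
            (((m 1 + ∑ i ∈ M \ (M \ B1), a i).factorial * auxV a (m 1) (M \ (M \ B1))) *
              ((m 2 + ∑ i ∈ M \ B1, a i).factorial * auxW a (m 2) (M \ B1))) := by
          rw [w2, w1]
      _ = ((m 2 + m 1 + AM).choose (m 2 + ∑ i ∈ M \ B1, a i) *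
            ((m 2 + ∑ i ∈ M \ B1, a i).factorial *
              (m 1 + ∑ i ∈ M \ (M \ B1), a i).factorial)) *
            (auxW a (m 2) (M \ B1) * auxV a (m 1) (M \ (M \ B1))) := by ring
      _ = (m 2 + m 1 + AM).factorial *
            (auxW a (m 2) (M \ B1) * auxV a (m 1) (M \ (M \ B1))) := by rw [w3]
  -- final assembly
  have hpos : 0 < ∏ i ∈ I, (m i).factorial :=
    Finset.prod_pos fun i _ => Nat.factorial_pos _
  have hbij : ∑ B1 ∈ P, auxW a (m 2) (M \ B1) * auxV a (m 1) (M \ (M \ B1))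
      = ∑ C ∈ M.powerset, auxW a (m 2) C * auxV a (m 1) (M \ C) := by
    refine Finset.sum_nbij' (fun B1 => M \ B1) (fun C => insert 1 (M \ C))
      (fun B1 _ => Finset.mem_powerset.2 Finset.sdiff_subset) ?_ hrecon ?_ ?_
    · intro C hC
      simp only [hPdef, Finset.mem_filter, Finset.mem_powerset]
      refine ⟨Finset.insert_subset h1I (Finset.sdiff_subset.trans hMI),
        Finset.mem_insert_self _ _, ?_⟩
      simp only [Finset.mem_insert, Finset.mem_sdiff]
      rintro (h | ⟨h, -⟩)
      · exact absurd h (by norm_num)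
      · exact h2M h
    · intro C hC
      have hCM := Finset.mem_powerset.1 hC
      ext i
      simp only [Finset.mem_sdiff, Finset.mem_insert]
      constructor
      · rintro ⟨hiM, hni⟩
        by_contra hiC
        exact hni (Or.inr ⟨hiM, hiC⟩)
      · intro hiC
        refine ⟨hCM hiC, ?_⟩
        rintro (rfl | ⟨-, hnC⟩)
        · exact h1M (hCM hiC)
        · exact hnC hiC
    · intro B1 _
      rfl
  have htot : (∏ i ∈ I, (m i).factorial) *
      (∑ B1 ∈ P,
        (s - r + 2).choose ((∑ i ∈ I \ B1, g i) - (I \ B1).card + 1) *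
          ((∑ i ∈ B1, g i).factorial / ∏ i ∈ B1, (g i).factorial) *
          ((∑ i ∈ I \ B1, g i).factorial / ∏ i ∈ I \ B1, (g i).factorial))
      = s.factorial := by
    rw [Finset.mul_sum, Finset.sum_congr rfl hterm, ← Finset.mul_sum, hbij,
      hurwitz_main a M (m 2) (m 1)]
    rw [← hAMdef]
    rw [← factorial_add_prod (m 2 + m 1 + AM) M.card]
    congr 1
    omega
  calc s.factorial / ∏ i ∈ I, (m i).factorial
      = ((∏ i ∈ I, (m i).factorial) *
          (∑ B1 ∈ P,
            (s - r + 2).choose ((∑ i ∈ I \ B1, g i) - (I \ B1).card + 1) *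
              ((∑ i ∈ B1, g i).factorial / ∏ i ∈ B1, (g i).factorial) *
              ((∑ i ∈ I \ B1, g i).factorial / ∏ i ∈ I \ B1, (g i).factorial))) /
          ∏ i ∈ I, (m i).factorial := by rw [htot]
    _ = _ := Nat.mul_div_cancel_left _ hpos
end

section
/- Let r ≥ 3 be an integer and m_1, …, m_r positive integers with s = m_1 + ⋯ + m_r. Then the multinomial coefficient s!/(m_1!⋯m_r!) equals the sum, over all ordered bipartitions (B_1, B_2) of {1, …, r} with 1 ∈ B_1, 2 ∈ B_2, 3 ∈ B_2 and B_2 = {1,…,r} \ B_1, of the product binom(s − r + 3, S(B_2) − |B_2| + 2) · C(B_1) · C(B_2). -/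
open Finset Polynomial

/-- Rising factorial product over ℤ. -/
def Rr (z : ℤ) (k : ℕ) : ℤ := ∏ j ∈ Finset.range k, (z + j)

lemma Rr_zero (z : ℤ) : Rr z 0 = 1 := by simp [Rr]

lemma Rr_diff (z : ℤ) (k : ℕ) :
    Rr z (k + 1) - Rr (z - 1) (k + 1) = (k + 1) * Rr z k := by
  have h1 : Rr z (k+1) = Rr z k * (z + k) := by
    simp [Rr, Finset.prod_range_succ]
  have h2 : Rr (z-1) (k+1) = (z - 1) * Rr z k := by
    rw [Rr, Finset.prod_range_succ']
    have hc : ∀ j ∈ Finset.range k, (z - 1 + ((j:ℕ) + 1 : ℕ)) = z + j := by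
      intro j _; push_cast; ring
    rw [Finset.prod_congr rfl hc]
    rw [Rr]
    push_cast
    ring
  rw [h1, h2]; ring

/-- factorial splitting. -/
lemma fact_split (a k : ℕ) :
    (a + k).factorial = a.factorial * ∏ j ∈ Finset.range k, (a + 1 + j) := by
  induction k with
  | zero => simp
  | succ k ih =>
      rw [show a + (k+1) = (a+k) + 1 by ring, Nat.factorial_succ, ih,
        Finset.prod_range_succ]
      ring

lemma int_const (f : ℤ → ℤ) (h : ∀ y, f y = f (y - 1)) (a b : ℤ) : f a = f b := by
  have h1 : ∀ y, f (y + 1) = f y := by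
    intro y; have := h (y + 1); simpa using this
  have h2 : ∀ (k : ℕ) (y : ℤ), f (y + k) = f y := by
    intro k
    induction k with
    | zero => simp
    | succ k ih => intro y; rw [show (y + (k+1 : ℕ)) = (y + k) + 1 by push_cast; ring, h1, ih]
  rcases le_total a b with hab | hab
  · have : b = a + ((b - a).toNat : ℤ) := by omega
    rw [this, h2]
  · have : a = b + ((a - b).toNat : ℤ) := by omega
    rw [this, h2]

/-- Alternating sum of evaluations of a low-degree polynomial vanishes. -/
lemma alt_sum_eval {ι : Type*} [DecidableEq ι] (Q : Finset ι) (c : ι → ℤ) :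
    ∀ p : Polynomial ℤ, p.degree < Q.card →
      ∑ A ∈ Q.powerset, (-1 : ℤ) ^ A.card * p.eval (∑ i ∈ A, c i) = 0 := by
  induction Q using Finset.induction_on with
  | empty =>
      intro p hp
      have hp0 : p = 0 := by
        simp only [Finset.card_empty, Nat.cast_zero] at hp
        by_contra h
        rw [p.degree_eq_natDegree h] at hp
        exact absurd hp (by exact_mod_cast Nat.not_lt_zero _)
      simp [hp0]
  | @insert e Q' he ih =>
      intro p hp
      rw [Finset.sum_powerset_insert he]
      have hcard : (insert e Q').card = Q'.card + 1 := Finset.card_insert_of_notMem he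
      set q : Polynomial ℤ := p - p.comp (X + C (c e)) with hq
      have key : ∀ A ∈ Q'.powerset,
          (-1:ℤ) ^ A.card * p.eval (∑ i ∈ A, c i)
            + (-1:ℤ) ^ (insert e A).card * p.eval (∑ i ∈ insert e A, c i)
          = (-1:ℤ) ^ A.card * q.eval (∑ i ∈ A, c i) := by
        intro A hA
        have hA' : A ⊆ Q' := Finset.mem_powerset.mp hA
        have heA : e ∉ A := fun h => he (hA' h)
        rw [Finset.card_insert_of_notMem heA, Finset.sum_insert heA]
        simp only [hq, Polynomial.eval_sub, Polynomial.eval_comp, Polynomial.eval_add,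
          Polynomial.eval_X, Polynomial.eval_C]
        rw [add_comm (c e) (∑ i ∈ A, c i)]
        ring
      rw [← Finset.sum_add_distrib, Finset.sum_congr rfl key]
      apply ih
      by_cases hp0 : p = 0
      · have : q = 0 := by simp [hq, hp0]
        rw [this]
        simp only [Polynomial.degree_zero]
        exact bot_lt_iff_ne_bot.mpr (by simp)
      · have hdc : (p.comp (X + C (c e))).natDegree = p.natDegree := by
          rw [Polynomial.natDegree_comp, Polynomial.natDegree_X_add_C, mul_one]
        have hlc : p.leadingCoeff = (p.comp (X + C (c e))).leadingCoeff := by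
          rw [Polynomial.leadingCoeff_comp (by rw [Polynomial.natDegree_X_add_C]; omega)]
          rw [(Polynomial.monic_X_add_C (c e)).leadingCoeff, one_pow, mul_one]
        have hcomp0 : p.comp (X + C (c e)) ≠ 0 := by
          intro h
          apply hp0
          rw [← Polynomial.leadingCoeff_eq_zero, hlc, h, Polynomial.leadingCoeff_zero]
        have hdeg : p.degree = (p.comp (X + C (c e))).degree := by
          rw [p.degree_eq_natDegree hp0, Polynomial.degree_eq_natDegree hcomp0, hdc]
        have hlt : q.degree < p.degree := Polynomial.degree_sub_lt hdeg hp0 hlc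
        by_cases hq0 : q = 0
        · rw [hq0]; simp only [Polynomial.degree_zero]
          exact bot_lt_iff_ne_bot.mpr (by simp)
        · have h1 : q.natDegree < p.natDegree := by
            apply Polynomial.natDegree_lt_natDegree hq0 hlt
          have h2 : p.natDegree < Q'.card + 1 := by
            rw [← Polynomial.natDegree_lt_iff_degree_lt hp0] at hp
            omega
          rw [← Polynomial.natDegree_lt_iff_degree_lt hq0]
          omega
/-- Term of the Hurwitz-type sum. -/
def hterm (x y : ℤ) (n : ℕ → ℤ) (Q A : Finset ℕ) : ℤ :=
  if A = ∅ then Rr (y + ∑ i ∈ Q, n i) Q.card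
  else x * Rr (x + (∑ i ∈ A, n i) + 1) (A.card - 1) *
    Rr (y + ∑ i ∈ Q \ A, n i) (Q.card - A.card)

lemma hurwitz (x : ℤ) (n : ℕ → ℤ) :
    ∀ (Q : Finset ℕ) (y : ℤ),
      ∑ A ∈ Q.powerset, hterm x y n Q A = Rr (x + y + ∑ i ∈ Q, n i) Q.card := by
  intro Q
  induction Q using Finset.strongInductionOn with
  | _ Q ih => ?_
  intro y
  rcases Finset.eq_empty_or_nonempty Q with hQ | hQ
  · subst hQ; simp [hterm, Rr]
  obtain ⟨q', hq'⟩ : ∃ q', Q.card = q' + 1 :=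
    ⟨Q.card - 1, by have := Finset.card_pos.mpr hQ; omega⟩
  set nQ := ∑ i ∈ Q, n i with hnQ
  set F : ℤ → ℤ := fun y => (∑ A ∈ Q.powerset, hterm x y n Q A) - Rr (x + y + nQ) Q.card
    with hF
  -- the difference step
  have step : ∀ y : ℤ, F y = F (y - 1) := by
    intro y
    set V : Finset ℕ → ℤ := fun A =>
      if A = ∅ then Rr (y + nQ) q'
      else x * Rr (x + (∑ i ∈ A, n i) + 1) (A.card - 1) *
        Rr (y + ∑ i ∈ Q \ A, n i) (Q.card - A.card - 1) with hV
    have hdiff : ∀ A ∈ Q.powerset,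
        hterm x y n Q A - hterm x (y - 1) n Q A = ((Q \ A).card : ℤ) * V A := by
      intro A hA
      have hAQ : A ⊆ Q := Finset.mem_powerset.mp hA
      have hcardQA : (Q \ A).card = Q.card - A.card := Finset.card_sdiff_of_subset hAQ
      by_cases h0 : A = ∅
      · subst h0
        have e1 : hterm x y n Q ∅ = Rr (y + nQ) (q' + 1) := by
          simp only [hterm, if_pos rfl, ← hnQ, hq', if_true]
        have e2 : hterm x (y - 1) n Q ∅ = Rr ((y + nQ) - 1) (q' + 1) := by
          simp only [hterm, if_pos rfl, ← hnQ, hq', if_true]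
          congr 1
          ring
        have e3 : V ∅ = Rr (y + nQ) q' := by simp only [hV, if_pos rfl]
        rw [e1, e2, e3, Rr_diff, Finset.sdiff_empty, hq']
        push_cast
        ring
      · have hk : 1 ≤ A.card := Finset.card_pos.mpr (Finset.nonempty_iff_ne_empty.mpr h0)
        have hkle : A.card ≤ Q.card := Finset.card_le_card hAQ
        have e3 : V A = x * Rr (x + (∑ i ∈ A, n i) + 1) (A.card - 1) *
            Rr (y + ∑ i ∈ Q \ A, n i) (Q.card - A.card - 1) := by
          simp only [hV, if_neg h0]
        have e1 : hterm x y n Q A = x * Rr (x + (∑ i ∈ A, n i) + 1) (A.card - 1) *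
            Rr (y + ∑ i ∈ Q \ A, n i) (Q.card - A.card) := by
          simp only [hterm, if_neg h0]
        have e2 : hterm x (y - 1) n Q A = x * Rr (x + (∑ i ∈ A, n i) + 1) (A.card - 1) *
            Rr ((y + ∑ i ∈ Q \ A, n i) - 1) (Q.card - A.card) := by
          simp only [hterm, if_neg h0]
          congr 1
          ring_nf
        rw [e1, e2, e3, hcardQA]
        rcases Nat.eq_zero_or_pos (Q.card - A.card) with hz | hz
        · rw [hz]
          simp [Rr_zero]
        · obtain ⟨t, ht⟩ : ∃ t, Q.card - A.card = t + 1 := ⟨Q.card - A.card - 1, by omega⟩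
          rw [ht, show (t : ℕ) + 1 - 1 = t from rfl]
          have key := Rr_diff (y + ∑ i ∈ Q \ A, n i) t
          push_cast
          linear_combination (x * Rr (x + (∑ i ∈ A, n i) + 1) (A.card - 1)) * key
    have hswap : ∑ A ∈ Q.powerset, ((Q \ A).card : ℤ) * V A
        = ∑ e ∈ Q, ∑ A ∈ (Q.erase e).powerset, V A := by
      have h1 : ∀ A ∈ Q.powerset, ((Q \ A).card : ℤ) * V A = ∑ e ∈ Q \ A, V A := by
        intro A _; rw [Finset.sum_const, nsmul_eq_mul]
      rw [Finset.sum_congr rfl h1]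
      have h2 : ∀ A ∈ Q.powerset, ∑ e ∈ Q \ A, V A = ∑ e ∈ Q, if e ∉ A then V A else 0 := by
        intro A hA
        rw [Finset.sdiff_eq_filter, Finset.sum_filter]
      rw [Finset.sum_congr rfl h2, Finset.sum_comm]
      apply Finset.sum_congr rfl
      intro e _
      have hps : Q.powerset.filter (fun A => e ∉ A) = (Q.erase e).powerset := by
        ext B
        simp only [Finset.mem_filter, Finset.mem_powerset, Finset.subset_erase]
      rw [← Finset.sum_filter, hps]
    have hinner : ∀ e ∈ Q, ∑ A ∈ (Q.erase e).powerset, V A = Rr (x + y + nQ) q' := by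
      intro e he
      have hcarde : (Q.erase e).card = q' := by
        rw [Finset.card_erase_of_mem he]; omega
      have hsum_e : n e + ∑ i ∈ Q.erase e, n i = nQ := Finset.add_sum_erase Q n he
      have hVh : ∀ A ∈ (Q.erase e).powerset, V A = hterm x (y + n e) n (Q.erase e) A := by
        intro A hA
        have hAe : A ⊆ Q.erase e := Finset.mem_powerset.mp hA
        have heA : e ∉ A := fun h => (Finset.mem_erase.mp (hAe h)).1 rfl
        by_cases h0 : A = ∅
        · subst h0
          simp only [hV, if_pos rfl, hterm, if_pos rfl, hcarde]
          congr 1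
          rw [← hsum_e]; ring
        · simp only [hV, if_neg h0, hterm, if_neg h0]
          have hset : Q \ A = insert e ((Q.erase e) \ A) := by
            ext a
            simp only [Finset.mem_sdiff, Finset.mem_insert, Finset.mem_erase]
            constructor
            · rintro ⟨haQ, haA⟩
              by_cases hae : a = e
              · exact Or.inl hae
              · exact Or.inr ⟨⟨hae, haQ⟩, haA⟩
            · rintro (rfl | ⟨⟨hae, haQ⟩, haA⟩)
              · exact ⟨he, heA⟩
              · exact ⟨haQ, haA⟩
          have hnot : e ∉ (Q.erase e) \ A := fun h => (Finset.mem_erase.mp (Finset.mem_sdiff.mp h).1).1 rfl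
          have hsum2 : ∑ i ∈ Q \ A, n i = n e + ∑ i ∈ (Q.erase e) \ A, n i := by
            rw [hset, Finset.sum_insert hnot]
          rw [hsum2, hcarde]
          have harith : y + (n e + ∑ i ∈ Q.erase e \ A, n i) = (y + n e) + ∑ i ∈ Q.erase e \ A, n i := by ring
          rw [harith]
          have : Q.card - A.card - 1 = q' - A.card := by omega
          rw [this]
      rw [Finset.sum_congr rfl hVh, ih (Q.erase e) (Finset.erase_ssubset he) (y + n e),
        hcarde]
      congr 1
      rw [← hsum_e]; ring
    have hL : (∑ A ∈ Q.powerset, hterm x y n Q A) - (∑ A ∈ Q.powerset, hterm x (y-1) n Q A)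
        = (Q.card : ℤ) * Rr (x + y + nQ) q' := by
      rw [← Finset.sum_sub_distrib, Finset.sum_congr rfl hdiff, hswap,
        Finset.sum_congr rfl hinner, Finset.sum_const, nsmul_eq_mul]
    have hR : Rr (x + y + nQ) Q.card - Rr (x + (y-1) + nQ) Q.card
        = (Q.card : ℤ) * Rr (x + y + nQ) q' := by
      have h1 : x + (y - 1) + nQ = (x + y + nQ) - 1 := by ring
      rw [h1, hq', Rr_diff]
      push_cast; ring
    simp only [hF]
    omega
  -- the base point
  have base : F (-x - nQ) = 0 := by
    have hRHS : Rr (x + (-x - nQ) + nQ) Q.card = 0 := by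
      have h1 : x + (-x - nQ) + nQ = 0 := by ring
      rw [h1, hq', Rr]
      apply Finset.prod_eq_zero (Finset.mem_range.mpr (Nat.succ_pos q'))
      simp
    set p : Polynomial ℤ := ∏ j ∈ Finset.range q', (X + C (x - 1 - j)) with hp
    have hpmonic : p.Monic := Polynomial.monic_prod_of_monic _ _
      (fun j _ => Polynomial.monic_X_add_C _)
    have hpdeg : p.degree < (Q.card : WithBot ℕ) := by
      have hnd : p.natDegree = q' := by
        rw [hp, Polynomial.natDegree_prod_of_monic _ _
          (fun j _ => Polynomial.monic_X_add_C _)]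
        have hone : ∀ j ∈ Finset.range q', (X + C (x - 1 - (j:ℤ))).natDegree = 1 :=
          fun j _ => Polynomial.natDegree_X_add_C _
        rw [Finset.sum_congr rfl hone, Finset.sum_const, smul_eq_mul, mul_one,
          Finset.card_range]
      rw [← Polynomial.natDegree_lt_iff_degree_lt hpmonic.ne_zero, hnd, hq']
      omega
    have heval : ∀ t : ℤ, p.eval t = ∏ j ∈ Finset.range q', (t + x - 1 - j) := by
      intro t
      rw [hp, Polynomial.eval_prod]
      apply Finset.prod_congr rfl
      intro j _
      simp only [Polynomial.eval_add, Polynomial.eval_X, Polynomial.eval_C]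
      ring
    have halt := alt_sum_eval Q (fun i => n i + 1) p hpdeg
    have hterm_eq : ∀ A ∈ Q.powerset,
        hterm x (-x - nQ) n Q A
          = (-1 : ℤ)^Q.card * x * ((-1 : ℤ)^A.card * p.eval (∑ i ∈ A, (n i + 1))) := by
      intro A hA
      have hAQ : A ⊆ Q := Finset.mem_powerset.mp hA
      have hsplit : (∑ i ∈ A, n i) + (∑ i ∈ Q \ A, n i) = nQ := by
        rw [hnQ, add_comm, Finset.sum_sdiff hAQ]
      by_cases h0 : A = ∅
      · subst h0
        simp only [hterm, if_pos rfl, Finset.card_empty, Finset.sum_empty, pow_zero, one_mul]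
        have h1 : -x - nQ + nQ = -x := by ring
        rw [h1, heval, hq']
        have h2 : ∀ j ∈ Finset.range (q'+1), -x + (j:ℤ) = (-1) * (x - j) := by
          intro j _; ring
        rw [Rr, Finset.prod_congr rfl h2, Finset.prod_mul_distrib, Finset.prod_const,
          Finset.card_range, Finset.prod_range_succ']
        have h3 : ∀ j ∈ Finset.range q', (x - ((j:ℕ) + 1 : ℕ)) = 0 + x - 1 - j := by
          intro j _; push_cast; ring
        rw [Finset.prod_congr rfl h3]
        push_cast
        ring
      · have hk : 1 ≤ A.card := Finset.card_pos.mpr (Finset.nonempty_iff_ne_empty.mpr h0)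
        have hkle : A.card ≤ Q.card := Finset.card_le_card hAQ
        simp only [hterm, if_neg h0]
        have h1 : -x - nQ + ∑ i ∈ Q \ A, n i = -x - ∑ i ∈ A, n i := by
          rw [← hsplit]; ring
        rw [h1]
        have hsumA : ∑ i ∈ A, (n i + 1) = (∑ i ∈ A, n i) + A.card := by
          rw [Finset.sum_add_distrib, Finset.sum_const, nsmul_eq_mul, mul_one]
        rw [heval, hsumA]
        set nA := ∑ i ∈ A, n i with hnA
        have hq'split : q' = (A.card - 1) + (Q.card - A.card) := by omega
        rw [hq'split, Finset.prod_range_add]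
        have hfirst : ∏ j ∈ Finset.range (A.card - 1), (nA + A.card + x - 1 - j)
            = Rr (x + nA + 1) (A.card - 1) := by
          rw [Rr, ← Finset.prod_range_reflect]
          apply Finset.prod_congr rfl
          intro j hj
          have hj' : j < A.card - 1 := Finset.mem_range.mp hj
          have : ((A.card - 1 - 1 - j : ℕ) : ℤ) = (A.card : ℤ) - 2 - j := by omega
          rw [this]
          ring
        have hsecond : ∏ j ∈ Finset.range (Q.card - A.card), (nA + A.card + x - 1 - ((A.card - 1) + j : ℕ))
            = ∏ j ∈ Finset.range (Q.card - A.card), (x + nA - j) := by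
          apply Finset.prod_congr rfl
          intro j _
          have : (((A.card - 1) + j : ℕ) : ℤ) = (A.card : ℤ) - 1 + j := by omega
          rw [this]
          ring
        rw [hfirst, hsecond]
        have hthird : Rr (-x - nA) (Q.card - A.card)
            = (-1 : ℤ)^(Q.card - A.card) * ∏ j ∈ Finset.range (Q.card - A.card), (x + nA - j) := by
          rw [Rr]
          have : ∀ j ∈ Finset.range (Q.card - A.card), -x - nA + (j:ℤ) = (-1) * (x + nA - j) := by
            intro j _; ring
          rw [Finset.prod_congr rfl this, Finset.prod_mul_distrib, Finset.prod_const,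
            Finset.card_range]
        rw [hthird]
        have hsign : (-1 : ℤ)^(Q.card - A.card) = (-1 : ℤ)^Q.card * (-1 : ℤ)^A.card := by
          rw [← pow_add]
          have : Q.card + A.card = (Q.card - A.card) + 2 * A.card := by omega
          rw [this, pow_add, pow_mul]
          simp
        rw [hsign]
        ring
    have : ∑ A ∈ Q.powerset, hterm x (-x - nQ) n Q A = 0 := by
      rw [Finset.sum_congr rfl hterm_eq, ← Finset.mul_sum, halt, mul_zero]
    simp only [hF, this, hRHS, sub_zero]
  have := int_const F step y (-x - nQ)
  rw [base] at this
  simp only [hF] at this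
  omega
lemma Rr_cast (a k : ℕ) :
    Rr ((a : ℤ) + 1) k = ((∏ j ∈ Finset.range k, (a + 1 + j) : ℕ) : ℤ) := by
  rw [Rr, Nat.cast_prod]
  apply Finset.prod_congr rfl
  intro j _
  push_cast
  ring

/-- **Third identity on multinomial coefficients.**
For `r ≥ 3` and positive integers `m 1, …, m r` with `s = m 1 + ⋯ + m r`,
setting `g 1 = m 1 - 1` and `g i = m i` for `2 ≤ i`, the multinomial coefficient
`s! / (m 1 ! ⋯ m r !)` equals the sum over all ordered bipartitions `(B₁, B₂)` of
`{1, …, r}` with `1 ∈ B₁`, `2 ∈ B₂`, `3 ∈ B₂`, and `B₂ = {1,…,r} \ B₁` of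
`choose (s - r + 3) (S(B₂) - |B₂| + 2) * C(B₁) * C(B₂)`, where `S(B) = ∑_{i∈B} g i`
and `C(B) = S(B)! / ∏_{i∈B} (g i)!`. -/
theorem multinomial_identity_three
    (r : ℕ) (hr : 3 ≤ r) (m : ℕ → ℕ) (hm : ∀ i ∈ Finset.Icc 1 r, 0 < m i)
    (s : ℕ) (hs : s = ∑ i ∈ Finset.Icc 1 r, m i)
    (g : ℕ → ℕ) (hg1 : g 1 = m 1 - 1) (hg2 : ∀ i, 2 ≤ i → g i = m i) :
    s.factorial / ∏ i ∈ Finset.Icc 1 r, (m i).factorial =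
      ∑ B1 ∈ (Finset.Icc 1 r).powerset.filter (fun B => 1 ∈ B ∧ 2 ∉ B ∧ 3 ∉ B),
        (s - r + 3).choose
            ((∑ i ∈ Finset.Icc 1 r \ B1, g i) - (Finset.Icc 1 r \ B1).card + 2) *
          ((∑ i ∈ B1, g i).factorial / ∏ i ∈ B1, (g i).factorial) *
          ((∑ i ∈ Finset.Icc 1 r \ B1, g i).factorial /
            ∏ i ∈ Finset.Icc 1 r \ B1, (g i).factorial) := by
  have h1I : (1 : ℕ) ∈ Finset.Icc 1 r := by simp [Finset.mem_Icc]; omega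
  have h2I : (2 : ℕ) ∈ Finset.Icc 1 r := by simp [Finset.mem_Icc]; omega
  have h3I : (3 : ℕ) ∈ Finset.Icc 1 r := by simp [Finset.mem_Icc]; omega
  have hm1 : 0 < m 1 := hm 1 h1I
  have hm2 : 0 < m 2 := hm 2 h2I
  have hm3 : 0 < m 3 := hm 3 h3I
  set I : Finset ℕ := Finset.Icc 1 r with hI
  set Q : Finset ℕ := I \ {1, 2, 3} with hQdef
  have hT_sub : ({1,2,3} : Finset ℕ) ⊆ I := by
    intro a ha
    simp only [Finset.mem_insert, Finset.mem_singleton] at ha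
    rcases ha with rfl | rfl | rfl <;> assumption
  have hIcard : I.card = r := by simp [hI]
  have hTcard : ({1,2,3} : Finset ℕ).card = 3 := by decide
  have hQcard : Q.card = r - 3 := by
    rw [hQdef, Finset.card_sdiff_of_subset hT_sub, hIcard, hTcard]
  have hQmem : ∀ i ∈ Q, 2 ≤ i ∧ 0 < m i ∧ g i = m i := by
    intro i hi
    rw [hQdef, Finset.mem_sdiff] at hi
    obtain ⟨hiI, hiT⟩ := hi
    simp only [Finset.mem_insert, Finset.mem_singleton] at hiT
    push_neg at hiT
    have h1 : 1 ≤ i := by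
      rw [hI, Finset.mem_Icc] at hiI; exact hiI.1
    have h2 : 2 ≤ i := by omega
    exact ⟨h2, hm i hiI, hg2 i h2⟩
  have h1Q : (1:ℕ) ∉ Q := by intro h; exact absurd (hQmem 1 h).1 (by omega)
  have h2Q : (2:ℕ) ∉ Q := by
    intro h; rw [hQdef, Finset.mem_sdiff] at h; exact h.2 (by simp)
  have h3Q : (3:ℕ) ∉ Q := by
    intro h; rw [hQdef, Finset.mem_sdiff] at h; exact h.2 (by simp)
  have hsumT : ∑ i ∈ ({1,2,3} : Finset ℕ), m i = m 1 + m 2 + m 3 := by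
    rw [show ({1,2,3} : Finset ℕ) = insert 1 (insert 2 {3}) from rfl,
      Finset.sum_insert (by decide), Finset.sum_insert (by decide),
      Finset.sum_singleton]
    omega
  set σQ : ℕ := ∑ i ∈ Q, m i with hσQ
  have hs' : s = m 1 + m 2 + m 3 + σQ := by
    rw [hs, ← Finset.sum_sdiff hT_sub, hsumT, ← hQdef, ← hσQ]
    omega
  have hQσ : Q.card ≤ σQ := by
    calc Q.card = ∑ _i ∈ Q, 1 := by simp
    _ ≤ σQ := Finset.sum_le_sum (fun i hi => (hQmem i hi).2.1)
  have hsr : r ≤ s := by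
    have : I.card ≤ ∑ i ∈ I, m i :=
      calc I.card = ∑ _i ∈ I, 1 := by simp
      _ ≤ _ := Finset.sum_le_sum (fun i hi => hm i hi)
    omega
  have hprodpos : 0 < ∏ i ∈ I, (m i).factorial :=
    Finset.prod_pos (fun i _ => Nat.factorial_pos _)
  have hdvd : (∏ i ∈ I, (m i).factorial) ∣ s.factorial := by
    rw [hs]; exact Nat.prod_factorial_dvd_factorial_sum I m
  rw [Nat.div_eq_iff_eq_mul_left hprodpos hdvd, Finset.sum_mul]
  have reindex : ∀ (f : Finset ℕ → ℕ),
      ∑ B1 ∈ I.powerset.filter (fun B => 1 ∈ B ∧ 2 ∉ B ∧ 3 ∉ B), f B1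
        = ∑ A ∈ Q.powerset, f (insert 1 A) := by
    intro f
    apply Finset.sum_nbij' (i := fun B => B.erase 1) (j := fun A => insert 1 A)
    · intro B hB
      simp only [Finset.mem_filter, Finset.mem_powerset] at hB
      obtain ⟨hBI, h1B, h2B, h3B⟩ := hB
      rw [Finset.mem_powerset, hQdef]
      intro a ha
      rw [Finset.mem_erase] at ha
      rw [Finset.mem_sdiff]
      refine ⟨hBI ha.2, ?_⟩
      simp only [Finset.mem_insert, Finset.mem_singleton]
      push_neg
      refine ⟨ha.1, fun h => h2B (h ▸ ha.2), fun h => h3B (h ▸ ha.2)⟩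
    · intro A hA
      rw [Finset.mem_powerset] at hA
      simp only [Finset.mem_filter, Finset.mem_powerset]
      have hAQ : ∀ a ∈ A, a ∈ Q := fun a ha => hA ha
      refine ⟨?_, Finset.mem_insert_self 1 A, ?_, ?_⟩
      · intro a ha
        rcases Finset.mem_insert.mp ha with rfl | haA
        · exact h1I
        · exact (Finset.mem_sdiff.mp (hAQ a haA)).1
      · intro h
        rcases Finset.mem_insert.mp h with h | h
        · omega
        · exact h2Q (hAQ 2 h)
      · intro h
        rcases Finset.mem_insert.mp h with h | h
        · omega
        · exact h3Q (hAQ 3 h)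
    · intro B hB
      simp only [Finset.mem_filter] at hB
      exact Finset.insert_erase hB.2.1
    · intro A hA
      rw [Finset.mem_powerset] at hA
      exact Finset.erase_insert (fun h => h1Q (hA h))
    · intro B hB
      simp only [Finset.mem_filter] at hB
      rw [Finset.insert_erase hB.2.1]
  rw [reindex]
  set N : ℕ := s - r + 3 with hN
  have hnQZ : ∑ i ∈ Q, ((m i : ℤ) - 1) = (σQ : ℤ) - (Q.card : ℤ) := by
    rw [Finset.sum_sub_distrib, Finset.sum_const, nsmul_eq_mul, mul_one, hσQ]
    push_cast
    ring
  have key : ∀ A ∈ Q.powerset,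
      (((N.choose ((∑ i ∈ I \ insert 1 A, g i) - (I \ insert 1 A).card + 2) *
          ((∑ i ∈ insert 1 A, g i).factorial / ∏ i ∈ insert 1 A, (g i).factorial) *
          ((∑ i ∈ I \ insert 1 A, g i).factorial /
            ∏ i ∈ I \ insert 1 A, (g i).factorial)) *
          ∏ i ∈ I, (m i).factorial : ℕ) : ℤ)
        = (N.factorial : ℤ) *
          hterm (m 1 : ℤ) ((m 2 : ℤ) + (m 3 : ℤ) + 1) (fun i => (m i : ℤ) - 1) Q A := by
    intro A hA
    have hAQ : A ⊆ Q := Finset.mem_powerset.mp hA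
    have h1A : 1 ∉ A := fun h => h1Q (hAQ h)
    have h2A : 2 ∉ A := fun h => h2Q (hAQ h)
    have h3A : 3 ∉ A := fun h => h3Q (hAQ h)
    have hB1I : insert 1 A ⊆ I := by
      intro a ha
      rcases Finset.mem_insert.mp ha with rfl | h
      · exact h1I
      · exact (Finset.mem_sdiff.mp (hAQ h)).1
    have hB2eq : I \ insert 1 A = insert 2 (insert 3 (Q \ A)) := by
      rw [hQdef]
      ext a
      simp only [Finset.mem_sdiff, Finset.mem_insert, Finset.mem_singleton]
      constructor
      · rintro ⟨haI, hno⟩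
        push_neg at hno
        by_cases ha2 : a = 2
        · exact Or.inl ha2
        by_cases ha3 : a = 3
        · exact Or.inr (Or.inl ha3)
        · exact Or.inr (Or.inr ⟨⟨haI, by push_neg; exact ⟨hno.1, ha2, ha3⟩⟩, hno.2⟩)
      · rintro (rfl | rfl | ⟨⟨haI, hnT⟩, hnA⟩)
        · exact ⟨h2I, by push_neg; exact ⟨by omega, h2A⟩⟩
        · exact ⟨h3I, by push_neg; exact ⟨by omega, h3A⟩⟩
        · push_neg at hnT
          refine ⟨haI, by push_neg; exact ⟨hnT.1, hnA⟩⟩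
    have h3QA : (3:ℕ) ∉ Q \ A := fun h => h3Q (Finset.mem_sdiff.mp h).1
    have h2in : (2:ℕ) ∉ insert 3 (Q \ A) := by
      intro h
      rcases Finset.mem_insert.mp h with h | h
      · omega
      · exact h2Q (Finset.mem_sdiff.mp h).1
    set kA : ℕ := A.card with hkAdef
    set σA : ℕ := ∑ i ∈ A, m i with hσA
    set σB : ℕ := ∑ i ∈ Q \ A, m i with hσB
    have hσsplit : σB + σA = σQ := by
      rw [hσB, hσA, hσQ]
      exact Finset.sum_sdiff hAQ
    have hkA : kA ≤ Q.card := Finset.card_le_card hAQ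
    have hkσ : kA ≤ σA := by
      calc kA = ∑ _i ∈ A, 1 := by simp [hkAdef]
      _ ≤ σA := Finset.sum_le_sum (fun i hi => (hQmem i (hAQ hi)).2.1)
    have hcardQA : (Q \ A).card = Q.card - kA := Finset.card_sdiff_of_subset hAQ
    have hk2 : Q.card - kA ≤ σB := by
      calc Q.card - kA = ∑ _i ∈ Q \ A, 1 := by simp [hcardQA.symm]
      _ ≤ σB := Finset.sum_le_sum
          (fun i hi => (hQmem i (Finset.mem_sdiff.mp hi).1).2.1)
    have hgA : ∑ i ∈ A, g i = σA :=
      Finset.sum_congr rfl (fun i hi => (hQmem i (hAQ hi)).2.2)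
    have hgB : ∑ i ∈ Q \ A, g i = σB :=
      Finset.sum_congr rfl (fun i hi => (hQmem i (Finset.mem_sdiff.mp hi).1).2.2)
    have hS1 : ∑ i ∈ insert 1 A, g i = m 1 - 1 + σA := by
      rw [Finset.sum_insert h1A, hg1, hgA]
    have hS2 : ∑ i ∈ I \ insert 1 A, g i = m 2 + m 3 + σB := by
      rw [hB2eq, Finset.sum_insert h2in, Finset.sum_insert h3QA, hgB,
        hg2 2 le_rfl, hg2 3 (by omega)]
      omega
    have hcardB2 : (I \ insert 1 A).card = 2 + (Q.card - kA) := by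
      rw [hB2eq, Finset.card_insert_of_notMem h2in,
        Finset.card_insert_of_notMem h3QA, hcardQA]
      omega
    -- clear the divisions
    have hdvd1 : (∏ i ∈ insert 1 A, (g i).factorial) ∣ (∑ i ∈ insert 1 A, g i).factorial :=
      Nat.prod_factorial_dvd_factorial_sum _ _
    have hdvd2 : (∏ i ∈ I \ insert 1 A, (g i).factorial) ∣
        (∑ i ∈ I \ insert 1 A, g i).factorial :=
      Nat.prod_factorial_dvd_factorial_sum _ _
    have hprodI : ∏ i ∈ I, (m i).factorial
        = m 1 * ((∏ i ∈ I \ insert 1 A, (g i).factorial) * ∏ i ∈ insert 1 A, (g i).factorial) := by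
      have e1 : ∏ i ∈ I, (m i).factorial
          = (m 1).factorial * ∏ i ∈ I.erase 1, (m i).factorial :=
        (Finset.mul_prod_erase I (fun i => (m i).factorial) h1I).symm
      have e2 : (g 1).factorial * ∏ i ∈ I.erase 1, (g i).factorial
          = ∏ i ∈ I, (g i).factorial :=
        Finset.mul_prod_erase I (fun i => (g i).factorial) h1I
      have e3 : ∏ i ∈ I.erase 1, (m i).factorial = ∏ i ∈ I.erase 1, (g i).factorial := by
        apply Finset.prod_congr rfl
        intro i hi
        have h4 := Finset.mem_erase.mp hi
        have h5 : 1 ≤ i := by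
          have := h4.2
          rw [hI, Finset.mem_Icc] at this
          exact this.1
        rw [hg2 i (by omega)]
      have e4 : (m 1).factorial = m 1 * (g 1).factorial := by
        rw [hg1]
        have h5 : m 1 = (m 1 - 1) + 1 := by omega
        calc (m 1).factorial = ((m 1 - 1) + 1).factorial := by rw [← h5]
        _ = ((m 1 - 1) + 1) * (m 1 - 1).factorial := Nat.factorial_succ _
        _ = m 1 * (m 1 - 1).factorial := by rw [← h5]
      have e5 : ∏ i ∈ I, (g i).factorial
          = (∏ i ∈ I \ insert 1 A, (g i).factorial) * ∏ i ∈ insert 1 A, (g i).factorial :=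
        (Finset.prod_sdiff hB1I).symm
      rw [e1, e4, e3, mul_assoc, e2, e5]
    rw [hprodI]
    rw [show ∀ (c d e p1 p2 w : ℕ),
        c * d * e * (w * (p2 * p1)) = w * (c * ((d * p1) * (e * p2))) from by intros; ring]
    rw [Nat.div_mul_cancel hdvd1, Nat.div_mul_cancel hdvd2]
    -- now pure factorial identities
    set bN : ℕ := m 2 + m 3 + σB - (Q.card - kA) with hbN
    have hbraw : (∑ i ∈ I \ insert 1 A, g i) - (I \ insert 1 A).card + 2 = bN := by
      rw [hS2, hcardB2]
      omega
    set e1N : ℕ := m 1 + σA - kA with he1N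
    have hbN_le : bN ≤ N := by omega
    have hNsub : N - bN = e1N := by omega
    have hchoose : N.choose bN * bN.factorial * e1N.factorial = N.factorial := by
      rw [← hNsub]
      exact Nat.choose_mul_factorial_mul_factorial hbN_le
    rw [hbraw, hS1, hS2]
    by_cases hAe : A = ∅
    · -- empty case
      have hk0 : kA = 0 := by rw [hkAdef, hAe]; simp
      have hσA0 : σA = 0 := by rw [hσA, hAe]; simp
      have hS2N : m 2 + m 3 + σB = bN + Q.card := by omega
      have hfs2 : (m 2 + m 3 + σB).factorial
          = bN.factorial * ∏ j ∈ Finset.range Q.card, (bN + 1 + j) := by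
        rw [hS2N, fact_split]
      have hS10 : m 1 - 1 + σA = m 1 - 1 := by omega
      have hm1f : m 1 * (m 1 - 1).factorial = (m 1).factorial := by
        have h5 : m 1 = (m 1 - 1) + 1 := by omega
        calc m 1 * (m 1 - 1).factorial = ((m 1 - 1) + 1) * (m 1 - 1).factorial := by rw [← h5]
        _ = ((m 1 - 1) + 1).factorial := (Nat.factorial_succ _).symm
        _ = (m 1).factorial := by rw [← h5]
      have hterm0 : hterm (m 1 : ℤ) ((m 2 : ℤ) + (m 3 : ℤ) + 1) (fun i => (m i : ℤ) - 1) Q A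
          = ((∏ j ∈ Finset.range Q.card, (bN + 1 + j) : ℕ) : ℤ) := by
        rw [hAe]
        simp only [hterm, if_pos rfl, if_true]
        have harg : ((m 2 : ℤ) + (m 3 : ℤ) + 1) + ∑ i ∈ Q, ((m i : ℤ) - 1) = (bN : ℤ) + 1 := by
          rw [hnQZ]
          omega
        rw [harg, Rr_cast]
      rw [hterm0, hS10, hfs2]
      have hNfac : m 1 * (N.choose bN * ((m 1 - 1).factorial *
          (bN.factorial * ∏ j ∈ Finset.range Q.card, (bN + 1 + j))))
          = N.factorial * ∏ j ∈ Finset.range Q.card, (bN + 1 + j) := by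
        have he1m : e1N = m 1 := by omega
        calc m 1 * (N.choose bN * ((m 1 - 1).factorial *
            (bN.factorial * ∏ j ∈ Finset.range Q.card, (bN + 1 + j))))
            = (N.choose bN * bN.factorial * (m 1 * (m 1 - 1).factorial)) *
              ∏ j ∈ Finset.range Q.card, (bN + 1 + j) := by ring
        _ = (N.choose bN * bN.factorial * e1N.factorial) *
              ∏ j ∈ Finset.range Q.card, (bN + 1 + j) := by rw [hm1f, he1m]
        _ = N.factorial * ∏ j ∈ Finset.range Q.card, (bN + 1 + j) := by rw [hchoose]
      rw [hNfac]
      push_cast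
      ring
    · -- nonempty case
      have hkA1 : 1 ≤ kA := by
        rw [hkAdef]
        exact Finset.card_pos.mpr (Finset.nonempty_iff_ne_empty.mpr hAe)
      have hS1e : m 1 - 1 + σA = e1N + (kA - 1) := by omega
      have hS2e : m 2 + m 3 + σB = bN + (Q.card - kA) := by omega
      have hfs1 : (m 1 - 1 + σA).factorial
          = e1N.factorial * ∏ j ∈ Finset.range (kA - 1), (e1N + 1 + j) := by
        rw [hS1e, fact_split]
      have hfs2 : (m 2 + m 3 + σB).factorial
          = bN.factorial * ∏ j ∈ Finset.range (Q.card - kA), (bN + 1 + j) := by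
        rw [hS2e, fact_split]
      have htermA : hterm (m 1 : ℤ) ((m 2 : ℤ) + (m 3 : ℤ) + 1) (fun i => (m i : ℤ) - 1) Q A
          = (m 1 : ℤ) * ((∏ j ∈ Finset.range (kA - 1), (e1N + 1 + j) : ℕ) : ℤ) *
            ((∏ j ∈ Finset.range (Q.card - kA), (bN + 1 + j) : ℕ) : ℤ) := by
        simp only [hterm, if_neg hAe]
        have hnA : ∑ i ∈ A, ((m i : ℤ) - 1) = (σA : ℤ) - (kA : ℤ) := by
          rw [Finset.sum_sub_distrib, Finset.sum_const, nsmul_eq_mul, mul_one, hσA, hkAdef]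
          push_cast
          ring
        have hnB : ∑ i ∈ Q \ A, ((m i : ℤ) - 1) = (σB : ℤ) - ((Q.card : ℤ) - (kA : ℤ)) := by
          rw [Finset.sum_sub_distrib, Finset.sum_const, nsmul_eq_mul, mul_one, hσB, hcardQA]
          push_cast [hkA]
          ring
        have harg1 : (m 1 : ℤ) + (∑ i ∈ A, ((m i : ℤ) - 1)) + 1 = (e1N : ℤ) + 1 := by
          rw [hnA]
          omega
        have harg2 : ((m 2 : ℤ) + (m 3 : ℤ) + 1) + ∑ i ∈ Q \ A, ((m i : ℤ) - 1)
            = (bN : ℤ) + 1 := by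
          rw [hnB]
          omega
        rw [harg1, harg2, Rr_cast, Rr_cast, ← hkAdef]
      rw [htermA, hfs1, hfs2]
      have hNfac : m 1 * (N.choose bN * ((e1N.factorial * ∏ j ∈ Finset.range (kA - 1), (e1N + 1 + j)) *
          (bN.factorial * ∏ j ∈ Finset.range (Q.card - kA), (bN + 1 + j))))
          = N.factorial * (m 1 * (∏ j ∈ Finset.range (kA - 1), (e1N + 1 + j)) *
            ∏ j ∈ Finset.range (Q.card - kA), (bN + 1 + j)) := by
        calc m 1 * (N.choose bN * ((e1N.factorial * ∏ j ∈ Finset.range (kA - 1), (e1N + 1 + j)) *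
            (bN.factorial * ∏ j ∈ Finset.range (Q.card - kA), (bN + 1 + j))))
            = (N.choose bN * bN.factorial * e1N.factorial) *
              (m 1 * (∏ j ∈ Finset.range (kA - 1), (e1N + 1 + j)) *
              ∏ j ∈ Finset.range (Q.card - kA), (bN + 1 + j)) := by ring
        _ = _ := by rw [hchoose]
      rw [hNfac]
      push_cast
      ring
  have hsum : ((s.factorial : ℕ) : ℤ)
      = ∑ A ∈ Q.powerset,
        (((N.choose ((∑ i ∈ I \ insert 1 A, g i) - (I \ insert 1 A).card + 2) *
          ((∑ i ∈ insert 1 A, g i).factorial / ∏ i ∈ insert 1 A, (g i).factorial) *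
          ((∑ i ∈ I \ insert 1 A, g i).factorial /
            ∏ i ∈ I \ insert 1 A, (g i).factorial)) *
          ∏ i ∈ I, (m i).factorial : ℕ) : ℤ) := by
    rw [Finset.sum_congr rfl key, ← Finset.mul_sum,
      hurwitz (m 1 : ℤ) (fun i => (m i : ℤ) - 1) Q ((m 2 : ℤ) + (m 3 : ℤ) + 1)]
    have harg : (m 1 : ℤ) + ((m 2 : ℤ) + (m 3 : ℤ) + 1) + ∑ i ∈ Q, ((m i : ℤ) - 1)
        = (N : ℤ) + 1 := by
      rw [hnQZ]
      omega
    rw [harg, Rr_cast, ← Nat.cast_mul, ← fact_split,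
      show N + Q.card = s from by omega]
  exact_mod_cast hsum
end

section
/- Let k ≥ 1 be an integer and m_1, …, m_k positive integers with s = m_1 + ⋯ + m_k. Then the number of ordered partitions (P_1, …, P_k) of {1, …, s} of type (m_1, …, m_k) whose reachable set R(P) equals the full index set {1, …, k} is exactly the multinomial coefficient (s − 1)! / ((m_1 − 1)! · m_2! ⋯ m_k!). -/
/-- `P` is an ordered partition of `{1, …, s}` of type `(m 1, …, m r)`:
the sets `P 1, …, P r` are pairwise disjoint, their union is `{1, …, s}`,
`|P i| = m i` for each `i ∈ {1, …, r}`, and `P i = ∅` for irrelevant indices. -/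
def IsOrderedPartition (r s : ℕ) (m : ℕ → ℕ) (P : ℕ → Finset ℕ) : Prop :=
  (∀ i, i ∉ Finset.Icc 1 r → P i = ∅) ∧
  (∀ i j, i ≠ j → Disjoint (P i) (P j)) ∧
  ((Finset.Icc 1 r).biUnion P = Finset.Icc 1 s) ∧
  (∀ i ∈ Finset.Icc 1 r, (P i).card = m i)

/-- `F` is closed under the arcs `i → j` given by `j ∈ P i ∩ {2, …, r}`. -/
def ArcClosed (r : ℕ) (P : ℕ → Finset ℕ) (F : Finset ℕ) : Prop :=
  ∀ i ∈ F, ∀ j ∈ P i, 2 ≤ j → j ≤ r → j ∈ F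

/-- `F` is the reachable set `R(P)`: the smallest set containing `1` that is
closed under the arcs `i → j` given by `j ∈ P i ∩ {2, …, r}`. -/
def IsReachSet (r : ℕ) (P : ℕ → Finset ℕ) (F : Finset ℕ) : Prop :=
  1 ∈ F ∧ ArcClosed r P F ∧
    ∀ F' : Finset ℕ, 1 ∈ F' → ArcClosed r P F' → F ⊆ F'

def OP (k : ℕ) (m : ℕ → ℕ) (G : Finset ℕ) (P : ℕ → Finset ℕ) : Prop :=
  (∀ i, i ∉ Finset.Icc 1 k → P i = ∅) ∧
  (∀ i j, i ≠ j → Disjoint (P i) (P j)) ∧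
  ((Finset.Icc 1 k).biUnion P = G) ∧
  (∀ i ∈ Finset.Icc 1 k, (P i).card = m i)

def Sol (k : ℕ) (m : ℕ → ℕ) (G : Finset ℕ) : Set (ℕ → Finset ℕ) :=
  {P | OP k m G P ∧ IsReachSet k P (Finset.Icc 1 k)}

lemma arcClosed_full (k : ℕ) (P : ℕ → Finset ℕ) : ArcClosed k P (Finset.Icc 1 k) := by
  intro i _ j _ h2 hk
  exact Finset.mem_Icc.mpr ⟨le_trans (by norm_num) h2, hk⟩

lemma isReachSet_full_iff {k : ℕ} (hk : 1 ≤ k) (P : ℕ → Finset ℕ) :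
    IsReachSet k P (Finset.Icc 1 k) ↔
      ∀ F : Finset ℕ, 1 ∈ F → ArcClosed k P F → Finset.Icc 1 k ⊆ F := by
  constructor
  · exact fun h => h.2.2
  · intro h
    exact ⟨Finset.mem_Icc.mpr ⟨le_refl 1, hk⟩, arcClosed_full k P, h⟩

lemma blocks_subset {k : ℕ} {m : ℕ → ℕ} {G : Finset ℕ} {P : ℕ → Finset ℕ}
    (hOP : OP k m G P) (i : ℕ) : P i ⊆ G := by
  by_cases hi : i ∈ Finset.Icc 1 k
  · rw [← hOP.2.2.1]; exact Finset.subset_biUnion_of_mem P hi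
  · rw [hOP.1 i hi]; exact Finset.empty_subset _

/-- Removing a non-index element `g` from block `i` : bijective counting. -/
lemma classA {k : ℕ} (hk : 1 ≤ k) {m : ℕ → ℕ} {G : Finset ℕ} {g i : ℕ}
    (hgG : g ∈ G) (hgI : g ∉ Finset.Icc 2 k) (hi : i ∈ Finset.Icc 1 k) (hmi : 1 ≤ m i) :
    {P | P ∈ Sol k m G ∧ g ∈ P i}.ncard
      = (Sol k (fun j => if j = i then m i - 1 else m j) (G.erase g)).ncard := by
  classical
  set m' : ℕ → ℕ := fun j => if j = i then m i - 1 else m j with hm'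
  set φ : (ℕ → Finset ℕ) → (ℕ → Finset ℕ) := fun P j => if j = i then (P j).erase g else P j with hφ
  have harc : ∀ (P : ℕ → Finset ℕ) (F : Finset ℕ), g ∈ P i →
      (ArcClosed k (φ P) F ↔ ArcClosed k P F) := by
    intro P F _
    constructor
    · intro h a ha j hj h2 hjk
      refine h a ha j ?_ h2 hjk
      have hjg : j ≠ g := by
        intro he; subst he; exact hgI (Finset.mem_Icc.mpr ⟨h2, hjk⟩)
      simp only [hφ]
      by_cases hai : a = i
      · subst hai; rw [if_pos rfl]; exact Finset.mem_erase.mpr ⟨hjg, hj⟩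
      · simp [hai, hj]
    · intro h a ha j hj h2 hjk
      refine h a ha j ?_ h2 hjk
      simp only [hφ] at hj
      by_cases hai : a = i
      · subst hai; simp only [if_pos rfl] at hj; exact Finset.mem_of_mem_erase hj
      · simpa [hai] using hj
  have key : φ '' {P | P ∈ Sol k m G ∧ g ∈ P i} = Sol k m' (G.erase g) := by
    apply Set.eq_of_subset_of_subset
    · rintro _ ⟨P, ⟨⟨hOP, hR⟩, hgP⟩, rfl⟩
      obtain ⟨hsupp, hdisj, hbU, hcard⟩ := hOP
      constructor
      · refine ⟨?_, ?_, ?_, ?_⟩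
        · intro j hj
          have hji : j ≠ i := fun he => hj (he ▸ hi)
          simp only [hφ, if_neg hji]
          exact hsupp j hj
        · intro a b hab
          have : ∀ c, φ P c ⊆ P c := by
            intro c; simp only [hφ]; split
            · exact Finset.erase_subset _ _
            · exact Finset.Subset.refl _
          exact ((hdisj a b hab).mono (this a)) (this b)
        · ext x
          simp only [Finset.mem_biUnion, Finset.mem_erase]
          constructor
          · rintro ⟨j, hj, hx⟩
            have hxP : x ∈ P j := by
              simp only [hφ] at hx
              by_cases hji : j = i
              · subst hji; simp only [if_pos rfl] at hx; exact Finset.mem_of_mem_erase hx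
              · simpa [hji] using hx
            refine ⟨?_, hbU ▸ Finset.mem_biUnion.mpr ⟨j, hj, hxP⟩⟩
            intro he; subst he
            by_cases hji : j = i
            · subst hji; simp [hφ] at hx
            · exact (Finset.disjoint_left.mp (hdisj j i hji) hxP) hgP
          · rintro ⟨hxg, hxG⟩
            rw [← hbU] at hxG
            obtain ⟨j, hj, hx⟩ := Finset.mem_biUnion.mp hxG
            refine ⟨j, hj, ?_⟩
            simp only [hφ]
            by_cases hji : j = i
            · subst hji; simp [Finset.mem_erase, hxg, hx]
            · simp [hji, hx]
        · intro j hj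
          simp only [hφ, hm']
          by_cases hji : j = i
          · subst hji
            simp [Finset.card_erase_of_mem hgP, hcard j hj]
          · simp [hji, hcard j hj]
      · rw [isReachSet_full_iff hk]
        intro F h1F hcl
        exact hR.2.2 F h1F ((harc P F hgP).mp hcl)
    · intro Q hQ
      obtain ⟨⟨hsupp, hdisj, hbU, hcard⟩, hR⟩ := hQ
      have hgQ : ∀ j, g ∉ Q j := by
        intro j hg
        have := blocks_subset ⟨hsupp, hdisj, hbU, hcard⟩ j hg
        exact (Finset.mem_erase.mp this).1 rfl
      set P : ℕ → Finset ℕ := fun j => if j = i then insert g (Q j) else Q j with hP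
      have hgP : g ∈ P i := by simp [hP]
      have hQsub : ∀ c, Q c ⊆ P c := by
        intro c; simp only [hP]; split
        · exact Finset.subset_insert _ _
        · exact Finset.Subset.refl _
      have hOP : OP k m G P := by
        refine ⟨?_, ?_, ?_, ?_⟩
        · intro j hj
          have hji : j ≠ i := fun he => hj (he ▸ hi)
          simp only [hP, if_neg hji]
          exact hsupp j hj
        · intro a b hab
          rw [Finset.disjoint_left]
          intro x hxa hxb
          by_cases hxg : x = g
          · subst hxg
            have ha' : a = i := by
              by_contra h
              exact hgQ a (by simpa [hP, h] using hxa)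
            have hb' : b = i := by
              by_contra h
              exact hgQ b (by simpa [hP, h] using hxb)
            exact hab (ha'.trans hb'.symm)
          · have hxa' : x ∈ Q a := by
              simp only [hP] at hxa
              by_cases h : a = i
              · subst h; rw [if_pos rfl, Finset.mem_insert] at hxa; exact hxa.resolve_left hxg
              · simpa [h] using hxa
            have hxb' : x ∈ Q b := by
              simp only [hP] at hxb
              by_cases h : b = i
              · subst h; rw [if_pos rfl, Finset.mem_insert] at hxb; exact hxb.resolve_left hxg
              · simpa [h] using hxb
            exact (Finset.disjoint_left.mp (hdisj a b hab) hxa') hxb'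
        · ext x
          simp only [Finset.mem_biUnion]
          constructor
          · rintro ⟨j, hj, hx⟩
            by_cases hxg : x = g
            · subst hxg; exact hgG
            · have : x ∈ Q j := by
                simp only [hP] at hx
                by_cases h : j = i
                · subst h; rw [if_pos rfl, Finset.mem_insert] at hx; exact hx.resolve_left hxg
                · simpa [h] using hx
              have := hbU ▸ Finset.mem_biUnion.mpr ⟨j, hj, this⟩
              exact Finset.mem_of_mem_erase this
          · intro hxG
            by_cases hxg : x = g
            · subst hxg; exact ⟨i, hi, hgP⟩
            · have : x ∈ G.erase g := Finset.mem_erase.mpr ⟨hxg, hxG⟩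
              rw [← hbU] at this
              obtain ⟨j, hj, hx⟩ := Finset.mem_biUnion.mp this
              exact ⟨j, hj, hQsub j hx⟩
        · intro j hj
          simp only [hP]
          by_cases hji : j = i
          · subst hji
            rw [if_pos rfl, Finset.card_insert_of_notMem (hgQ j), hcard j hj]
            simp only [hm', if_pos rfl]
            omega
          · rw [if_neg hji, hcard j hj]
            simp [hm', hji]
      have hφP : φ P = Q := by
        funext j
        simp only [hφ, hP]
        by_cases hji : j = i
        · subst hji; simp [Finset.erase_insert (hgQ j)]
        · simp [hji]
      refine ⟨P, ⟨⟨hOP, ?_⟩, hgP⟩, hφP⟩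
      rw [isReachSet_full_iff hk]
      intro F h1F hcl
      refine hR.2.2 F h1F ?_
      rw [← hφP]
      exact (harc P F hgP).mpr hcl
  rw [← key]
  refine (Set.ncard_image_of_injOn ?_).symm
  rintro P ⟨⟨hOP, _⟩, hgP⟩ Q ⟨⟨hOQ, _⟩, hgQ⟩ hPQ
  funext j
  have := congrFun hPQ j
  simp only [hφ] at this
  by_cases hji : j = i
  · subst hji
    simp only [if_true, eq_self_iff_true] at this
    rw [← Finset.insert_erase hgP, ← Finset.insert_erase hgQ, this]
  · simpa [hji] using this

lemma not_reach_of_empty {k : ℕ} (hk : 2 ≤ k) {P : ℕ → Finset ℕ} (h1 : P 1 = ∅) :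
    ¬ IsReachSet k P (Finset.Icc 1 k) := by
  intro h
  have hsub : Finset.Icc 1 k ⊆ {1} := by
    refine h.2.2 {1} (Finset.mem_singleton_self 1) ?_
    intro i hi j hj _ _
    rw [Finset.mem_singleton] at hi
    subst hi
    rw [h1] at hj
    exact absurd hj (Finset.notMem_empty j)
  have h2 : (2 : ℕ) ∈ Finset.Icc 1 k := Finset.mem_Icc.mpr ⟨one_le_two, hk⟩
  have := hsub h2
  simp at this

lemma sol_empty {k : ℕ} (hk : 2 ≤ k) {m : ℕ → ℕ} {G : Finset ℕ} (hm1 : m 1 = 0) :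
    Sol k m G = ∅ := by
  ext P
  simp only [Sol, Set.mem_setOf_eq, Set.mem_empty_iff_false, iff_false, not_and]
  intro hOP
  have h1 : P 1 = ∅ := by
    have := hOP.2.2.2 1 (Finset.mem_Icc.mpr ⟨le_refl 1, le_trans one_le_two hk⟩)
    rw [hm1] at this
    exact Finset.card_eq_zero.mp this
  exact not_reach_of_empty hk h1

lemma Pk_empty {k : ℕ} (hk : 1 ≤ k) {m : ℕ → ℕ} {G : Finset ℕ} {P : ℕ → Finset ℕ}
    (hOP : OP k m G P) (hmk : m k = 0) : P k = ∅ := by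
  have := hOP.2.2.2 k (Finset.mem_Icc.mpr ⟨hk, le_refl k⟩)
  rw [hmk] at this
  exact Finset.card_eq_zero.mp this

/-- Removing the element-and-index `k` (whose block is empty) from block `i`. -/
lemma classB {k : ℕ} (hk : 2 ≤ k) {m : ℕ → ℕ} {G : Finset ℕ} {i : ℕ}
    (hkG : k ∈ G) (hi : i ∈ Finset.Icc 1 (k - 1)) (hmi : 1 ≤ m i) (hmk : m k = 0) :
    {P | P ∈ Sol k m G ∧ k ∈ P i}.ncard
      = (Sol (k - 1) (fun j => if j = i then m i - 1 else m j) (G.erase k)).ncard := by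
  classical
  have hk1 : 1 ≤ k := le_trans one_le_two hk
  have hik : i ≠ k := by
    have := (Finset.mem_Icc.mp hi).2; omega
  have hi' : i ∈ Finset.Icc 1 k := by
    have := Finset.mem_Icc.mp hi
    exact Finset.mem_Icc.mpr ⟨this.1, by omega⟩
  set m' : ℕ → ℕ := fun j => if j = i then m i - 1 else m j with hm'
  set φ : (ℕ → Finset ℕ) → (ℕ → Finset ℕ) := fun P j => if j = i then (P j).erase k else P j
    with hφ
  have key : φ '' {P | P ∈ Sol k m G ∧ k ∈ P i} = Sol (k - 1) m' (G.erase k) := by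
    apply Set.eq_of_subset_of_subset
    · rintro _ ⟨P, ⟨⟨hOP, hR⟩, hgP⟩, rfl⟩
      have hPk : P k = ∅ := Pk_empty hk1 hOP hmk
      obtain ⟨hsupp, hdisj, hbU, hcard⟩ := hOP
      constructor
      · refine ⟨?_, ?_, ?_, ?_⟩
        · intro j hj
          have hji : j ≠ i := by
            intro he; subst he; exact hj hi
          simp only [hφ, if_neg hji]
          by_cases hjk : j ∈ Finset.Icc 1 k
          · have : j = k := by
              rw [Finset.mem_Icc] at hjk hj; omega
            rw [this, hPk]
          · exact hsupp j hjk
        · intro a b hab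
          have : ∀ c, φ P c ⊆ P c := by
            intro c; simp only [hφ]; split
            · exact Finset.erase_subset _ _
            · exact Finset.Subset.refl _
          exact ((hdisj a b hab).mono (this a)) (this b)
        · ext x
          simp only [Finset.mem_biUnion, Finset.mem_erase]
          constructor
          · rintro ⟨j, hj, hx⟩
            have hxP : x ∈ P j := by
              simp only [hφ] at hx
              by_cases hji : j = i
              · subst hji; rw [if_pos rfl] at hx; exact Finset.mem_of_mem_erase hx
              · simpa [hji] using hx
            have hjk' : j ∈ Finset.Icc 1 k := by
              rw [Finset.mem_Icc] at hj ⊢; omega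
            refine ⟨?_, hbU ▸ Finset.mem_biUnion.mpr ⟨j, hjk', hxP⟩⟩
            intro he; subst he
            by_cases hji : j = i
            · subst hji; simp [hφ] at hx
            · exact (Finset.disjoint_left.mp (hdisj j i hji) hxP) hgP
          · rintro ⟨hxg, hxG⟩
            rw [← hbU] at hxG
            obtain ⟨j, hj, hx⟩ := Finset.mem_biUnion.mp hxG
            have hjne : j ≠ k := by
              intro he; subst he; rw [hPk] at hx; exact Finset.notMem_empty x hx
            have hj' : j ∈ Finset.Icc 1 (k - 1) := by
              rw [Finset.mem_Icc] at hj ⊢; omega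
            refine ⟨j, hj', ?_⟩
            simp only [hφ]
            by_cases hji : j = i
            · subst hji; rw [if_pos rfl]; exact Finset.mem_erase.mpr ⟨hxg, hx⟩
            · simp [hji, hx]
        · intro j hj
          have hj' : j ∈ Finset.Icc 1 k := by
            rw [Finset.mem_Icc] at hj ⊢; omega
          simp only [hφ, hm']
          by_cases hji : j = i
          · subst hji
            simp [Finset.card_erase_of_mem hgP, hcard j hj']
          · simp [hji, hcard j hj']
      · rw [isReachSet_full_iff (by omega : 1 ≤ k - 1)]
        intro F h1F hcl
        have hclP : ArcClosed k P (insert k F) := by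
          intro a ha j hj h2 hjk
          rcases Finset.mem_insert.mp ha with hak | haF
          · subst hak; rw [hPk] at hj; exact absurd hj (Finset.notMem_empty j)
          · by_cases hjK : j = k
            · subst hjK; exact Finset.mem_insert_self _ _
            · have hj' : j ∈ φ P a := by
                simp only [hφ]
                by_cases hai : a = i
                · subst hai; rw [if_pos rfl]; exact Finset.mem_erase.mpr ⟨hjK, hj⟩
                · simpa [hai] using hj
              exact Finset.mem_insert_of_mem (hcl a haF j hj' h2 (by omega))
        have hsub := hR.2.2 (insert k F) (Finset.mem_insert_of_mem h1F) hclP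
        intro x hx
        have hx' : x ∈ Finset.Icc 1 k := by
          rw [Finset.mem_Icc] at hx ⊢; omega
        have := hsub hx'
        rcases Finset.mem_insert.mp this with hxk | hxF
        · exfalso; rw [Finset.mem_Icc] at hx; omega
        · exact hxF
    · intro Q hQ
      obtain ⟨⟨hsupp, hdisj, hbU, hcard⟩, hR⟩ := hQ
      have hgQ : ∀ j, k ∉ Q j := by
        intro j hg
        have := blocks_subset ⟨hsupp, hdisj, hbU, hcard⟩ j hg
        exact (Finset.mem_erase.mp this).1 rfl
      have hQk : Q k = ∅ := by
        apply hsupp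
        rw [Finset.mem_Icc]; omega
      set P : ℕ → Finset ℕ := fun j => if j = i then insert k (Q j) else Q j with hP
      have hgP : k ∈ P i := by simp [hP]
      have hQsub : ∀ c, Q c ⊆ P c := by
        intro c; simp only [hP]; split
        · exact Finset.subset_insert _ _
        · exact Finset.Subset.refl _
      have hOP : OP k m G P := by
        refine ⟨?_, ?_, ?_, ?_⟩
        · intro j hj
          have hji : j ≠ i := by
            intro he; subst he; exact hj hi'
          simp only [hP, if_neg hji]
          apply hsupp
          intro hmem
          apply hj
          rw [Finset.mem_Icc] at hmem ⊢; omega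
        · intro a b hab
          rw [Finset.disjoint_left]
          intro x hxa hxb
          by_cases hxg : x = k
          · subst hxg
            have ha' : a = i := by
              by_contra h
              exact hgQ a (by simpa [hP, h] using hxa)
            have hb' : b = i := by
              by_contra h
              exact hgQ b (by simpa [hP, h] using hxb)
            exact hab (ha'.trans hb'.symm)
          · have hxa' : x ∈ Q a := by
              simp only [hP] at hxa
              by_cases h : a = i
              · subst h; rw [if_pos rfl, Finset.mem_insert] at hxa; exact hxa.resolve_left hxg
              · simpa [h] using hxa
            have hxb' : x ∈ Q b := by
              simp only [hP] at hxb
              by_cases h : b = i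
              · subst h; rw [if_pos rfl, Finset.mem_insert] at hxb; exact hxb.resolve_left hxg
              · simpa [h] using hxb
            exact (Finset.disjoint_left.mp (hdisj a b hab) hxa') hxb'
        · ext x
          simp only [Finset.mem_biUnion]
          constructor
          · rintro ⟨j, hj, hx⟩
            by_cases hxg : x = k
            · subst hxg; exact hkG
            · have hxQ : x ∈ Q j := by
                simp only [hP] at hx
                by_cases h : j = i
                · subst h; rw [if_pos rfl, Finset.mem_insert] at hx; exact hx.resolve_left hxg
                · simpa [h] using hx
              have hjne : j ≠ k := by
                intro he; subst he; rw [hQk] at hxQ; exact Finset.notMem_empty x hxQ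
              have hj' : j ∈ Finset.Icc 1 (k - 1) := by
                rw [Finset.mem_Icc] at hj ⊢; omega
              have := hbU ▸ Finset.mem_biUnion.mpr ⟨j, hj', hxQ⟩
              exact Finset.mem_of_mem_erase this
          · intro hxG
            by_cases hxg : x = k
            · subst hxg; exact ⟨i, hi', hgP⟩
            · have : x ∈ G.erase k := Finset.mem_erase.mpr ⟨hxg, hxG⟩
              rw [← hbU] at this
              obtain ⟨j, hj, hx⟩ := Finset.mem_biUnion.mp this
              have hj' : j ∈ Finset.Icc 1 k := by
                rw [Finset.mem_Icc] at hj ⊢; omega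
              exact ⟨j, hj', hQsub j hx⟩
        · intro j hj
          simp only [hP]
          by_cases hji : j = i
          · subst hji
            rw [if_pos rfl, Finset.card_insert_of_notMem (hgQ j)]
            have := hcard j hi
            simp only [hm', if_pos rfl] at this
            omega
          · rw [if_neg hji]
            by_cases hjk : j = k
            · subst hjk; rw [hQk, Finset.card_empty, hmk]
            · have hj' : j ∈ Finset.Icc 1 (k - 1) := by
                rw [Finset.mem_Icc] at hj ⊢; omega
              have := hcard j hj'
              simpa [hm', hji] using this
      have hφP : φ P = Q := by
        funext j
        simp only [hφ, hP]
        by_cases hji : j = i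
        · subst hji; simp [Finset.erase_insert (hgQ j)]
        · simp [hji]
      refine ⟨P, ⟨⟨hOP, ?_⟩, hgP⟩, hφP⟩
      rw [isReachSet_full_iff hk1]
      intro F h1F hcl
      have hclQ : ArcClosed (k - 1) Q F := by
        intro a ha j hj h2 hjk
        exact hcl a ha j (hQsub a hj) h2 (by omega)
      have hsub := hR.2.2 F h1F hclQ
      have hkF : k ∈ F := by
        have hiF : i ∈ F := hsub hi
        exact hcl i hiF k hgP hk (le_refl k)
      intro x hx
      rw [Finset.mem_Icc] at hx
      by_cases hxk : x = k
      · subst hxk; exact hkF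
      · exact hsub (Finset.mem_Icc.mpr ⟨hx.1, by omega⟩)
  rw [← key]
  refine (Set.ncard_image_of_injOn ?_).symm
  rintro P ⟨⟨hOP, _⟩, hgP⟩ Q ⟨⟨hOQ, _⟩, hgQ⟩ hPQ
  funext j
  have := congrFun hPQ j
  simp only [hφ] at this
  by_cases hji : j = i
  · subst hji
    simp only [if_true, eq_self_iff_true] at this
    rw [← Finset.insert_erase hgP, ← Finset.insert_erase hgQ, this]
  · simpa [hji] using this

section Swap

variable {k a b : ℕ} {G : Finset ℕ}

lemma swap_mem_Icc2 (ha : a ∈ Finset.Icc 2 k) (hb : b ∈ Finset.Icc 2 k) {x : ℕ}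
    (hx : x ∈ Finset.Icc 2 k) : Equiv.swap a b x ∈ Finset.Icc 2 k := by
  rcases eq_or_ne x a with rfl | hxa
  · rwa [Equiv.swap_apply_left]
  rcases eq_or_ne x b with rfl | hxb
  · rwa [Equiv.swap_apply_right]
  · rwa [Equiv.swap_apply_of_ne_of_ne hxa hxb]

lemma swap_mem_Icc1 (ha : a ∈ Finset.Icc 2 k) (hb : b ∈ Finset.Icc 2 k) {x : ℕ}
    (hx : x ∈ Finset.Icc 1 k) : Equiv.swap a b x ∈ Finset.Icc 1 k := by
  rcases eq_or_ne x a with rfl | hxa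
  · rw [Equiv.swap_apply_left]; rw [Finset.mem_Icc] at hb ⊢; omega
  rcases eq_or_ne x b with rfl | hxb
  · rw [Equiv.swap_apply_right]; rw [Finset.mem_Icc] at ha ⊢; omega
  · rwa [Equiv.swap_apply_of_ne_of_ne hxa hxb]

lemma swap_one (ha : a ∈ Finset.Icc 2 k) (hb : b ∈ Finset.Icc 2 k) :
    Equiv.swap a b 1 = 1 := by
  rw [Finset.mem_Icc] at ha hb
  exact Equiv.swap_apply_of_ne_of_ne (by omega) (by omega)

lemma swap_maps (hk : 1 ≤ k) (ha : a ∈ Finset.Icc 2 k) (hb : b ∈ Finset.Icc 2 k)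
    (haG : a ∈ G) (hbG : b ∈ G) (m : ℕ → ℕ)
    (P : ℕ → Finset ℕ) (hP : P ∈ Sol k (fun i => m (Equiv.swap a b i)) G) :
    (fun i => (P (Equiv.swap a b i)).image (Equiv.swap a b)) ∈ Sol k m G := by
  classical
  set σ := Equiv.swap a b with hσ
  have hinj : Function.Injective (⇑σ) := σ.injective
  have hGσ : ∀ x ∈ G, σ x ∈ G := by
    intro x hx
    rcases eq_or_ne x a with rfl | hxa
    · rwa [hσ, Equiv.swap_apply_left]
    rcases eq_or_ne x b with rfl | hxb
    · rwa [hσ, Equiv.swap_apply_right]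
    · rwa [hσ, Equiv.swap_apply_of_ne_of_ne hxa hxb]
  obtain ⟨⟨hsupp, hdisj, hbU, hcard⟩, hR⟩ := hP
  have hOP' : OP k m G (fun i => (P (σ i)).image σ) := by
    refine ⟨?_, ?_, ?_, ?_⟩
    · intro i hi
      have hia : i ≠ a := fun he => hi (he ▸ (by rw [Finset.mem_Icc] at ha ⊢; omega))
      have hib : i ≠ b := fun he => hi (he ▸ (by rw [Finset.mem_Icc] at hb ⊢; omega))
      have hσi : σ i = i := Equiv.swap_apply_of_ne_of_ne hia hib
      show (P (σ i)).image (⇑σ) = ∅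
      rw [hσi, hsupp i hi, Finset.image_empty]
    · intro i j hij
      exact Finset.disjoint_image hinj |>.mpr (hdisj (σ i) (σ j) (fun h => hij (hinj h)))
    · ext x
      simp only [Finset.mem_biUnion, Finset.mem_image]
      constructor
      · rintro ⟨i, hi, y, hy, rfl⟩
        exact hGσ y (blocks_subset ⟨hsupp, hdisj, hbU, hcard⟩ (σ i) hy)
      · intro hx
        have : σ x ∈ G := hGσ x hx
        rw [← hbU] at this
        obtain ⟨j0, hj0, hxj0⟩ := Finset.mem_biUnion.mp this
        refine ⟨σ j0, ?_, σ x, ?_, ?_⟩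
        · exact swap_mem_Icc1 ha hb hj0
        · rwa [Equiv.swap_apply_self]
        · exact Equiv.swap_apply_self a b x
    · intro i hi
      show ((P (σ i)).image (⇑σ)).card = m i
      rw [Finset.card_image_of_injective _ hinj]
      have := hcard (σ i) (swap_mem_Icc1 ha hb hi)
      simp only at this
      rw [this, hσ, Equiv.swap_apply_self]
  refine ⟨hOP', ?_⟩
  rw [isReachSet_full_iff hk]
  intro F h1F hcl
  have hclP : ArcClosed k P (F.image (⇑σ)) := by
    intro i' hi' j' hj' h2 hjk
    obtain ⟨c, hc, rfl⟩ := Finset.mem_image.mp hi'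
    have hσj' : σ j' ∈ (P (σ c)).image σ := Finset.mem_image_of_mem _ hj'
    have hbnd : σ j' ∈ Finset.Icc 2 k := swap_mem_Icc2 ha hb (Finset.mem_Icc.mpr ⟨h2, hjk⟩)
    rw [Finset.mem_Icc] at hbnd
    have := hcl c hc (σ j') hσj' hbnd.1 hbnd.2
    have : j' = σ (σ j') := (Equiv.swap_apply_self _ _ _).symm
    rw [this]
    exact Finset.mem_image_of_mem _ (hcl c hc (σ j') hσj' hbnd.1 hbnd.2)
  have h1F' : (1 : ℕ) ∈ F.image (⇑σ) := by
    have : (1 : ℕ) = σ 1 := (swap_one ha hb).symm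
    rw [this]
    exact Finset.mem_image_of_mem _ h1F
  have hsub := hR.2.2 (F.image (⇑σ)) h1F' hclP
  intro x hx
  have : σ x ∈ F.image (⇑σ) := hsub (swap_mem_Icc1 ha hb hx)
  obtain ⟨y, hy, hyx⟩ := Finset.mem_image.mp this
  have : y = x := hinj (by rwa [hσ] at hyx)
  rwa [← this]

lemma swap_ncard (hk : 1 ≤ k) (ha : a ∈ Finset.Icc 2 k) (hb : b ∈ Finset.Icc 2 k)
    (haG : a ∈ G) (hbG : b ∈ G) (m : ℕ → ℕ) :
    (Sol k m G).ncard = (Sol k (fun i => m (Equiv.swap a b i)) G).ncard := by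
  classical
  set σ := Equiv.swap a b with hσ
  set Ψ : (ℕ → Finset ℕ) → (ℕ → Finset ℕ) := fun P i => (P (σ i)).image σ with hΨ
  have hcomp : (⇑σ ∘ ⇑σ) = id := funext (Equiv.swap_apply_self a b)
  have hinv : Function.Involutive Ψ := by
    intro P
    funext i
    simp only [hΨ]
    rw [Equiv.swap_apply_self, Finset.image_image, hcomp, Finset.image_id]
  have himg : Ψ '' (Sol k (fun i => m (σ i)) G) = Sol k m G := by
    apply Set.eq_of_subset_of_subset
    · rintro _ ⟨P, hP, rfl⟩
      exact swap_maps hk ha hb haG hbG m P hP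
    · intro P hP
      have hP' : P ∈ Sol k (fun i => (fun j => m (σ j)) (σ i)) G := by
        have : (fun i => (fun j => m (σ j)) (σ i)) = m := by
          funext i; simp only [hσ, Equiv.swap_apply_self]
        rwa [this]
      have := swap_maps hk ha hb haG hbG (fun j => m (σ j)) P hP'
      exact ⟨Ψ P, this, hinv P⟩
  rw [← himg, Set.ncard_image_of_injective _ hinv.injective]

end Swap

lemma op_finite (k : ℕ) (m : ℕ → ℕ) (G : Finset ℕ) :
    {P : ℕ → Finset ℕ | OP k m G P}.Finite := by
  classical
  set f : (ℕ → Finset ℕ) → ((Finset.Icc 1 k : Finset ℕ) → {A : Finset ℕ // A ⊆ G}) :=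
    fun P i => ⟨P i ∩ G, Finset.inter_subset_right⟩ with hf
  have : Fintype {A : Finset ℕ // A ⊆ G} := by
    apply Fintype.ofInjective
      (fun A : {A : Finset ℕ // A ⊆ G} =>
        (⟨A.1, Finset.mem_powerset.mpr A.2⟩ : (G.powerset : Finset (Finset ℕ))))
    intro a b h
    simpa [Subtype.ext_iff] using h
  apply Set.Finite.of_finite_image (f := f) (Set.toFinite _)
  intro P hP Q hQ hPQ
  funext i
  by_cases hi : i ∈ Finset.Icc 1 k
  · have hP' : P i ∩ G = P i := Finset.inter_eq_left.mpr (blocks_subset hP i)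
    have hQ' : Q i ∩ G = Q i := Finset.inter_eq_left.mpr (blocks_subset hQ i)
    have := congrFun hPQ ⟨i, hi⟩
    simp only [hf, Subtype.mk.injEq] at this
    rw [← hP', ← hQ', this]
  · rw [hP.1 i hi, hQ.1 i hi]

lemma sol_finite (k : ℕ) (m : ℕ → ℕ) (G : Finset ℕ) : (Sol k m G).Finite :=
  (op_finite k m G).subset (fun _ hP => hP.1)

lemma ncard_fiberwise {α ι : Type*} {S : Set α} (hS : S.Finite) (A : Finset ι) (f : α → ι)
    (hf : ∀ a ∈ S, f a ∈ A) :
    S.ncard = ∑ i ∈ A, {a | a ∈ S ∧ f a = i}.ncard := by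
  classical
  have h1 : S.ncard = hS.toFinset.card := Set.ncard_eq_toFinset_card S hS
  rw [h1, Finset.card_eq_sum_card_fiberwise (f := f) (t := A)
    (by intro x hx; exact hf x (hS.mem_toFinset.mp hx))]
  apply Finset.sum_congr rfl
  intro i _
  have : {a | a ∈ S ∧ f a = i} = ↑(hS.toFinset.filter (fun a => f a = i)) := by
    ext a; simp [hS.mem_toFinset]
  rw [this, Set.ncard_coe_finset]

lemma Icc_erase_one (k : ℕ) : (Finset.Icc 1 k).erase 1 = Finset.Icc 2 k := by
  ext x
  rw [Finset.mem_erase, Finset.mem_Icc, Finset.mem_Icc]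
  omega

lemma sum_shift {K i : ℕ} (hi : i ∈ Finset.Icc 1 K) (m : ℕ → ℕ) (hmi : 1 ≤ m i) :
    ∑ j ∈ Finset.Icc 1 K, (if j = i then m i - 1 else m j)
      = (∑ j ∈ Finset.Icc 1 K, m j) - 1 := by
  rw [← Finset.add_sum_erase _ _ hi, ← Finset.add_sum_erase _ m hi]
  have he : ∑ j ∈ (Finset.Icc 1 K).erase i, (if j = i then m i - 1 else m j)
      = ∑ j ∈ (Finset.Icc 1 K).erase i, m j := by
    apply Finset.sum_congr rfl
    intro j hj
    rw [if_neg (Finset.ne_of_mem_erase hj)]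
  rw [he, if_pos rfl]
  omega

lemma prod_factorial_shift {K i : ℕ} (hi : i ∈ Finset.Icc 2 K) (m : ℕ → ℕ) (hmi : 1 ≤ m i) :
    ∏ j ∈ Finset.Icc 2 K, (m j).factorial
      = m i * ∏ j ∈ Finset.Icc 2 K, (if j = i then m i - 1 else m j).factorial := by
  rw [← Finset.mul_prod_erase _ (fun j => (m j).factorial) hi,
    ← Finset.mul_prod_erase _ (fun j => (if j = i then m i - 1 else m j).factorial) hi]
  have he : ∏ j ∈ (Finset.Icc 2 K).erase i, (if j = i then m i - 1 else m j).factorial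
      = ∏ j ∈ (Finset.Icc 2 K).erase i, (m j).factorial := by
    apply Finset.prod_congr rfl
    intro j hj
    rw [if_neg (Finset.ne_of_mem_erase hj)]
  rw [he]
  simp only [if_pos rfl]
  rw [← mul_assoc]
  congr 1
  exact (Nat.mul_factorial_pred (Nat.one_le_iff_ne_zero.mp hmi)).symm

lemma fact_pred {n : ℕ} (hn : 2 ≤ n) : (n - 1).factorial = (n - 1) * (n - 2).factorial := by
  have h1 : n - 2 = n - 1 - 1 := by omega
  rw [h1]
  exact (Nat.mul_factorial_pred (by omega)).symm

lemma Icc_one_insert_top {k : ℕ} (hk : 1 ≤ k) :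
    Finset.Icc 1 k = insert k (Finset.Icc 1 (k - 1)) := by
  ext x
  rw [Finset.mem_insert, Finset.mem_Icc, Finset.mem_Icc]
  omega

lemma Icc_two_insert_top {k : ℕ} (hk : 2 ≤ k) :
    Finset.Icc 2 k = insert k (Finset.Icc 2 (k - 1)) := by
  ext x
  rw [Finset.mem_insert, Finset.mem_Icc, Finset.mem_Icc]
  omega

lemma prod_drop_top {k : ℕ} (hk : 2 ≤ k) (m : ℕ → ℕ) (hmk : m k = 0) :
    ∏ j ∈ Finset.Icc 2 k, (m j).factorial = ∏ j ∈ Finset.Icc 2 (k - 1), (m j).factorial := by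
  rw [Icc_two_insert_top hk, Finset.prod_insert (by rw [Finset.mem_Icc]; omega), hmk]
  simp [Nat.factorial]

lemma sum_drop_top {k : ℕ} (hk : 1 ≤ k) (m : ℕ → ℕ) (hmk : m k = 0) :
    ∑ j ∈ Finset.Icc 1 k, m j = ∑ j ∈ Finset.Icc 1 (k - 1), m j := by
  rw [Icc_one_insert_top hk, Finset.sum_insert (by rw [Finset.mem_Icc]; omega), hmk]
  omega

lemma tree_step {k s : ℕ} (hk : 3 ≤ k) (m : ℕ → ℕ) (G : Finset ℕ)
    (hm1 : 1 ≤ m 1) (hmk : m k = 0) (hsub : Finset.Icc 2 k ⊆ G) (hGcard : G.card = s)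
    (hs : s = k - 1) (hsum : s = ∑ i ∈ Finset.Icc 1 k, m i)
    (IH : ∀ s' : ℕ, s' < s → ∀ (k' : ℕ) (m' : ℕ → ℕ) (G' : Finset ℕ),
      1 ≤ k' → 1 ≤ m' 1 → Finset.Icc 2 k' ⊆ G' → G'.card = s' →
      s' = ∑ i ∈ Finset.Icc 1 k', m' i →
      (Sol k' m' G').ncard * ((m' 1 - 1).factorial * ∏ i ∈ Finset.Icc 2 k', (m' i).factorial)
        = (s' - 1).factorial) :
    (Sol k m G).ncard * ((m 1 - 1).factorial * ∏ i ∈ Finset.Icc 2 k, (m i).factorial)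
      = (s - 1).factorial := by
  classical
  have hk2 : 2 ≤ k := by omega
  have hk1 : 1 ≤ k := by omega
  have hs2 : 2 ≤ s := by omega
  have hkG : k ∈ G := hsub (Finset.mem_Icc.mpr ⟨hk2, le_rfl⟩)
  have hfin := sol_finite k m G
  have hsum1 : ∑ j ∈ Finset.Icc 1 (k - 1), m j = s := by
    rw [hsum, sum_drop_top hk1 m hmk]
  set f : (ℕ → Finset ℕ) → ℕ :=
    fun P => if h : ∃ i, i ∈ Finset.Icc 1 (k - 1) ∧ k ∈ P i then h.choose else 0 with hf
  have hexists : ∀ P ∈ Sol k m G, ∃ i, i ∈ Finset.Icc 1 (k - 1) ∧ k ∈ P i := by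
    intro P hP
    have hbU := hP.1.2.2.1
    have hkbU : k ∈ (Finset.Icc 1 k).biUnion P := by rw [hbU]; exact hkG
    obtain ⟨i, hi, hki⟩ := Finset.mem_biUnion.mp hkbU
    have hPk : P k = ∅ := Pk_empty hk1 hP.1 hmk
    have hik : i ≠ k := by
      rintro rfl; rw [hPk] at hki; exact Finset.notMem_empty _ hki
    rw [Finset.mem_Icc] at hi
    exact ⟨i, Finset.mem_Icc.mpr ⟨hi.1, by omega⟩, hki⟩
  have hfmem : ∀ P ∈ Sol k m G, f P ∈ Finset.Icc 1 (k - 1) ∧ k ∈ P (f P) := by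
    intro P hP
    have hex := hexists P hP
    simp only [hf, dif_pos hex]
    exact hex.choose_spec
  have hfeq : ∀ P ∈ Sol k m G, ∀ i ∈ Finset.Icc 1 (k - 1), k ∈ P i → f P = i := by
    intro P hP i hi hki
    by_contra hne
    exact (Finset.disjoint_left.mp (hP.1.2.1 (f P) i hne) (hfmem P hP).2) hki
  rw [ncard_fiberwise hfin (Finset.Icc 1 (k - 1)) f (fun P hP => (hfmem P hP).1),
    Finset.sum_mul]
  have hterm : ∀ i ∈ Finset.Icc 1 (k - 1),
      {a | a ∈ Sol k m G ∧ f a = i}.ncard *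
        ((m 1 - 1).factorial * ∏ j ∈ Finset.Icc 2 k, (m j).factorial)
      = (if i = 1 then m 1 - 1 else m i) * (s - 2).factorial := by
    intro i hi
    have hclass : {a | a ∈ Sol k m G ∧ f a = i} = {P | P ∈ Sol k m G ∧ k ∈ P i} := by
      ext P
      constructor
      · rintro ⟨hP, rfl⟩; exact ⟨hP, (hfmem P hP).2⟩
      · rintro ⟨hP, hki⟩; exact ⟨hP, hfeq P hP i hi hki⟩
    rw [hclass]
    by_cases hmi : 1 ≤ m i
    · rw [classB hk2 hkG hi hmi hmk]
      by_cases h1 : i = 1 ∧ m 1 = 1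
      · obtain ⟨rfl, hm11⟩ := h1
        rw [sol_empty (by omega : 2 ≤ k - 1)
          (by simp [hm11] : (fun j => if j = 1 then m 1 - 1 else m j) 1 = 0),
          Set.ncard_empty, zero_mul, if_pos rfl, hm11]
        simp
      · set m' : ℕ → ℕ := fun j => if j = i then m i - 1 else m j with hm'
        have hm'1 : 1 ≤ m' 1 := by
          by_cases hi1 : i = 1
          · subst hi1
            have hne : m 1 ≠ 1 := fun h => h1 ⟨rfl, h⟩
            simp only [hm', if_pos rfl]
            omega
          · simp only [hm']
            rw [if_neg (fun h => hi1 h.symm)]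
            exact hm1
        have hsub' : Finset.Icc 2 (k - 1) ⊆ G.erase k := by
          intro x hx
          rw [Finset.mem_Icc] at hx
          exact Finset.mem_erase.mpr ⟨by omega, hsub (Finset.mem_Icc.mpr ⟨hx.1, by omega⟩)⟩
        have hcard' : (G.erase k).card = s - 1 := by
          rw [Finset.card_erase_of_mem hkG, hGcard]
        have hsum' : s - 1 = ∑ j ∈ Finset.Icc 1 (k - 1), m' j := by
          have hi' : i ∈ Finset.Icc 1 (k - 1) := hi
          rw [hm', sum_shift hi' m hmi, hsum1]
        have hIH := IH (s - 1) (by omega) (k - 1) m' (G.erase k) (by omega) hm'1 hsub'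
          hcard' hsum'
        have hss : s - 1 - 1 = s - 2 := by omega
        rw [hss] at hIH
        have hD : (m 1 - 1).factorial * ∏ j ∈ Finset.Icc 2 k, (m j).factorial
            = (if i = 1 then m 1 - 1 else m i) *
              ((m' 1 - 1).factorial * ∏ j ∈ Finset.Icc 2 (k - 1), (m' j).factorial) := by
          rw [prod_drop_top hk2 m hmk]
          by_cases hi1 : i = 1
          · subst hi1
            have hm12 : 2 ≤ m 1 := by
              have : m 1 ≠ 1 := fun h => h1 ⟨rfl, h⟩
              omega
            have hPP : ∏ j ∈ Finset.Icc 2 (k - 1), (m' j).factorial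
                = ∏ j ∈ Finset.Icc 2 (k - 1), (m j).factorial := by
              apply Finset.prod_congr rfl
              intro j hj
              rw [Finset.mem_Icc] at hj
              simp only [hm']
              rw [if_neg (by omega)]
            have hm'1v : m' 1 - 1 = m 1 - 2 := by
              simp only [hm', if_pos rfl]; omega
            rw [hPP, if_pos rfl, hm'1v, fact_pred hm12]
            ring
          · have hiI : i ∈ Finset.Icc 2 (k - 1) := by
              rw [Finset.mem_Icc] at hi ⊢
              omega
            have hm'1v : m' 1 = m 1 := by
              simp only [hm']
              rw [if_neg (fun h => hi1 h.symm)]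
            rw [if_neg hi1, hm'1v, prod_factorial_shift hiI m hmi]
            ring
        rw [hD, mul_left_comm, hIH]
    · have hempty : {P | P ∈ Sol k m G ∧ k ∈ P i} = ∅ := by
        ext P
        simp only [Set.mem_setOf_eq, Set.mem_empty_iff_false, iff_false, not_and]
        intro hP hki
        have hi' : i ∈ Finset.Icc 1 k := by
          rw [Finset.mem_Icc] at hi ⊢; omega
        have hcard0 := hP.1.2.2.2 i hi'
        have hPi : P i = ∅ := Finset.card_eq_zero.mp (by omega)
        rw [hPi] at hki; exact Finset.notMem_empty _ hki
      rw [hempty, Set.ncard_empty, zero_mul]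
      have hi1 : i ≠ 1 := by
        rintro rfl; omega
      rw [if_neg hi1]
      have : m i = 0 := by omega
      rw [this, zero_mul]
  rw [Finset.sum_congr rfl hterm, ← Finset.sum_mul]
  have h1mem : (1 : ℕ) ∈ Finset.Icc 1 (k - 1) := Finset.mem_Icc.mpr ⟨le_rfl, by omega⟩
  have hcs : ∑ i ∈ Finset.Icc 1 (k - 1), (if i = 1 then m 1 - 1 else m i) = s - 1 := by
    rw [sum_shift h1mem m hm1, hsum1]
  rw [hcs]
  exact (fact_pred hs2).symm

lemma map_swap_self {a b : ℕ} {A : Finset ℕ} (ha : a ∈ A) (hb : b ∈ A) :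
    A.map (Equiv.swap a b).toEmbedding = A := by
  classical
  have hstep : ∀ x ∈ A, Equiv.swap a b x ∈ A := by
    intro x hx
    rcases eq_or_ne x a with rfl | hxa
    · rwa [Equiv.swap_apply_left]
    rcases eq_or_ne x b with rfl | hxb
    · rwa [Equiv.swap_apply_right]
    · rwa [Equiv.swap_apply_of_ne_of_ne hxa hxb]
  ext x
  simp only [Finset.mem_map, Equiv.coe_toEmbedding]
  constructor
  · rintro ⟨y, hy, rfl⟩
    exact hstep y hy
  · intro hx
    exact ⟨Equiv.swap a b x, hstep x hx, Equiv.swap_apply_self a b x⟩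

lemma prod_swap_reindex {a b : ℕ} {A : Finset ℕ} (ha : a ∈ A) (hb : b ∈ A) (g : ℕ → ℕ) :
    ∏ i ∈ A, g (Equiv.swap a b i) = ∏ i ∈ A, g i := by
  conv_rhs => rw [← map_swap_self ha hb]
  rw [Finset.prod_map]
  rfl

lemma sum_swap_reindex {a b : ℕ} {A : Finset ℕ} (ha : a ∈ A) (hb : b ∈ A) (g : ℕ → ℕ) :
    ∑ i ∈ A, g (Equiv.swap a b i) = ∑ i ∈ A, g i := by
  conv_rhs => rw [← map_swap_self ha hb]
  rw [Finset.sum_map]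
  rfl

theorem gen : ∀ s : ℕ, ∀ (k : ℕ) (m : ℕ → ℕ) (G : Finset ℕ),
    1 ≤ k → 1 ≤ m 1 → Finset.Icc 2 k ⊆ G → G.card = s →
    s = ∑ i ∈ Finset.Icc 1 k, m i →
    (Sol k m G).ncard * ((m 1 - 1).factorial * ∏ i ∈ Finset.Icc 2 k, (m i).factorial)
      = (s - 1).factorial := by
  intro s
  induction s using Nat.strong_induction_on with
  | _ s IH =>
  intro k m G hk hm1 hsub hGcard hsum
  classical
  rcases Nat.lt_or_ge k 2 with hk2 | hk2
  · -- k = 1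
    have hk1 : k = 1 := by omega
    subst hk1
    have hIcc : Finset.Icc 1 1 = {1} := Finset.Icc_self 1
    have hs1 : s = m 1 := by rw [hsum, hIcc, Finset.sum_singleton]
    have hSol : Sol 1 m G = {fun j => if j = 1 then G else ∅} := by
      apply Set.eq_of_subset_of_subset
      · rintro P ⟨⟨hsupp, hdisj, hbU, hcardP⟩, hR⟩
        simp only [Set.mem_singleton_iff]
        funext j
        by_cases hj : j = 1
        · subst hj
          rw [if_pos rfl, ← hbU, hIcc, Finset.singleton_biUnion]
        · rw [if_neg hj]
          apply hsupp
          rw [hIcc, Finset.mem_singleton]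
          exact hj
      · intro P hP
        rw [Set.mem_singleton_iff] at hP
        subst hP
        refine ⟨⟨?_, ?_, ?_, ?_⟩, ?_⟩
        · intro i hi
          rw [hIcc, Finset.mem_singleton] at hi
          show (if i = 1 then G else ∅) = ∅
          rw [if_neg hi]
        · intro i j hij
          show Disjoint (if i = 1 then G else ∅) (if j = 1 then G else ∅)
          by_cases hi : i = 1
          · have hj : j ≠ 1 := fun h => hij (hi.trans h.symm)
            rw [if_neg hj]
            exact Finset.disjoint_empty_right _
          · rw [if_neg hi]
            exact Finset.disjoint_empty_left _
        · rw [hIcc, Finset.singleton_biUnion]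
          show (if (1:ℕ) = 1 then G else ∅) = G
          rw [if_pos rfl]
        · intro i hi
          rw [hIcc, Finset.mem_singleton] at hi
          subst hi
          show (if (1:ℕ) = 1 then G else ∅).card = m 1
          rw [if_pos rfl, hGcard, hs1]
        · rw [isReachSet_full_iff le_rfl]
          intro F h1F _
          intro x hx
          rw [hIcc, Finset.mem_singleton] at hx
          subst hx
          exact h1F
    rw [hSol, Set.ncard_singleton, one_mul]
    have hIcc2 : Finset.Icc 2 1 = ∅ := Finset.Icc_eq_empty (by omega)
    rw [hIcc2, Finset.prod_empty, mul_one, hs1]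
  · -- k ≥ 2
    have hk1 : 1 ≤ k := by omega
    have hcard2k : (Finset.Icc 2 k).card = k - 1 := by
      rw [Nat.card_Icc]
      omega
    have hsk1 : k - 1 ≤ s := by
      have := Finset.card_le_card hsub
      omega
    rcases Nat.lt_or_ge s k with hsk | hsk
    · -- s = k - 1 : tree case
      have hs : s = k - 1 := by omega
      rcases Nat.lt_or_ge k 3 with hk3 | hk3
      · -- k = 2 base case
        have hk2' : k = 2 := by omega
        subst hk2'
        have hs1 : s = 1 := by omega
        have hm2 : m 2 = 0 := by
          have : s = m 1 + m 2 := by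
            rw [hsum]
            have : Finset.Icc 1 2 = {1, 2} := by decide
            rw [this, Finset.sum_insert (by decide), Finset.sum_singleton]
          omega
        have hm11 : m 1 = 1 := by
          have : s = m 1 + m 2 := by
            rw [hsum]
            have : Finset.Icc 1 2 = {1, 2} := by decide
            rw [this, Finset.sum_insert (by decide), Finset.sum_singleton]
          omega
        have hG2 : G = {2} := by
          have h22 : Finset.Icc 2 2 = {2} := Finset.Icc_self 2
          have : Finset.Icc 2 2 = G := by
            apply Finset.eq_of_subset_of_card_le hsub
            rw [hGcard, hcard2k]
            omega
          rw [← this, h22]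
        subst hG2
        have hI12 : Finset.Icc 1 2 = {1, 2} := by decide
        have hSol : Sol 2 m {2} = {fun j => if j = 1 then ({2} : Finset ℕ) else ∅} := by
          apply Set.eq_of_subset_of_subset
          · rintro P ⟨⟨hsupp, hdisj, hbU, hcardP⟩, hR⟩
            simp only [Set.mem_singleton_iff]
            have hP2 : P 2 = ∅ := by
              have := hcardP 2 (by decide)
              rw [hm2] at this
              exact Finset.card_eq_zero.mp this
            have hP1 : P 1 = {2} := by
              rw [hI12] at hbU
              rw [Finset.biUnion_insert, Finset.singleton_biUnion, hP2,
                Finset.union_empty] at hbU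
              exact hbU
            funext j
            by_cases hj1 : j = 1
            · subst hj1; rw [if_pos rfl, hP1]
            · rw [if_neg hj1]
              by_cases hj2 : j = 2
              · subst hj2; exact hP2
              · apply hsupp
                rw [hI12]
                simp [hj1, hj2]
          · intro P hP
            rw [Set.mem_singleton_iff] at hP
            subst hP
            refine ⟨⟨?_, ?_, ?_, ?_⟩, ?_⟩
            · intro i hi
              have hine : i ≠ 1 := by
                intro h; subst h; exact hi (by decide)
              show (if i = 1 then ({2} : Finset ℕ) else ∅) = ∅
              rw [if_neg hine]
            · intro i j hij
              show Disjoint (if i = 1 then ({2} : Finset ℕ) else ∅)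
                (if j = 1 then ({2} : Finset ℕ) else ∅)
              by_cases hi : i = 1
              · have hj : j ≠ 1 := fun h => hij (hi.trans h.symm)
                rw [if_neg hj]
                exact Finset.disjoint_empty_right _
              · rw [if_neg hi]
                exact Finset.disjoint_empty_left _
            · rw [hI12, Finset.biUnion_insert, Finset.singleton_biUnion]
              simp
            · intro i hi
              rw [hI12] at hi
              rcases Finset.mem_insert.mp hi with h1 | h2
              · subst h1
                show (if (1:ℕ) = 1 then ({2} : Finset ℕ) else ∅).card = m 1
                rw [if_pos rfl, Finset.card_singleton, hm11]
              · rw [Finset.mem_singleton] at h2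
                subst h2
                show (if (2:ℕ) = 1 then ({2} : Finset ℕ) else ∅).card = m 2
                rw [if_neg (by norm_num), Finset.card_empty, hm2]
            · rw [isReachSet_full_iff (by norm_num)]
              intro F h1F hcl
              have h2F : (2 : ℕ) ∈ F := by
                refine hcl 1 h1F 2 ?_ le_rfl le_rfl
                show (2 : ℕ) ∈ (if (1:ℕ) = 1 then ({2} : Finset ℕ) else ∅)
                rw [if_pos rfl]
                exact Finset.mem_singleton_self 2
              intro x hx
              rw [Finset.mem_Icc] at hx
              obtain ⟨hx1, hx2⟩ := hx
              interval_cases x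
              · exact h1F
              · exact h2F
        rw [hSol, Set.ncard_singleton, one_mul, hs1, hm11]
        have h22 : Finset.Icc 2 2 = {2} := Finset.Icc_self 2
        rw [h22, Finset.prod_singleton, hm2]
        simp
      · -- k ≥ 3 : tree case, possibly after a swap
        by_cases hmk : m k = 0
        · exact tree_step hk3 m G hm1 hmk hsub hGcard hs hsum IH
        · -- find b with m b = 0 and swap
          have hkIcc : k ∈ Finset.Icc 2 k := Finset.mem_Icc.mpr ⟨hk2, le_rfl⟩
          have hsplit : ∑ i ∈ Finset.Icc 1 k, m i = m 1 + ∑ i ∈ Finset.Icc 2 k, m i := by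
            rw [← Finset.add_sum_erase _ m (Finset.mem_Icc.mpr ⟨le_rfl, hk1⟩), Icc_erase_one]
          obtain ⟨b, hbIcc, hmb⟩ : ∃ b ∈ Finset.Icc 2 k, m b = 0 := by
            by_contra hcon
            push_neg at hcon
            have hge : ∀ i ∈ Finset.Icc 2 k, 1 ≤ m i := by
              intro i hi
              have := hcon i hi
              omega
            have : (Finset.Icc 2 k).card ≤ ∑ i ∈ Finset.Icc 2 k, m i := by
              calc (Finset.Icc 2 k).card = ∑ _i ∈ Finset.Icc 2 k, 1 := by
                    rw [Finset.sum_const, smul_eq_mul, mul_one]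
                _ ≤ ∑ i ∈ Finset.Icc 2 k, m i := Finset.sum_le_sum hge
            omega
          have hbG : b ∈ G := hsub hbIcc
          have hkG : k ∈ G := hsub hkIcc
          rw [swap_ncard hk1 hbIcc hkIcc hbG hkG m]
          set M : ℕ → ℕ := fun i => m (Equiv.swap b k i) with hM
          have hM1 : M 1 = m 1 := by
            simp only [hM]
            rw [swap_one hbIcc hkIcc]
          have hMk : M k = 0 := by
            simp only [hM]
            rw [Equiv.swap_apply_right]
            exact hmb
          have hMsum : s = ∑ i ∈ Finset.Icc 1 k, M i := by
            rw [hsum]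
            have h1b : b ∈ Finset.Icc 1 k := by
              rw [Finset.mem_Icc] at hbIcc ⊢; omega
            have h1k : k ∈ Finset.Icc 1 k := Finset.mem_Icc.mpr ⟨hk1, le_rfl⟩
            exact (sum_swap_reindex h1b h1k m).symm
          have hMprod : ∏ i ∈ Finset.Icc 2 k, (M i).factorial
              = ∏ i ∈ Finset.Icc 2 k, (m i).factorial := by
            exact prod_swap_reindex hbIcc hkIcc (fun i => (m i).factorial)
          have htS := tree_step hk3 M G (by rw [hM1]; exact hm1) hMk hsub hGcard hs
            hMsum IH
          rw [hMprod, hM1] at htS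
          exact htS
    · -- s ≥ k : remove a plain element
      have hs2 : 2 ≤ s := by omega
      obtain ⟨g, hgG, hgI⟩ : ∃ g ∈ G, g ∉ Finset.Icc 2 k := by
        by_contra hcon
        push_neg at hcon
        have : G ⊆ Finset.Icc 2 k := hcon
        have := Finset.card_le_card this
        omega
      have hfin := sol_finite k m G
      set f : (ℕ → Finset ℕ) → ℕ :=
        fun P => if h : ∃ i, i ∈ Finset.Icc 1 k ∧ g ∈ P i then h.choose else 0 with hf
      have hexists : ∀ P ∈ Sol k m G, ∃ i, i ∈ Finset.Icc 1 k ∧ g ∈ P i := by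
        intro P hP
        have hbU := hP.1.2.2.1
        have hgbU : g ∈ (Finset.Icc 1 k).biUnion P := by rw [hbU]; exact hgG
        obtain ⟨i, hi, hgi⟩ := Finset.mem_biUnion.mp hgbU
        exact ⟨i, hi, hgi⟩
      have hfmem : ∀ P ∈ Sol k m G, f P ∈ Finset.Icc 1 k ∧ g ∈ P (f P) := by
        intro P hP
        have hex := hexists P hP
        simp only [hf, dif_pos hex]
        exact hex.choose_spec
      have hfeq : ∀ P ∈ Sol k m G, ∀ i ∈ Finset.Icc 1 k, g ∈ P i → f P = i := by
        intro P hP i hi hgi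
        by_contra hne
        exact (Finset.disjoint_left.mp (hP.1.2.1 (f P) i hne) (hfmem P hP).2) hgi
      rw [ncard_fiberwise hfin (Finset.Icc 1 k) f (fun P hP => (hfmem P hP).1),
        Finset.sum_mul]
      have hterm : ∀ i ∈ Finset.Icc 1 k,
          {a | a ∈ Sol k m G ∧ f a = i}.ncard *
            ((m 1 - 1).factorial * ∏ j ∈ Finset.Icc 2 k, (m j).factorial)
          = (if i = 1 then m 1 - 1 else m i) * (s - 2).factorial := by
        intro i hi
        have hclass : {a | a ∈ Sol k m G ∧ f a = i} = {P | P ∈ Sol k m G ∧ g ∈ P i} := by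
          ext P
          constructor
          · rintro ⟨hP, rfl⟩; exact ⟨hP, (hfmem P hP).2⟩
          · rintro ⟨hP, hgi⟩; exact ⟨hP, hfeq P hP i hi hgi⟩
        rw [hclass]
        by_cases hmi : 1 ≤ m i
        · rw [classA hk1 hgG hgI hi hmi]
          by_cases h1 : i = 1 ∧ m 1 = 1
          · obtain ⟨rfl, hm11⟩ := h1
            rw [sol_empty hk2
              (by simp [hm11] : (fun j => if j = 1 then m 1 - 1 else m j) 1 = 0),
              Set.ncard_empty, zero_mul, if_pos rfl, hm11]
            simp
          · set m' : ℕ → ℕ := fun j => if j = i then m i - 1 else m j with hm'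
            have hm'1 : 1 ≤ m' 1 := by
              by_cases hi1 : i = 1
              · subst hi1
                have hne : m 1 ≠ 1 := fun h => h1 ⟨rfl, h⟩
                simp only [hm', if_pos rfl]
                omega
              · simp only [hm']
                rw [if_neg (fun h => hi1 h.symm)]
                exact hm1
            have hsub' : Finset.Icc 2 k ⊆ G.erase g := by
              intro x hx
              refine Finset.mem_erase.mpr ⟨?_, hsub hx⟩
              intro he; subst he; exact hgI hx
            have hcard' : (G.erase g).card = s - 1 := by
              rw [Finset.card_erase_of_mem hgG, hGcard]
            have hsum' : s - 1 = ∑ j ∈ Finset.Icc 1 k, m' j := by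
              rw [hm', sum_shift hi m hmi, ← hsum]
            have hIH := IH (s - 1) (by omega) k m' (G.erase g) hk1 hm'1 hsub'
              hcard' hsum'
            have hss : s - 1 - 1 = s - 2 := by omega
            rw [hss] at hIH
            have hD : (m 1 - 1).factorial * ∏ j ∈ Finset.Icc 2 k, (m j).factorial
                = (if i = 1 then m 1 - 1 else m i) *
                  ((m' 1 - 1).factorial * ∏ j ∈ Finset.Icc 2 k, (m' j).factorial) := by
              by_cases hi1 : i = 1
              · subst hi1
                have hm12 : 2 ≤ m 1 := by
                  have : m 1 ≠ 1 := fun h => h1 ⟨rfl, h⟩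
                  omega
                have hPP : ∏ j ∈ Finset.Icc 2 k, (m' j).factorial
                    = ∏ j ∈ Finset.Icc 2 k, (m j).factorial := by
                  apply Finset.prod_congr rfl
                  intro j hj
                  rw [Finset.mem_Icc] at hj
                  simp only [hm']
                  rw [if_neg (by omega)]
                have hm'1v : m' 1 - 1 = m 1 - 2 := by
                  simp only [hm', if_pos rfl]; omega
                rw [hPP, if_pos rfl, hm'1v, fact_pred hm12]
                ring
              · have hiI : i ∈ Finset.Icc 2 k := by
                  rw [Finset.mem_Icc] at hi ⊢
                  omega
                have hm'1v : m' 1 = m 1 := by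
                  simp only [hm']
                  rw [if_neg (fun h => hi1 h.symm)]
                rw [if_neg hi1, hm'1v, prod_factorial_shift hiI m hmi]
                ring
            rw [hD, mul_left_comm, hIH]
        · have hempty : {P | P ∈ Sol k m G ∧ g ∈ P i} = ∅ := by
            ext P
            simp only [Set.mem_setOf_eq, Set.mem_empty_iff_false, iff_false, not_and]
            intro hP hgi
            have hcard0 := hP.1.2.2.2 i hi
            have hPi : P i = ∅ := Finset.card_eq_zero.mp (by omega)
            rw [hPi] at hgi
            exact Finset.notMem_empty _ hgi
          rw [hempty, Set.ncard_empty, zero_mul]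
          have hi1 : i ≠ 1 := by
            rintro rfl; omega
          rw [if_neg hi1]
          have : m i = 0 := by omega
          rw [this, zero_mul]
      rw [Finset.sum_congr rfl hterm, ← Finset.sum_mul]
      have h1mem : (1 : ℕ) ∈ Finset.Icc 1 k := Finset.mem_Icc.mpr ⟨le_rfl, hk1⟩
      have hcs : ∑ i ∈ Finset.Icc 1 k, (if i = 1 then m 1 - 1 else m i) = s - 1 := by
        rw [sum_shift h1mem m hm1, ← hsum]
      rw [hcs]
      exact (fact_pred hs2).symm

/-- **Proposition `prop:induction`.** For `k ≥ 1` and positive integers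
`m 1, …, m k` with `s = m 1 + ⋯ + m k`, the number of ordered partitions
`(P 1, …, P k)` of `{1, …, s}` of type `(m 1, …, m k)` whose reachable set
`R(P)` is the full index set `{1, …, k}` equals
`(s - 1)! / ((m 1 - 1)! ⋅ m 2 ! ⋯ m k !)`. -/
theorem count_partitions_full_reach
    (k : ℕ) (hk : 1 ≤ k) (m : ℕ → ℕ) (hm : ∀ i ∈ Finset.Icc 1 k, 0 < m i)
    (s : ℕ) (hs : s = ∑ i ∈ Finset.Icc 1 k, m i) :
    {P : ℕ → Finset ℕ |
        IsOrderedPartition k s m P ∧ IsReachSet k P (Finset.Icc 1 k)}.ncard =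
      (s - 1).factorial /
        ((m 1 - 1).factorial * ∏ i ∈ Finset.Icc 2 k, (m i).factorial) := by
  have hks : k ≤ s := by
    have : (Finset.Icc 1 k).card ≤ ∑ i ∈ Finset.Icc 1 k, m i := by
      calc (Finset.Icc 1 k).card = ∑ _i ∈ Finset.Icc 1 k, 1 := by
            rw [Finset.sum_const, smul_eq_mul, mul_one]
        _ ≤ ∑ i ∈ Finset.Icc 1 k, m i := Finset.sum_le_sum (fun i hi => hm i hi)
    rw [Nat.card_Icc] at this
    omega
  have hsub : Finset.Icc 2 k ⊆ Finset.Icc 1 s := by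
    intro x hx
    rw [Finset.mem_Icc] at hx ⊢
    omega
  have hGcard : (Finset.Icc 1 s).card = s := by
    rw [Nat.card_Icc]
    omega
  have hm1 : 1 ≤ m 1 := hm 1 (Finset.mem_Icc.mpr ⟨le_rfl, hk⟩)
  have hgen := gen s k m (Finset.Icc 1 s) hk hm1 hsub hGcard hs
  have hset : {P : ℕ → Finset ℕ |
      IsOrderedPartition k s m P ∧ IsReachSet k P (Finset.Icc 1 k)}
      = Sol k m (Finset.Icc 1 s) := rfl
  rw [hset]
  have hD : 0 < (m 1 - 1).factorial * ∏ i ∈ Finset.Icc 2 k, (m i).factorial :=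
    Nat.mul_pos (Nat.factorial_pos _)
      (Finset.prod_pos (fun i _ => Nat.factorial_pos _))
  exact (Nat.div_eq_of_eq_mul_left hD hgen.symm).symm
end

section
/- Let r ≥ 1 be an integer, m_1, …, m_r positive integers with s = m_1 + ⋯ + m_r, and let F ⊆ {1, …, r} be a subset with 1 ∈ F, with complement Fᶜ = {1,…,r} \ F. Then the number of ordered partitions (P_1, …, P_r) of {1, …, s} of type (m_1, …, m_r) whose reachable set R(P) equals F is exactly binom(s − r + 1, S(Fᶜ) − |Fᶜ|) · C(F) · C(Fᶜ). -/
namespace CPR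

/-- reachability to `1` by iterating `φ` -/
def Rch (φ : ℕ → ℕ) (j : ℕ) : Prop := ∃ k, φ^[k] j = 1

lemma rch_one (φ : ℕ → ℕ) : Rch φ 1 := ⟨0, rfl⟩

lemma rch_step {φ : ℕ → ℕ} {j : ℕ} (h : Rch φ (φ j)) : Rch φ j := by
  obtain ⟨k, hk⟩ := h
  exact ⟨k + 1, by rwa [Function.iterate_succ_apply]⟩

lemma rch_cases {φ : ℕ → ℕ} {j : ℕ} (h : Rch φ j) : j = 1 ∨ Rch φ (φ j) := by
  obtain ⟨k, hk⟩ := h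
  cases k with
  | zero => exact Or.inl hk
  | succ n => exact Or.inr ⟨n, by rwa [Function.iterate_succ_apply] at hk⟩

lemma rch_congr {φ φ' : ℕ → ℕ} {S : Set ℕ}
    (hagree : ∀ x ∈ S, x ≠ 1 → φ' x = φ x)
    (hclosed : ∀ x ∈ S, x ≠ 1 → φ x ∈ S) :
    ∀ j ∈ S, Rch φ j → Rch φ' j := by
  suffices H : ∀ k, ∀ j ∈ S, φ^[k] j = 1 → Rch φ' j by
    rintro j hj ⟨k, hk⟩; exact H k j hj hk
  intro k
  induction k with
  | zero => intro j _ hk; exact ⟨0, hk⟩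
  | succ n ih =>
    intro j hj hk
    by_cases hj1 : j = 1
    · exact ⟨0, hj1⟩
    · rw [Function.iterate_succ_apply] at hk
      have h2 := ih (φ j) (hclosed j hj hj1) hk
      rw [← hagree j hj hj1] at h2
      exact rch_step h2

lemma not_rch {φ : ℕ → ℕ} {C : Set ℕ} (hC : ∀ x ∈ C, φ x ∈ C) (h1 : (1 : ℕ) ∉ C) :
    ∀ j ∈ C, ¬ Rch φ j := by
  have H : ∀ k, ∀ j ∈ C, φ^[k] j ∈ C := by
    intro k
    induction k with
    | zero => exact fun j hj => hj
    | succ n ih => intro j hj; rw [Function.iterate_succ_apply]; exact ih _ (hC j hj)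
  rintro j hj ⟨k, hk⟩
  exact h1 (hk ▸ H k j hj)

lemma rch_last {φ : ℕ → ℕ} {C : Set ℕ}
    (hclosed : ∀ x ∈ C, x ≠ 1 → φ x ∈ C) :
    ∀ k, ∀ j ∈ C, j ≠ 1 → φ^[k] j = 1 → ∃ x ∈ C, x ≠ 1 ∧ φ x = 1 := by
  intro k
  induction k with
  | zero => intro j _ hj1 hk; exact absurd hk hj1
  | succ n ih =>
    intro j hj hj1 hk
    rw [Function.iterate_succ_apply] at hk
    by_cases h : φ j = 1
    · exact ⟨j, hj, hj1, h⟩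
    · exact ih (φ j) (hclosed j hj hj1) h hk

/-! multinomial helpers -/

lemma multinomial_erase_zero {G : Finset ℕ} {g : ℕ → ℕ} {j : ℕ} (hj : j ∈ G) (h0 : g j = 0) :
    Nat.multinomial G g = Nat.multinomial (G.erase j) g := by
  unfold Nat.multinomial
  rw [← Finset.add_sum_erase G g hj, ← Finset.mul_prod_erase G (fun i => (g i).factorial) hj, h0]
  simp

lemma multinomial_rec (G : Finset ℕ) (g : ℕ → ℕ) (h : 0 < ∑ i ∈ G, g i) :
    Nat.multinomial G g =
      ∑ i ∈ G.filter (fun i => 0 < g i), Nat.multinomial G (Function.update g i (g i - 1)) := by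
  classical
  have hpos : 0 < ∏ i ∈ G, (g i).factorial :=
    Finset.prod_pos fun i _ => Nat.factorial_pos _
  apply Nat.eq_of_mul_eq_mul_right hpos
  rw [mul_comm (Nat.multinomial G g), Nat.multinomial_spec]
  have term : ∀ i ∈ G.filter (fun i => 0 < g i),
      Nat.multinomial G (Function.update g i (g i - 1)) * ∏ j ∈ G, (g j).factorial
        = g i * ((∑ j ∈ G, g j) - 1).factorial := by
    intro i hi
    obtain ⟨hiG, hgi⟩ := Finset.mem_filter.mp hi
    have e1 : ∏ j ∈ G, (g j).factorial
        = g i * ∏ j ∈ G, ((Function.update g i (g i - 1)) j).factorial := by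
      rw [← Finset.mul_prod_erase G (fun j => (g j).factorial) hiG,
        ← Finset.mul_prod_erase G (fun j => ((Function.update g i (g i - 1)) j).factorial) hiG]
      have : ∏ j ∈ G.erase i, ((Function.update g i (g i - 1)) j).factorial
          = ∏ j ∈ G.erase i, (g j).factorial := by
        apply Finset.prod_congr rfl
        intro j hj
        rw [Function.update_of_ne (Finset.ne_of_mem_erase hj)]
      rw [this, Function.update_self, ← mul_assoc, Nat.mul_factorial_pred hgi.ne']
    have e2 : ∑ j ∈ G, (Function.update g i (g i - 1)) j = (∑ j ∈ G, g j) - 1 := by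
      rw [Finset.sum_update_of_mem hiG]
      have : ∑ j ∈ G, g j = g i + ∑ j ∈ G \ {i}, g j := by
        rw [← Finset.sum_update_of_mem hiG, Finset.sum_congr rfl]
        intro j hj
        rw [Function.update_eq_self]
      omega
    calc Nat.multinomial G (Function.update g i (g i - 1)) * ∏ j ∈ G, (g j).factorial
        = g i * ((∏ j ∈ G, ((Function.update g i (g i - 1)) j).factorial) *
            Nat.multinomial G (Function.update g i (g i - 1))) := by rw [e1]; ring
      _ = g i * ((∑ j ∈ G, g j) - 1).factorial := by
            rw [Nat.multinomial_spec, e2]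
  rw [Finset.sum_mul, Finset.sum_congr rfl term, ← Finset.sum_mul]
  have e3 : ∑ i ∈ G.filter (fun i => 0 < g i), g i = ∑ i ∈ G, g i := by
    apply Finset.sum_filter_of_ne
    intro i _ hne
    omega
  rw [e3, Nat.mul_factorial_pred h.ne']



/-- `φ` encodes an assignment of the elements of `E` to indices in `G` with fiber sizes `m`. -/
def Fib (E G : Finset ℕ) (m : ℕ → ℕ) (φ : ℕ → ℕ) : Prop :=
  (∀ x, x ∉ E → φ x = 0) ∧ (∀ x ∈ E, φ x ∈ G) ∧
    ∀ i ∈ G, (E.filter fun x => φ x = i).card = m i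

lemma fib_finite (E G : Finset ℕ) (m : ℕ → ℕ) (p : (ℕ → ℕ) → Prop) :
    Finite {φ : ℕ → ℕ // Fib E G m φ ∧ p φ} := by
  classical
  refine Finite.of_injective
    (fun φ => (fun x : ↥E => (⟨φ.1 x, φ.2.1.2.1 x x.2⟩ : ↥G))) ?_
  intro a b hab
  apply Subtype.ext
  funext x
  by_cases hx : x ∈ E
  · exact congrArg Subtype.val (congrFun hab ⟨x, hx⟩)
  · rw [a.2.1.1 x hx, b.2.1.1 x hx]

lemma nat_card_sigma {ι : Type*} [Fintype ι] (β : ι → Type*) [∀ i, Finite (β i)] :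
    Nat.card (Σ i, β i) = ∑ i, Nat.card (β i) := by
  letI : ∀ i, Fintype (β i) := fun i => Fintype.ofFinite _
  simp [Nat.card_eq_fintype_card]

lemma card_fiber_sum {α : Type*} [Finite α] {β : Type*} {s : Finset β} (f : α → ↥s) :
    Nat.card α = ∑ b ∈ s.attach, Nat.card {a : α // f a = b} := by
  classical
  rw [← Nat.card_congr (Equiv.sigmaFiberEquiv f), nat_card_sigma, ← Finset.univ_eq_attach]

lemma fib_erase {E G G' : Finset ℕ} {m φ : ℕ → ℕ} {e : ℕ}
    (he : e ∈ E) (hG' : G' ⊆ G) (hmiss : ∀ i ∈ G, i ∉ G' → m i = 0)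
    (h : Fib E G m φ) :
    Fib (E.erase e) G' (Function.update m (φ e) (m (φ e) - 1)) (Function.update φ e 0) := by
  classical
  obtain ⟨hoff, hval, hfib⟩ := h
  have hmemG' : ∀ x ∈ E, φ x ∈ G' := by
    intro x hx
    by_contra hc
    have h0 : m (φ x) = 0 := hmiss _ (hval x hx) hc
    have : x ∈ E.filter fun y => φ y = φ x := Finset.mem_filter.mpr ⟨hx, rfl⟩
    have hcard := hfib (φ x) (hval x hx)
    rw [h0] at hcard
    exact absurd (Finset.card_eq_zero.mp hcard ▸ this) (Finset.notMem_empty x)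
  refine ⟨?_, ?_, ?_⟩
  · intro x hx
    by_cases hxe : x = e
    · subst hxe; simp [Function.update_self]
    · rw [Function.update_of_ne hxe]
      exact hoff x (fun hxE => hx (Finset.mem_erase.mpr ⟨hxe, hxE⟩))
  · intro x hx
    obtain ⟨hxe, hxE⟩ := Finset.mem_erase.mp hx
    rw [Function.update_of_ne hxe]
    exact hmemG' x hxE
  · intro i' hi'
    have hfe : (E.erase e).filter (fun x => Function.update φ e 0 x = i')
        = (E.filter fun x => φ x = i').erase e := by
      ext x
      by_cases hxe : x = e
      · subst hxe; simp
      · simp only [Finset.mem_erase, Finset.mem_filter, Function.update_of_ne hxe]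
        tauto
    rw [hfe]
    by_cases hc : i' = φ e
    · subst hc
      have hemem : e ∈ E.filter fun x => φ x = φ e := Finset.mem_filter.mpr ⟨he, rfl⟩
      rw [Finset.card_erase_of_mem hemem, hfib _ (hG' hi'), Function.update_self]
    · have henot : e ∉ E.filter fun x => φ x = i' := by
        intro hmem
        exact hc ((Finset.mem_filter.mp hmem).2).symm
      rw [Finset.erase_eq_of_notMem henot, hfib _ (hG' hi'),
        Function.update_of_ne (fun hh => hc hh)]


lemma fib_back {E G G' : Finset ℕ} {m φ' : ℕ → ℕ} {e i : ℕ}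
    (he : e ∈ E) (h0 : 0 ∉ G) (hG' : G' ⊆ G)
    (hmiss : ∀ i' ∈ G, i' ∉ G' → m i' = 0)
    (hi : i ∈ G') (hmi : 0 < m i)
    (h : Fib (E.erase e) G' (Function.update m i (m i - 1)) φ') :
    Fib E G m (Function.update φ' e i) := by
  classical
  obtain ⟨hoff, hval, hfib⟩ := h
  have hene : ∀ x, x ∉ E → x ≠ e := fun x hx hxe => hx (hxe ▸ he)
  refine ⟨?_, ?_, ?_⟩
  · intro x hx
    rw [Function.update_of_ne (hene x hx)]
    exact hoff x (fun hmem => hx (Finset.mem_of_mem_erase hmem))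
  · intro x hx
    by_cases hxe : x = e
    · subst hxe; rw [Function.update_self]; exact hG' hi
    · rw [Function.update_of_ne hxe]
      exact hG' (hval x (Finset.mem_erase.mpr ⟨hxe, hx⟩))
  · intro i' hi'G
    by_cases hc : i' = i
    · rw [hc]
      have hfe : E.filter (fun x => Function.update φ' e i x = i)
          = insert e ((E.erase e).filter fun x => φ' x = i) := by
        ext x
        by_cases hxe : x = e
        · subst hxe; simp [he]
        · simp only [Finset.mem_filter, Function.update_of_ne hxe, Finset.mem_insert,
            Finset.mem_erase, hxe, false_or]
          tauto
      rw [hfe, Finset.card_insert_of_notMem (by simp), hfib _ hi, Function.update_self]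
      omega
    · have hfe : E.filter (fun x => Function.update φ' e i x = i')
          = (E.erase e).filter fun x => φ' x = i' := by
        ext x
        by_cases hxe : x = e
        · subst hxe
          simp only [Finset.mem_filter, Function.update_self, Finset.mem_erase]
          constructor
          · rintro ⟨-, hh⟩; exact absurd hh.symm hc
          · rintro ⟨⟨hh, -⟩, -⟩; exact absurd rfl hh
        · simp only [Finset.mem_filter, Function.update_of_ne hxe, Finset.mem_erase, hxe,
            not_false_eq_true, true_and]
          tauto
      rw [hfe]
      by_cases hi'G' : i' ∈ G'
      · rw [hfib _ hi'G', Function.update_of_ne hc]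
      · have : (E.erase e).filter (fun x => φ' x = i') = ∅ := by
          apply Finset.filter_false_of_mem
          intro x hx hcontra
          exact hi'G' (hcontra ▸ hval x hx)
        rw [this, Finset.card_empty, hmiss _ hi'G hi'G']

lemma card_step (E G G' : Finset ℕ) (m : ℕ → ℕ) (e : ℕ)
    (p q : (ℕ → ℕ) → Prop)
    (he : e ∈ E) (h0 : 0 ∉ G) (hG' : G' ⊆ G)
    (hmiss : ∀ i ∈ G, i ∉ G' → m i = 0)
    (hfwd : ∀ φ, Fib E G m φ → p φ → q (Function.update φ e 0))
    (hbwd : ∀ i, i ∈ G' → 0 < m i → ∀ φ',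
      Fib (E.erase e) G' (Function.update m i (m i - 1)) φ' → q φ' → p (Function.update φ' e i)) :
    Nat.card {φ : ℕ → ℕ // Fib E G m φ ∧ p φ} =
      ∑ i ∈ G'.filter (fun i => 0 < m i),
        Nat.card {φ' : ℕ → ℕ //
          Fib (E.erase e) G' (Function.update m i (m i - 1)) φ' ∧ q φ'} := by
  classical
  haveI := fib_finite E G m p
  have hmemG' : ∀ (φ : ℕ → ℕ), Fib E G m φ → ∀ x ∈ E, φ x ∈ G' := by
    intro φ hφ x hx
    by_contra hcon
    have h0' : m (φ x) = 0 := hmiss _ (hφ.2.1 x hx) hcon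
    have hmem : x ∈ E.filter fun y => φ y = φ x := Finset.mem_filter.mpr ⟨hx, rfl⟩
    have hcard := hφ.2.2 (φ x) (hφ.2.1 x hx)
    rw [h0'] at hcard
    exact absurd (Finset.card_eq_zero.mp hcard ▸ hmem) (Finset.notMem_empty x)
  have hpose : ∀ (φ : ℕ → ℕ), Fib E G m φ → 0 < m (φ e) := by
    intro φ hφ
    have hmem : e ∈ E.filter fun y => φ y = φ e := Finset.mem_filter.mpr ⟨he, rfl⟩
    have hcard := hφ.2.2 (φ e) (hφ.2.1 e he)
    rw [← hcard]
    exact Finset.card_pos.mpr ⟨e, hmem⟩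
  set t := G'.filter (fun i => 0 < m i) with ht
  let f : {φ : ℕ → ℕ // Fib E G m φ ∧ p φ} → ↥t :=
    fun φ => ⟨φ.1 e, Finset.mem_filter.mpr ⟨hmemG' φ.1 φ.2.1 e he, hpose φ.1 φ.2.1⟩⟩
  rw [card_fiber_sum f]
  rw [← Finset.sum_attach t (fun i =>
    Nat.card {φ' : ℕ → ℕ //
      Fib (E.erase e) G' (Function.update m i (m i - 1)) φ' ∧ q φ'})]
  apply Finset.sum_congr rfl
  rintro ⟨i, hit⟩ -
  obtain ⟨hiG', hmi⟩ := Finset.mem_filter.mp hit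
  apply Nat.card_congr
  refine ⟨?_, ?_, ?_, ?_⟩
  · rintro ⟨⟨φ, hFib, hp⟩, hfa⟩
    have hφe : φ e = i := congrArg Subtype.val hfa
    refine ⟨Function.update φ e 0, ?_, hfwd φ hFib hp⟩
    have := fib_erase he hG' hmiss hFib
    rwa [hφe] at this
  · rintro ⟨φ', hFib', hq⟩
    refine ⟨⟨Function.update φ' e i, fib_back he h0 hG' hmiss hiG' hmi hFib',
      hbwd i hiG' hmi φ' hFib' hq⟩, ?_⟩
    apply Subtype.ext
    show Function.update φ' e i e = i
    exact Function.update_self e i φ'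
  · rintro ⟨⟨φ, hFib, hp⟩, hfa⟩
    have hφe : φ e = i := congrArg Subtype.val hfa
    apply Subtype.ext
    apply Subtype.ext
    show Function.update (Function.update φ e 0) e i = φ
    rw [Function.update_idem, ← hφe, Function.update_eq_self]
  · rintro ⟨φ', hFib', hq⟩
    apply Subtype.ext
    show Function.update (Function.update φ' e i) e 0 = φ'
    rw [Function.update_idem]
    have : φ' e = 0 := hFib'.1 e (by simp)
    rw [← this, Function.update_eq_self]


/-! ### counting plain assignments -/

lemma Mcount : ∀ n (E G : Finset ℕ) (m : ℕ → ℕ), E.card = n → 0 ∉ G → (∑ i ∈ G, m i) = n →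
    Nat.card {φ : ℕ → ℕ // Fib E G m φ ∧ True} = Nat.multinomial G m := by
  intro n
  induction n with
  | zero =>
    intro E G m hE h0 hsum
    have hE0 : E = ∅ := Finset.card_eq_zero.mp hE
    subst hE0
    have hm0 : ∀ i ∈ G, m i = 0 := by
      intro i hi
      exact (Finset.sum_eq_zero_iff.mp hsum) i hi
    haveI : Unique {φ : ℕ → ℕ // Fib ∅ G m φ ∧ True} := by
      refine ⟨⟨⟨fun _ => 0, ⟨fun x _ => rfl, by simp, fun i hi => by
        simpa using (hm0 i hi).symm⟩, trivial⟩⟩, ?_⟩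
      rintro ⟨φ, ⟨hoff, -, -⟩, -⟩
      apply Subtype.ext
      funext x
      show φ x = 0
      exact hoff x (Finset.notMem_empty x)
    rw [Nat.card_unique]
    unfold Nat.multinomial
    rw [hsum, Finset.prod_congr rfl (fun i hi => by rw [hm0 i hi])]
    simp
  | succ n ih =>
    intro E G m hE h0 hsum
    obtain ⟨e, he⟩ := Finset.card_pos.mp (by omega : 0 < E.card)
    rw [card_step E G G m e (fun _ => True) (fun _ => True) he h0 Finset.Subset.rfl
      (fun i hi hni => absurd hi hni) (fun _ _ _ => trivial) (fun _ _ _ _ _ _ => trivial)]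
    rw [multinomial_rec G m (by omega)]
    apply Finset.sum_congr rfl
    intro i hi
    obtain ⟨hiG, hmi⟩ := Finset.mem_filter.mp hi
    apply ih
    · rw [Finset.card_erase_of_mem he, hE]
      omega
    · exact h0
    · rw [Finset.sum_update_of_mem hiG]
      have hGi : ∑ j ∈ G, m j = m i + ∑ j ∈ G \ {i}, m j := by
        rw [← Finset.sum_update_of_mem hiG, Finset.sum_congr rfl]
        intro j _
        rw [Function.update_eq_self]
      omega

/-! ### the tree count -/

lemma exists_ne_one {F : Finset ℕ} (h1 : 1 ∈ F) (hne : F ≠ {1}) : ∃ j ∈ F, j ≠ 1 := by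
  by_contra hcon
  push_neg at hcon
  apply hne
  apply Finset.Subset.antisymm
  · intro j hj
    rw [Finset.mem_singleton]
    exact hcon j hj
  · intro j hj
    rw [Finset.mem_singleton] at hj
    exact hj ▸ h1

lemma Tzero {E F : Finset ℕ} {m : ℕ → ℕ} (h1 : 1 ∈ F) (hFne : F ≠ {1})
    (hsub : F.erase 1 ⊆ E) (hm1 : m 1 = 0) :
    Nat.card {φ : ℕ → ℕ // Fib E F m φ ∧ ∀ j ∈ F.erase 1, Rch φ j} = 0 := by
  classical
  have : IsEmpty {φ : ℕ → ℕ // Fib E F m φ ∧ ∀ j ∈ F.erase 1, Rch φ j} := by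
    constructor
    rintro ⟨φ, hFib, hr⟩
    obtain ⟨j₀, hj₀F, hj₀1⟩ := exists_ne_one h1 hFne
    obtain ⟨k, hk⟩ := hr j₀ (Finset.mem_erase.mpr ⟨hj₀1, hj₀F⟩)
    have hclosed : ∀ x ∈ (↑F : Set ℕ), x ≠ 1 → φ x ∈ (↑F : Set ℕ) := by
      intro x hx hx1
      exact hFib.2.1 x (hsub (Finset.mem_erase.mpr ⟨hx1, hx⟩))
    obtain ⟨x, hxF, hx1, hφx⟩ := rch_last hclosed k j₀ hj₀F hj₀1 hk
    have hcard := hFib.2.2 1 h1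
    rw [hm1] at hcard
    have hmem : x ∈ E.filter fun y => φ y = 1 :=
      Finset.mem_filter.mpr ⟨hsub (Finset.mem_erase.mpr ⟨hx1, hxF⟩), hφx⟩
    rw [Finset.card_eq_zero.mp hcard] at hmem
    exact Finset.notMem_empty x hmem
  exact Nat.card_of_isEmpty

lemma dec_comm (m : ℕ → ℕ) (i : ℕ) :
    Function.update (Function.update m i (m i - 1)) 1 (Function.update m i (m i - 1) 1 - 1) =
      Function.update (Function.update m 1 (m 1 - 1)) i (Function.update m 1 (m 1 - 1) i - 1) := by
  by_cases h1 : i = 1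
  · subst h1; rfl
  · funext j
    simp only [Function.update_apply]
    by_cases hj1 : j = 1 <;> by_cases hji : j = i <;>
      simp [hj1, hji, h1, Ne.symm h1] <;> omega

lemma sum_match (F'' : Finset ℕ) (g m : ℕ → ℕ) (c : ℕ → ℕ)
    (hc : ∀ i ∈ F''.filter (fun i => 0 < m i),
      c i = if 0 < g i then Nat.multinomial F'' (Function.update g i (g i - 1)) else 0)
    (hgm : ∀ i ∈ F'', 0 < g i → 0 < m i)
    (hpos : 0 < ∑ i ∈ F'', g i) :
    ∑ i ∈ F''.filter (fun i => 0 < m i), c i = Nat.multinomial F'' g := by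
  classical
  rw [Finset.sum_congr rfl hc, ← Finset.sum_filter]
  have hset : (F''.filter (fun i => 0 < m i)).filter (fun i => 0 < g i)
      = F''.filter (fun i => 0 < g i) := by
    ext i
    simp only [Finset.mem_filter, and_assoc]
    constructor
    · rintro ⟨h1, -, h3⟩; exact ⟨h1, h3⟩
    · rintro ⟨h1, h3⟩; exact ⟨h1, hgm i h1 h3, h3⟩
  rw [hset, ← multinomial_rec F'' g hpos]

lemma Tcount : ∀ n (E F : Finset ℕ) (m : ℕ → ℕ), E.card = n → 0 ∉ F → 1 ∈ F →
    F.erase 1 ⊆ E → (∑ i ∈ F, m i) = n → (F ≠ {1} → 1 ≤ m 1) →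
    Nat.card {φ : ℕ → ℕ // Fib E F m φ ∧ ∀ j ∈ F.erase 1, Rch φ j} =
      Nat.multinomial F (Function.update m 1 (m 1 - 1)) := by
  intro n
  induction n with
  | zero =>
    intro E F m hE h0 h1 hsub hsum hm1
    have hE0 : E = ∅ := Finset.card_eq_zero.mp hE
    subst hE0
    have hF1 : F = {1} := by
      apply Finset.Subset.antisymm
      · intro j hj
        rw [Finset.mem_singleton]
        by_contra hj1
        exact Finset.notMem_empty j (hsub (Finset.mem_erase.mpr ⟨hj1, hj⟩))
      · intro j hj; rw [Finset.mem_singleton] at hj; exact hj ▸ h1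
    subst hF1
    have hm10 : m 1 = 0 := by simpa using hsum
    haveI : Unique {φ : ℕ → ℕ // Fib ∅ {1} m φ ∧ ∀ j ∈ ({1} : Finset ℕ).erase 1, Rch φ j} := by
      refine ⟨⟨⟨fun _ => 0, ⟨fun x _ => rfl, by simp, fun i hi => by
        rw [Finset.mem_singleton] at hi; subst hi; simpa using hm10.symm⟩,
        by simp⟩⟩, ?_⟩
      rintro ⟨φ, ⟨hoff, -, -⟩, -⟩
      apply Subtype.ext
      funext x
      show φ x = 0
      exact hoff x (Finset.notMem_empty x)
    rw [Nat.card_unique, Nat.multinomial_singleton]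
  | succ n ih =>
    intro E F m hE h0 h1 hsub hsum hm1
    by_cases hF1 : F = {1}
    · subst hF1
      have hcongr : Nat.card {φ : ℕ → ℕ // Fib E {1} m φ ∧
            ∀ j ∈ ({1} : Finset ℕ).erase 1, Rch φ j}
          = Nat.card {φ : ℕ → ℕ // Fib E {1} m φ ∧ True} := by
        apply Nat.card_congr
        apply Equiv.subtypeEquivRight
        intro φ
        simp [Finset.erase_singleton]
      rw [hcongr, Mcount (n+1) E {1} m hE h0 hsum, Nat.multinomial_singleton,
        Nat.multinomial_singleton]
    · have hm1' := hm1 hF1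
      obtain ⟨j₁, hj₁F, hj₁1⟩ := exists_ne_one h1 hF1
      by_cases hfree : ∃ e ∈ E, e ∉ F.erase 1
      · -- B1 : remove a free element
        obtain ⟨e, heE, heF⟩ := hfree
        have hn1 : 1 ≤ n := by
          have hne : j₁ ≠ e := fun hcon => heF (hcon ▸ Finset.mem_erase.mpr ⟨hj₁1, hj₁F⟩)
          have hsubpair : ({j₁, e} : Finset ℕ) ⊆ E := by
            intro x hx
            rcases Finset.mem_insert.mp hx with h | h
            · exact hsub (h ▸ Finset.mem_erase.mpr ⟨hj₁1, hj₁F⟩)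
            · exact (Finset.mem_singleton.mp h) ▸ heE
          have hle := Finset.card_le_card hsubpair
          rw [Finset.card_insert_of_notMem (by simpa using hne), Finset.card_singleton] at hle
          omega
        have hsub' : F.erase 1 ⊆ E.erase e := by
          intro x hx
          exact Finset.mem_erase.mpr ⟨fun hc => heF (hc ▸ hx), hsub hx⟩
        have hfwd : ∀ φ, Fib E F m φ → (∀ j ∈ F.erase 1, Rch φ j) →
            ∀ j ∈ F.erase 1, Rch (Function.update φ e 0) j := by
          intro φ hFib hp j hj
          obtain ⟨hj1, hjF⟩ := Finset.mem_erase.mp hj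
          refine rch_congr (S := (↑F : Set ℕ)) ?_ ?_ j hjF (hp j hj)
          · intro x hx hx1
            apply Function.update_of_ne
            intro hcon
            exact heF (hcon ▸ Finset.mem_erase.mpr ⟨hx1, hx⟩)
          · intro x hx hx1
            exact hFib.2.1 x (hsub (Finset.mem_erase.mpr ⟨hx1, hx⟩))
        have hbwd : ∀ i, i ∈ F → 0 < m i → ∀ φ',
            Fib (E.erase e) F (Function.update m i (m i - 1)) φ' →
            (∀ j ∈ F.erase 1, Rch φ' j) →
            ∀ j ∈ F.erase 1, Rch (Function.update φ' e i) j := by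
          intro i hiF hmi φ' hFib' hq j hj
          obtain ⟨hj1, hjF⟩ := Finset.mem_erase.mp hj
          refine rch_congr (S := (↑F : Set ℕ)) ?_ ?_ j hjF (hq j hj)
          · intro x hx hx1
            apply Function.update_of_ne
            intro hcon
            exact heF (hcon ▸ Finset.mem_erase.mpr ⟨hx1, hx⟩)
          · intro x hx hx1
            exact hFib'.2.1 x (hsub' (Finset.mem_erase.mpr ⟨hx1, hx⟩))
        rw [card_step E F F m e _ _ heE h0 Finset.Subset.rfl
          (fun i hi hni => absurd hi hni) hfwd hbwd]
        apply sum_match F (Function.update m 1 (m 1 - 1)) m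
        · -- hc
          intro i hi
          obtain ⟨hiF, hmi⟩ := Finset.mem_filter.mp hi
          by_cases hgi : 0 < Function.update m 1 (m 1 - 1) i
          · have hsum' : ∑ j ∈ F, Function.update m i (m i - 1) j = n := by
              rw [Finset.sum_update_of_mem hiF]
              have hGi : ∑ j ∈ F, m j = m i + ∑ j ∈ F \ {i}, m j := by
                rw [← Finset.sum_update_of_mem hiF, Finset.sum_congr rfl]
                intro j _
                rw [Function.update_eq_self]
              omega
            have hrm1 : F ≠ {1} → 1 ≤ Function.update m i (m i - 1) 1 := by
              intro _
              by_cases hi1 : i = 1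
              · subst hi1
                rw [Function.update_self]
                rw [Function.update_self] at hgi
                omega
              · rw [Function.update_of_ne (fun hc => hi1 hc.symm)]
                exact hm1'
            have hres := ih (E.erase e) F (Function.update m i (m i - 1))
              (by have := Finset.card_erase_of_mem heE; omega) h0 h1 hsub' hsum' hrm1
            rw [if_pos hgi, hres]
            exact congrArg (Nat.multinomial F) (dec_comm m i)
          · rw [if_neg hgi]
            have hi1 : i = 1 := by
              by_contra hc
              rw [Function.update_of_ne hc] at hgi
              exact hgi hmi
            subst hi1
            rw [Function.update_self] at hgi
            apply Tzero h1 hF1 hsub'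
            rw [Function.update_self]
            omega
        · -- hgm
          intro i hiF hgi
          by_cases hi1 : i = 1
          · subst hi1; rw [Function.update_self] at hgi; omega
          · rwa [Function.update_of_ne hi1] at hgi
        · -- hpos
          have e1 : ∑ j ∈ F, Function.update m 1 (m 1 - 1) j = n := by
            rw [Finset.sum_update_of_mem h1]
            have hGi : ∑ j ∈ F, m j = m 1 + ∑ j ∈ F \ {1}, m j := by
              rw [← Finset.sum_update_of_mem h1, Finset.sum_congr rfl]
              intro j _
              rw [Function.update_eq_self]
            omega
          omega
      · -- B2 : no free element, remove a leaf vertex j₀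
        push_neg at hfree
        have hEF : E = F.erase 1 := Finset.Subset.antisymm (fun e he => hfree e he) hsub
        obtain ⟨j₀, hj₀F, hj₀1, hj₀m⟩ : ∃ j₀ ∈ F, j₀ ≠ 1 ∧ m j₀ = 0 := by
          by_contra hcon
          push_neg at hcon
          have hall : ∀ j ∈ F.erase 1, 1 ≤ m j := by
            intro j hj
            obtain ⟨hj1, hjF⟩ := Finset.mem_erase.mp hj
            have := hcon j hjF hj1
            omega
          have hcard : (F.erase 1).card ≤ ∑ j ∈ F.erase 1, m j := by
            simpa using Finset.card_nsmul_le_sum (F.erase 1) m 1 hall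
          have hsplit : ∑ i ∈ F, m i = m 1 + ∑ i ∈ F.erase 1, m i :=
            (Finset.add_sum_erase F m h1).symm
          have hec : (F.erase 1).card = n + 1 := by rw [← hEF]; exact hE
          omega
        have hj₀E : j₀ ∈ E := by rw [hEF]; exact Finset.mem_erase.mpr ⟨hj₀1, hj₀F⟩
        set F' := F.erase j₀ with hF'
        have h1F' : 1 ∈ F' := Finset.mem_erase.mpr ⟨Ne.symm hj₀1, h1⟩
        have h0F' : 0 ∉ F' := fun hc => h0 (Finset.mem_of_mem_erase hc)
        have hsub' : F'.erase 1 ⊆ E.erase j₀ := by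
          intro x hx
          obtain ⟨hx1, hxF'⟩ := Finset.mem_erase.mp hx
          obtain ⟨hxj₀, hxF⟩ := Finset.mem_erase.mp hxF'
          refine Finset.mem_erase.mpr ⟨hxj₀, ?_⟩
          rw [hEF]
          exact Finset.mem_erase.mpr ⟨hx1, hxF⟩
        have hfibj₀ : ∀ φ, Fib E F m φ → ∀ x ∈ E, φ x ≠ j₀ := by
          intro φ hFib x hx hcon
          have hcard := hFib.2.2 j₀ hj₀F
          rw [hj₀m] at hcard
          have hmem : x ∈ E.filter fun y => φ y = j₀ := Finset.mem_filter.mpr ⟨hx, hcon⟩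
          rw [Finset.card_eq_zero.mp hcard] at hmem
          exact Finset.notMem_empty x hmem
        have hfwd : ∀ φ, Fib E F m φ → (∀ j ∈ F.erase 1, Rch φ j) →
            ∀ j ∈ F'.erase 1, Rch (Function.update φ j₀ 0) j := by
          intro φ hFib hp j hj
          obtain ⟨hj1, hjF'⟩ := Finset.mem_erase.mp hj
          obtain ⟨hjj₀, hjF⟩ := Finset.mem_erase.mp hjF'
          refine rch_congr (S := {x | x ∈ F ∧ x ≠ j₀}) ?_ ?_ j ⟨hjF, hjj₀⟩
            (hp j (Finset.mem_erase.mpr ⟨hj1, hjF⟩))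
          · rintro x ⟨hxF, hxj₀⟩ hx1
            exact Function.update_of_ne hxj₀ _ _
          · rintro x ⟨hxF, hxj₀⟩ hx1
            have hxE : x ∈ E := hsub (Finset.mem_erase.mpr ⟨hx1, hxF⟩)
            exact ⟨hFib.2.1 x hxE, hfibj₀ φ hFib x hxE⟩
        have hbwd : ∀ i, i ∈ F' → 0 < m i → ∀ φ',
            Fib (E.erase j₀) F' (Function.update m i (m i - 1)) φ' →
            (∀ j ∈ F'.erase 1, Rch φ' j) →
            ∀ j ∈ F.erase 1, Rch (Function.update φ' j₀ i) j := by
          intro i hiF' hmi φ' hFib' hq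
          have htrans : ∀ x ∈ F', x ≠ 1 → Rch φ' x → Rch (Function.update φ' j₀ i) x := by
            intro x hx hx1
            refine rch_congr (S := (↑F' : Set ℕ)) ?_ ?_ x hx
            · intro y hy hy1
              exact Function.update_of_ne (Finset.mem_erase.mp hy).1 _ _
            · intro y hy hy1
              have hyE : y ∈ E.erase j₀ := by
                refine Finset.mem_erase.mpr ⟨(Finset.mem_erase.mp hy).1, ?_⟩
                rw [hEF]
                exact Finset.mem_erase.mpr ⟨hy1, (Finset.mem_erase.mp hy).2⟩
              exact hFib'.2.1 y hyE
          intro j hj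
          obtain ⟨hj1, hjF⟩ := Finset.mem_erase.mp hj
          by_cases hjj₀ : j = j₀
          · subst hjj₀
            apply rch_step
            rw [Function.update_self]
            by_cases hi1 : i = 1
            · subst hi1; exact rch_one _
            · exact htrans i hiF' hi1 (hq i (Finset.mem_erase.mpr ⟨hi1, hiF'⟩))
          · exact htrans j (Finset.mem_erase.mpr ⟨hjj₀, hjF⟩) hj1
              (hq j (Finset.mem_erase.mpr ⟨hj1, Finset.mem_erase.mpr ⟨hjj₀, hjF⟩⟩))
        rw [card_step E F F' m j₀ _ _ hj₀E h0 (Finset.erase_subset _ _)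
          (fun i hi hni => by
            by_cases hc : i = j₀
            · exact hc ▸ hj₀m
            · exact absurd (Finset.mem_erase.mpr ⟨hc, hi⟩) hni) hfwd hbwd]
        have hgj₀ : Function.update m 1 (m 1 - 1) j₀ = 0 := by
          rw [Function.update_of_ne hj₀1]; exact hj₀m
        rw [multinomial_erase_zero hj₀F hgj₀]
        have hsumF' : ∑ i ∈ F', m i = n + 1 := by
          have hsplit : ∑ i ∈ F, m i = m j₀ + ∑ i ∈ F', m i :=
            (Finset.add_sum_erase F m hj₀F).symm
          omega
        rcases Nat.eq_zero_or_pos n with hn0 | hn1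
        · -- n = 0
          subst hn0
          obtain ⟨a, ha⟩ := Finset.card_eq_one.mp (by omega : E.card = 1)
          have haj₀ : a = j₀ := by
            rw [ha] at hj₀E
            exact (Finset.mem_singleton.mp hj₀E).symm
          subst haj₀
          have hFe : F.erase 1 = {a} := by rw [← hEF]; exact ha
          have hF'1 : F' = {1} := by
            ext x
            simp only [hF', Finset.mem_erase, Finset.mem_singleton]
            constructor
            · rintro ⟨hxa, hxF⟩
              by_contra hx1
              have hmem : x ∈ F.erase 1 := Finset.mem_erase.mpr ⟨hx1, hxF⟩
              rw [hFe, Finset.mem_singleton] at hmem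
              exact hxa hmem
            · rintro rfl
              exact ⟨Ne.symm hj₀1, h1⟩
          have hm11 : m 1 = 1 := by
            have hsplit : ∑ i ∈ F, m i = m 1 + ∑ i ∈ F.erase 1, m i :=
              (Finset.add_sum_erase F m h1).symm
            rw [hFe, Finset.sum_singleton] at hsplit
            omega
          have hfilter : F'.filter (fun i => 0 < m i) = {1} := by
            rw [hF'1, Finset.filter_singleton, if_pos (by omega)]
          rw [hfilter, Finset.sum_singleton]
          have hres := ih (E.erase a) F' (Function.update m 1 (m 1 - 1))
            (by have := Finset.card_erase_of_mem hj₀E; omega)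
            h0F' h1F' hsub'
            (by rw [hF'1, Finset.sum_singleton, Function.update_self]; omega)
            (fun hc => absurd hF'1 hc)
          have hFa1 : F.erase a = {1} := by rw [← hF']; exact hF'1
          rw [hres, hF'1, Nat.multinomial_singleton, hFa1, Nat.multinomial_singleton]
        · -- n ≥ 1
          have hF'ne : F' ≠ {1} := by
            have hcE : (F.erase 1).card = n + 1 := by rw [← hEF]; exact hE
            have hcF := Finset.card_erase_add_one h1
            have hcF' : F'.card = F.card - 1 := Finset.card_erase_of_mem hj₀F
            intro hcon
            rw [hcon, Finset.card_singleton] at hcF'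
            omega
          apply sum_match F' (Function.update m 1 (m 1 - 1)) m
          · intro i hi
            obtain ⟨hiF', hmi⟩ := Finset.mem_filter.mp hi
            by_cases hgi : 0 < Function.update m 1 (m 1 - 1) i
            · have hsum' : ∑ j ∈ F', Function.update m i (m i - 1) j = n := by
                rw [Finset.sum_update_of_mem hiF']
                have hGi : ∑ j ∈ F', m j = m i + ∑ j ∈ F' \ {i}, m j := by
                  rw [← Finset.sum_update_of_mem hiF', Finset.sum_congr rfl]
                  intro j _
                  rw [Function.update_eq_self]
                omega
              have hrm1 : F' ≠ {1} → 1 ≤ Function.update m i (m i - 1) 1 := by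
                intro _
                by_cases hi1 : i = 1
                · subst hi1
                  rw [Function.update_self]
                  rw [Function.update_self] at hgi
                  omega
                · rw [Function.update_of_ne (fun hc => hi1 hc.symm)]
                  exact hm1'
              have hres := ih (E.erase j₀) F' (Function.update m i (m i - 1))
                (by have := Finset.card_erase_of_mem hj₀E; omega) h0F' h1F' hsub' hsum' hrm1
              rw [if_pos hgi, hres]
              exact congrArg (Nat.multinomial F') (dec_comm m i)
            · rw [if_neg hgi]
              have hi1 : i = 1 := by
                by_contra hc
                rw [Function.update_of_ne hc] at hgi
                exact hgi hmi
              subst hi1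
              rw [Function.update_self] at hgi
              apply Tzero h1F' hF'ne hsub'
              rw [Function.update_self]
              omega
          · intro i hiF' hgi
            by_cases hi1 : i = 1
            · subst hi1; rw [Function.update_self] at hgi; omega
            · rwa [Function.update_of_ne hi1] at hgi
          · have e1 : ∑ j ∈ F', Function.update m 1 (m 1 - 1) j = n := by
              rw [Finset.sum_update_of_mem h1F']
              have hGi : ∑ j ∈ F', m j = m 1 + ∑ j ∈ F' \ {1}, m j := by
                rw [← Finset.sum_update_of_mem h1F', Finset.sum_congr rfl]
                intro j _
                rw [Function.update_eq_self]
              omega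
            omega

/-! ### dictionary between ordered partitions and assignment functions -/

def toPhi (r : ℕ) (P : ℕ → Finset ℕ) : ℕ → ℕ :=
  fun x => ∑ i ∈ Finset.Icc 1 r, if x ∈ P i then i else 0

noncomputable def toP (s : ℕ) (φ : ℕ → ℕ) : ℕ → Finset ℕ :=
  by classical exact fun i => (Finset.Icc 1 s).filter fun x => φ x = i

section Dict

variable {r s : ℕ} {m : ℕ → ℕ} {P : ℕ → Finset ℕ}

lemma toPhi_eq (hOP : IsOrderedPartition r s m P) {x i : ℕ}
    (hi : i ∈ Finset.Icc 1 r) (hx : x ∈ P i) : toPhi r P x = i := by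
  unfold toPhi
  rw [Finset.sum_eq_single_of_mem i hi, if_pos hx]
  intro j hj hji
  rw [if_neg]
  intro hxj
  exact (Finset.disjoint_left.mp (hOP.2.1 j i hji) hxj) hx

lemma hPsub (hOP : IsOrderedPartition r s m P) :
    ∀ i ∈ Finset.Icc 1 r, P i ⊆ Finset.Icc 1 s := fun i hi x hx =>
  hOP.2.2.1 ▸ Finset.mem_biUnion.mpr ⟨i, hi, hx⟩

lemma toPhi_mem (hOP : IsOrderedPartition r s m P) {x : ℕ} (hx : x ∈ Finset.Icc 1 s) :
    toPhi r P x ∈ Finset.Icc 1 r ∧ x ∈ P (toPhi r P x) := by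
  have hx' : x ∈ (Finset.Icc 1 r).biUnion P := hOP.2.2.1.symm ▸ hx
  obtain ⟨i, hi, hxi⟩ := Finset.mem_biUnion.mp hx'
  rw [toPhi_eq hOP hi hxi]
  exact ⟨hi, hxi⟩

lemma toPhi_zero (hOP : IsOrderedPartition r s m P) {x : ℕ} (hx : x ∉ Finset.Icc 1 s) :
    toPhi r P x = 0 := by
  unfold toPhi
  apply Finset.sum_eq_zero
  intro i hi
  rw [if_neg]
  intro hxi
  exact hx (hOP.2.2.1 ▸ Finset.mem_biUnion.mpr ⟨i, hi, hxi⟩)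

lemma fib_toPhi (hOP : IsOrderedPartition r s m P) :
    Fib (Finset.Icc 1 s) (Finset.Icc 1 r) m (toPhi r P) := by
  refine ⟨fun x hx => toPhi_zero hOP hx, fun x hx => (toPhi_mem hOP hx).1, ?_⟩
  intro i hi
  have hfe : (Finset.Icc 1 s).filter (fun x => toPhi r P x = i) = P i := by
    ext x
    rw [Finset.mem_filter]
    constructor
    · rintro ⟨hxs, hφ⟩
      exact hφ ▸ (toPhi_mem hOP hxs).2
    · intro hxP
      exact ⟨hPsub hOP i hi hxP, toPhi_eq hOP hi hxP⟩
  rw [hfe]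
  exact hOP.2.2.2 i hi

lemma op_toP {φ : ℕ → ℕ} (hFib : Fib (Finset.Icc 1 s) (Finset.Icc 1 r) m φ) :
    IsOrderedPartition r s m (toP s φ) := by
  classical
  obtain ⟨hoff, hval, hfib⟩ := hFib
  refine ⟨?_, ?_, ?_, ?_⟩
  · intro i hi
    apply Finset.filter_false_of_mem
    intro x hx hc
    exact hi (hc ▸ hval x hx)
  · intro i j hij
    rw [Finset.disjoint_left]
    intro x hx hx'
    have h1 := (Finset.mem_filter.mp hx).2
    have h2 := (Finset.mem_filter.mp hx').2
    exact hij (h1 ▸ h2.symm ▸ rfl)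
  · ext x
    rw [Finset.mem_biUnion]
    constructor
    · rintro ⟨i, hi, hx⟩
      exact (Finset.mem_filter.mp hx).1
    · intro hx
      exact ⟨φ x, hval x hx, Finset.mem_filter.mpr ⟨hx, rfl⟩⟩
  · intro i hi
    exact hfib i hi

lemma toPhi_toP {φ : ℕ → ℕ} (hFib : Fib (Finset.Icc 1 s) (Finset.Icc 1 r) m φ) :
    toPhi r (toP s φ) = φ := by
  classical
  have hOP := op_toP (r := r) hFib
  funext x
  by_cases hx : x ∈ Finset.Icc 1 s
  · exact toPhi_eq hOP (hFib.2.1 x hx) (Finset.mem_filter.mpr ⟨hx, rfl⟩)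
  · rw [toPhi_zero hOP hx, hFib.1 x hx]

lemma toP_toPhi (hOP : IsOrderedPartition r s m P) : toP s (toPhi r P) = P := by
  classical
  funext i
  ext x
  show x ∈ (Finset.Icc 1 s).filter (fun y => toPhi r P y = i) ↔ x ∈ P i
  rw [Finset.mem_filter]
  by_cases hi : i ∈ Finset.Icc 1 r
  · constructor
    · rintro ⟨hxs, hφ⟩
      exact hφ ▸ (toPhi_mem hOP hxs).2
    · intro hxP
      exact ⟨hPsub hOP i hi hxP, toPhi_eq hOP hi hxP⟩
  · rw [hOP.1 i hi]
    constructor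
    · rintro ⟨hxs, hφ⟩
      exact absurd (hφ ▸ (toPhi_mem hOP hxs).1) hi
    · intro hx
      exact absurd hx (Finset.notMem_empty x)

lemma reach_char (hr : 1 ≤ r) (hrs : r ≤ s)
    (hOP : IsOrderedPartition r s m P) (F : Finset ℕ) (hF : F ⊆ Finset.Icc 1 r)
    (h1F : 1 ∈ F) :
    IsReachSet r P F ↔
      ∀ j ∈ Finset.Icc 1 r, j ≠ 1 → (j ∈ F ↔ Rch (toPhi r P) j) := by
  classical
  set φ := toPhi r P with hφ
  set Rs : Finset ℕ := (Finset.Icc 1 r).filter (fun j => Rch φ j) with hRs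
  have h1Icc : (1 : ℕ) ∈ Finset.Icc 1 r := Finset.mem_Icc.mpr ⟨le_refl 1, hr⟩
  have h1R : 1 ∈ Rs := Finset.mem_filter.mpr ⟨h1Icc, rch_one φ⟩
  have hArc : ArcClosed r P Rs := by
    intro i hiR j hjP hj2 hjr
    have hiIcc := (Finset.mem_filter.mp hiR).1
    have hjIcc : j ∈ Finset.Icc 1 r := Finset.mem_Icc.mpr ⟨by omega, hjr⟩
    have hφj : φ j = i := toPhi_eq hOP hiIcc hjP
    refine Finset.mem_filter.mpr ⟨hjIcc, ?_⟩
    apply rch_step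
    rw [hφj]
    exact (Finset.mem_filter.mp hiR).2
  have hMin : ∀ F' : Finset ℕ, 1 ∈ F' → ArcClosed r P F' → Rs ⊆ F' := by
    intro F' h1' hA'
    have H : ∀ k, ∀ j ∈ Finset.Icc 1 r, φ^[k] j = 1 → j ∈ F' := by
      intro k
      induction k with
      | zero =>
        intro j _ hk
        have hj1 : j = 1 := hk
        exact hj1 ▸ h1'
      | succ nn ihk =>
        intro j hjIcc hk
        by_cases hj1 : j = 1
        · exact hj1 ▸ h1'
        · rw [Function.iterate_succ_apply] at hk
          have hjs : j ∈ Finset.Icc 1 s := by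
            rw [Finset.mem_Icc] at hjIcc ⊢
            omega
          have hφmem := toPhi_mem hOP hjs
          have hφF' : φ j ∈ F' := ihk (φ j) hφmem.1 hk
          refine hA' (φ j) hφF' j hφmem.2 ?_ ?_
          · rw [Finset.mem_Icc] at hjIcc; omega
          · rw [Finset.mem_Icc] at hjIcc; omega
    intro j hjR
    obtain ⟨hjIcc, hRch⟩ := Finset.mem_filter.mp hjR
    obtain ⟨k, hk⟩ := hRch
    exact H k j hjIcc hk
  constructor
  · intro hRS j hjIcc hj1
    have hFR : F = Rs :=
      Finset.Subset.antisymm (hRS.2.2 Rs h1R hArc) (hMin F hRS.1 hRS.2.1)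
    rw [hFR, Finset.mem_filter]
    exact ⟨fun h => h.2, fun h => ⟨hjIcc, h⟩⟩
  · intro hRC
    have hFR : F = Rs := by
      ext j
      by_cases hj1 : j = 1
      · subst hj1
        simp only [h1F, h1R]
      · by_cases hjIcc : j ∈ Finset.Icc 1 r
        · rw [Finset.mem_filter]
          constructor
          · intro hjF
            exact ⟨hjIcc, (hRC j hjIcc hj1).mp hjF⟩
          · intro h
            exact (hRC j hjIcc hj1).mpr h.2
        · constructor
          · intro hjF
            exact absurd (hF hjF) hjIcc
          · intro h
            exact absurd (Finset.mem_filter.mp h).1 hjIcc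
    rw [hFR]
    exact ⟨h1R, hArc, hMin⟩

end Dict

end CPR

open CPR

/-- **Lemma `lem:no_sum`.** For `r ≥ 1`, positive integers `m 1, …, m r` with
`s = m 1 + ⋯ + m r`, `g 1 = m 1 - 1`, `g i = m i` for `2 ≤ i`, and a subset
`F ⊆ {1, …, r}` with `1 ∈ F` and complement `Fᶜ = {1,…,r} \ F`, the number of
ordered partitions of `{1, …, s}` of type `(m 1, …, m r)` with reachable set
`F` equals `choose (s - r + 1) (S(Fᶜ) - |Fᶜ|) * C(F) * C(Fᶜ)`, where
`S(B) = ∑_{i∈B} g i` and `C(B) = S(B)! / ∏_{i∈B} (g i)!`. -/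
theorem count_partitions_given_reach
    (r : ℕ) (hr : 1 ≤ r) (m : ℕ → ℕ) (hm : ∀ i ∈ Finset.Icc 1 r, 0 < m i)
    (s : ℕ) (hs : s = ∑ i ∈ Finset.Icc 1 r, m i)
    (g : ℕ → ℕ) (hg1 : g 1 = m 1 - 1) (hg2 : ∀ i, 2 ≤ i → g i = m i)
    (F : Finset ℕ) (hF : F ⊆ Finset.Icc 1 r) (h1F : 1 ∈ F) :
    {P : ℕ → Finset ℕ | IsOrderedPartition r s m P ∧ IsReachSet r P F}.ncard =
      (s - r + 1).choose
          ((∑ i ∈ Finset.Icc 1 r \ F, g i) - (Finset.Icc 1 r \ F).card) *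
        ((∑ i ∈ F, g i).factorial / ∏ i ∈ F, (g i).factorial) *
        ((∑ i ∈ Finset.Icc 1 r \ F, g i).factorial /
          ∏ i ∈ Finset.Icc 1 r \ F, (g i).factorial) := by
  classical
  have h0r : (0 : ℕ) ∉ Finset.Icc 1 r := by simp
  have h0F : (0 : ℕ) ∉ F := fun hc => h0r (hF hc)
  have h1Icc : (1 : ℕ) ∈ Finset.Icc 1 r := Finset.mem_Icc.mpr ⟨le_refl 1, hr⟩
  have hrs : r ≤ s := by
    have hle := Finset.card_nsmul_le_sum (Finset.Icc 1 r) m 1 (fun i hi => hm i hi)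
    rw [Nat.card_Icc, smul_eq_mul, mul_one] at hle
    rw [hs]
    exact le_trans (by omega) hle
  have hIccsub : Finset.Icc 1 r ⊆ Finset.Icc 1 s := by
    intro x hx; rw [Finset.mem_Icc] at hx ⊢; omega
  set Fc : Finset ℕ := Finset.Icc 1 r \ F with hFcdef
  have hFcsub2 : Fc ⊆ Finset.Icc 2 r := by
    intro i hi
    obtain ⟨hiI, hiF⟩ := Finset.mem_sdiff.mp hi
    rw [Finset.mem_Icc] at hiI ⊢
    refine ⟨?_, hiI.2⟩
    by_contra hlt
    have hi1 : i = 1 := by omega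
    rw [hi1] at hiF; exact hiF h1F
  have hFcIcc : Fc ⊆ Finset.Icc 1 r := Finset.sdiff_subset
  have h0Fc : (0 : ℕ) ∉ Fc := fun hc => h0r (hFcIcc hc)
  have h1Fc : (1 : ℕ) ∉ Fc := fun hc => (Finset.mem_sdiff.mp hc).2 h1F
  have hIcc2sub : Finset.Icc 2 r ⊆ Finset.Icc 1 s := by
    intro x hx; rw [Finset.mem_Icc] at hx ⊢; omega
  set Sc := ∑ i ∈ Fc, m i with hScdef
  have hbSc : Fc.card ≤ Sc := by
    have := Finset.card_nsmul_le_sum Fc m 1 (fun i hi => hm i (hFcIcc hi))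
    simpa using this
  have hsumsplit : Sc + ∑ i ∈ F, m i = s := by
    rw [hs]; exact Finset.sum_sdiff hF
  set kk := Sc - Fc.card with hkkdef
  set Efree : Finset ℕ := Finset.Icc 1 s \ Finset.Icc 2 r with hEfreedef
  have hEfreecard : Efree.card = s - r + 1 := by
    rw [hEfreedef, Finset.card_sdiff_of_subset hIcc2sub, Nat.card_Icc, Nat.card_Icc]
    omega
  set RC : (ℕ → ℕ) → Prop :=
    fun φ => ∀ j ∈ Finset.Icc 1 r, j ≠ 1 → (j ∈ F ↔ Rch φ j) with hRCdef
  rw [← Nat.card_coe_set_eq]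
  have hcard1 : Nat.card {P : ℕ → Finset ℕ | IsOrderedPartition r s m P ∧ IsReachSet r P F}
      = Nat.card {φ : ℕ → ℕ // Fib (Finset.Icc 1 s) (Finset.Icc 1 r) m φ ∧ RC φ} := by
    apply Nat.card_congr
    refine ⟨fun P => ⟨toPhi r P.1, fib_toPhi P.2.1,
        (reach_char hr hrs P.2.1 F hF h1F).mp P.2.2⟩,
      fun φ => ⟨toP s φ.1, op_toP φ.2.1, by
        have hOP := op_toP (r := r) φ.2.1
        refine (reach_char hr hrs hOP F hF h1F).mpr ?_
        rw [toPhi_toP φ.2.1]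
        exact φ.2.2⟩, ?_, ?_⟩
    · intro P
      apply Subtype.ext
      exact toP_toPhi P.2.1
    · intro φ
      apply Subtype.ext
      exact toPhi_toP φ.2.1
  rw [hcard1]
  haveI : Finite {φ : ℕ → ℕ // Fib (Finset.Icc 1 s) (Finset.Icc 1 r) m φ ∧ RC φ} :=
    fib_finite _ _ _ _
  have hvertF : ∀ φ : ℕ → ℕ, Fib (Finset.Icc 1 s) (Finset.Icc 1 r) m φ → RC φ →
      ∀ x ∈ F, x ≠ 1 → φ x ∈ F := by
    intro φ hFib hrc x hxF hx1
    have hxIcc : x ∈ Finset.Icc 1 r := hF hxF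
    have hxs : x ∈ Finset.Icc 1 s := hIccsub hxIcc
    have hRx : Rch φ x := (hrc x hxIcc hx1).mp hxF
    rcases rch_cases hRx with h | h
    · exact absurd h hx1
    · have hφIcc : φ x ∈ Finset.Icc 1 r := hFib.2.1 x hxs
      by_cases hφ1 : φ x = 1
      · exact hφ1 ▸ h1F
      · exact (hrc (φ x) hφIcc hφ1).mpr h
  have hvertFc : ∀ φ : ℕ → ℕ, Fib (Finset.Icc 1 s) (Finset.Icc 1 r) m φ → RC φ →
      ∀ x ∈ Fc, φ x ∉ F := by
    intro φ hFib hrc x hxFc hcon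
    obtain ⟨hxIcc, hxF⟩ := Finset.mem_sdiff.mp hxFc
    have hx1 : x ≠ 1 := fun hc => hxF (hc ▸ h1F)
    have hxs : x ∈ Finset.Icc 1 s := hIccsub hxIcc
    have hRφx : Rch φ (φ x) := by
      by_cases hφ1 : φ x = 1
      · exact hφ1 ▸ rch_one φ
      · exact (hrc (φ x) (hFib.2.1 x hxs) hφ1).mp hcon
    exact hxF ((hrc x hxIcc hx1).mpr (rch_step hRφx))
  set Bs : (ℕ → ℕ) → Finset ℕ :=
    fun φ => (Finset.Icc 1 s).filter (fun x => φ x ∉ F) with hBsdef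
  have hFcBs : ∀ φ : ℕ → ℕ, Fib (Finset.Icc 1 s) (Finset.Icc 1 r) m φ → RC φ →
      Fc ⊆ Bs φ := by
    intro φ hFib hrc x hx
    exact Finset.mem_filter.mpr ⟨hIccsub (hFcIcc hx), hvertFc φ hFib hrc x hx⟩
  have hBsEfree : ∀ φ : ℕ → ℕ, Fib (Finset.Icc 1 s) (Finset.Icc 1 r) m φ → RC φ →
      Bs φ \ Fc ⊆ Efree := by
    intro φ hFib hrc x hx
    obtain ⟨hxB, hxFc⟩ := Finset.mem_sdiff.mp hx
    obtain ⟨hxs, hxφ⟩ := Finset.mem_filter.mp hxB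
    refine Finset.mem_sdiff.mpr ⟨hxs, ?_⟩
    intro hx2r
    have hxIcc : x ∈ Finset.Icc 1 r := by
      rw [Finset.mem_Icc] at hx2r ⊢; omega
    have hx1 : x ≠ 1 := by rw [Finset.mem_Icc] at hx2r; omega
    by_cases hxF : x ∈ F
    · exact hxφ (hvertF φ hFib hrc x hxF hx1)
    · exact hxFc (Finset.mem_sdiff.mpr ⟨hxIcc, hxF⟩)
  have hBscard : ∀ φ : ℕ → ℕ, Fib (Finset.Icc 1 s) (Finset.Icc 1 r) m φ → RC φ →
      (Bs φ).card = Sc := by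
    intro φ hFib hrc
    have hBu : Bs φ = Fc.biUnion (fun i => (Finset.Icc 1 s).filter (fun x => φ x = i)) := by
      ext x
      rw [Finset.mem_biUnion]
      constructor
      · intro hxB
        obtain ⟨hxs, hxφ⟩ := Finset.mem_filter.mp hxB
        exact ⟨φ x, Finset.mem_sdiff.mpr ⟨hFib.2.1 x hxs, hxφ⟩,
          Finset.mem_filter.mpr ⟨hxs, rfl⟩⟩
      · rintro ⟨i, hiFc, hxf⟩
        obtain ⟨hxs, hxφ⟩ := Finset.mem_filter.mp hxf
        refine Finset.mem_filter.mpr ⟨hxs, ?_⟩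
        rw [hxφ]
        exact (Finset.mem_sdiff.mp hiFc).2
    rw [hBu, Finset.card_biUnion]
    · rw [hScdef]
      exact Finset.sum_congr rfl (fun i hi => hFib.2.2 i (hFcIcc hi))
    · intro i hi j hj hij
      rw [Function.onFun, Finset.disjoint_left]
      intro x hx hx'
      exact hij (((Finset.mem_filter.mp hx).2.symm).trans (Finset.mem_filter.mp hx').2)
  set CT := Nat.multinomial F (Function.update m 1 (m 1 - 1)) with hCT
  set CM := Nat.multinomial Fc m with hCM
  let f : {φ : ℕ → ℕ // Fib (Finset.Icc 1 s) (Finset.Icc 1 r) m φ ∧ RC φ} →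
      ↥(Efree.powersetCard kk) := fun φp =>
    ⟨Bs φp.1 \ Fc, Finset.mem_powersetCard.mpr ⟨hBsEfree _ φp.2.1 φp.2.2, by
      rw [Finset.card_sdiff_of_subset (hFcBs _ φp.2.1 φp.2.2), hBscard _ φp.2.1 φp.2.2]⟩⟩
  rw [card_fiber_sum f]
  have hfiber : ∀ Ap : ↥(Efree.powersetCard kk),
      Nat.card {a // f a = Ap} = CT * CM := by
    rintro ⟨A, hA⟩
    obtain ⟨hAsubE, hAcard⟩ := Finset.mem_powersetCard.mp hA
    set Ec : Finset ℕ := A ∪ Fc with hEcdef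
    set EF : Finset ℕ := Finset.Icc 1 s \ Ec with hEFdef
    have hAFc : Disjoint A Fc := by
      rw [Finset.disjoint_left]
      intro x hxA hxFc
      exact (Finset.mem_sdiff.mp (hAsubE hxA)).2 (hFcsub2 hxFc)
    have hEcsub : Ec ⊆ Finset.Icc 1 s :=
      Finset.union_subset (hAsubE.trans Finset.sdiff_subset) (hFcsub2.trans hIcc2sub)
    have hEccard : Ec.card = Sc := by
      rw [hEcdef, Finset.card_union_of_disjoint hAFc]
      omega
    have hEFcard : EF.card = ∑ i ∈ F, m i := by
      rw [hEFdef, Finset.card_sdiff_of_subset hEcsub, Nat.card_Icc, hEccard]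
      omega
    have hvertEF : ∀ x, x ∈ F → x ≠ 1 → x ∈ EF := by
      intro x hxF hx1
      have hxIcc := hF hxF
      refine Finset.mem_sdiff.mpr ⟨hIccsub hxIcc, ?_⟩
      intro hxEc
      rcases Finset.mem_union.mp hxEc with h | h
      · exact (Finset.mem_sdiff.mp (hAsubE h)).2
          (by rw [Finset.mem_Icc] at hxIcc ⊢; omega)
      · exact (Finset.mem_sdiff.mp h).2 hxF
    have hFcEc : Fc ⊆ Ec := Finset.subset_union_right
    have hequiv : {a : {φ : ℕ → ℕ //
          Fib (Finset.Icc 1 s) (Finset.Icc 1 r) m φ ∧ RC φ} // f a = ⟨A, hA⟩} ≃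
        ({ψ : ℕ → ℕ // Fib EF F m ψ ∧ ∀ j ∈ F.erase 1, Rch ψ j} ×
         {ψ : ℕ → ℕ // Fib Ec Fc m ψ ∧ True}) := by
      refine ⟨?_, ?_, ?_, ?_⟩
      · -- toFun
        rintro ⟨⟨φ, hFib, hrc⟩, hfa⟩
        have hBA : Bs φ \ Fc = A := congrArg Subtype.val hfa
        have hBEc : Bs φ = Ec := by
          rw [hEcdef, ← hBA, Finset.sdiff_union_of_subset (hFcBs φ hFib hrc)]
        have hmemEF : ∀ x, x ∈ EF → φ x ∈ F := by
          intro x hx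
          obtain ⟨hxs, hxEc⟩ := Finset.mem_sdiff.mp hx
          by_contra hc
          exact hxEc (hBEc ▸ Finset.mem_filter.mpr ⟨hxs, hc⟩)
        have hmemEc : ∀ x, x ∈ Ec → φ x ∈ Fc := by
          intro x hx
          have hx' : x ∈ Bs φ := hBEc ▸ hx
          obtain ⟨hxs, hxφ⟩ := Finset.mem_filter.mp hx'
          exact Finset.mem_sdiff.mpr ⟨hFib.2.1 x hxs, hxφ⟩
        refine ⟨⟨fun x => if x ∈ EF then φ x else 0, ⟨?_, ?_, ?_⟩, ?_⟩,
          ⟨fun x => if x ∈ Ec then φ x else 0, ⟨?_, ?_, ?_⟩, trivial⟩⟩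
        · exact fun x hx => if_neg hx
        · intro x hx
          show (if x ∈ EF then φ x else 0) ∈ F
          rw [if_pos hx]
          exact hmemEF x hx
        · intro i hiF
          show (EF.filter fun x => (if x ∈ EF then φ x else 0) = i).card = m i
          have hfe : EF.filter (fun x => (if x ∈ EF then φ x else 0) = i)
              = (Finset.Icc 1 s).filter (fun x => φ x = i) := by
            ext x
            constructor
            · intro hx
              obtain ⟨hxEF, hxv⟩ := Finset.mem_filter.mp hx
              rw [if_pos hxEF] at hxv
              exact Finset.mem_filter.mpr ⟨(Finset.mem_sdiff.mp hxEF).1, hxv⟩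
            · intro hx
              obtain ⟨hxs, hxv⟩ := Finset.mem_filter.mp hx
              have hxEF : x ∈ EF := by
                refine Finset.mem_sdiff.mpr ⟨hxs, fun hxEc => ?_⟩
                exact (Finset.mem_sdiff.mp (hmemEc x hxEc)).2 (hxv ▸ hiF)
              refine Finset.mem_filter.mpr ⟨hxEF, ?_⟩
              rw [if_pos hxEF]
              exact hxv
          rw [hfe]
          exact hFib.2.2 i (hF hiF)
        · intro j hj
          obtain ⟨hj1, hjF⟩ := Finset.mem_erase.mp hj
          refine rch_congr (S := (↑F : Set ℕ)) ?_ ?_ j hjF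
            ((hrc j (hF hjF) hj1).mp hjF)
          · intro x hx hx1
            exact if_pos (hvertEF x hx hx1)
          · intro x hx hx1
            exact hvertF φ hFib hrc x hx hx1
        · exact fun x hx => if_neg hx
        · intro x hx
          show (if x ∈ Ec then φ x else 0) ∈ Fc
          rw [if_pos hx]
          exact hmemEc x hx
        · intro i hiFc
          show (Ec.filter fun x => (if x ∈ Ec then φ x else 0) = i).card = m i
          have hfe : Ec.filter (fun x => (if x ∈ Ec then φ x else 0) = i)
              = (Finset.Icc 1 s).filter (fun x => φ x = i) := by
            ext x
            constructor
            · intro hx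
              obtain ⟨hxEc, hxv⟩ := Finset.mem_filter.mp hx
              rw [if_pos hxEc] at hxv
              exact Finset.mem_filter.mpr ⟨hEcsub hxEc, hxv⟩
            · intro hx
              obtain ⟨hxs, hxv⟩ := Finset.mem_filter.mp hx
              have hφF : φ x ∉ F := by
                rw [hxv]
                exact (Finset.mem_sdiff.mp hiFc).2
              have hxEc : x ∈ Ec := hBEc ▸ Finset.mem_filter.mpr ⟨hxs, hφF⟩
              refine Finset.mem_filter.mpr ⟨hxEc, ?_⟩
              rw [if_pos hxEc]
              exact hxv
          rw [hfe]
          exact hFib.2.2 i (hFcIcc hiFc)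
      · -- invFun
        rintro ⟨⟨ψF, hFibF, hreach⟩, ⟨ψc, hFibc, -⟩⟩
        have hEFEc : Disjoint EF Ec := Finset.sdiff_disjoint
        have hφEF : ∀ x ∈ EF, ψF x + ψc x = ψF x := by
          intro x hx
          rw [hFibc.1 x (Finset.disjoint_left.mp hEFEc hx), add_zero]
        have hφEc : ∀ x ∈ Ec, ψF x + ψc x = ψc x := by
          intro x hx
          rw [hFibF.1 x (Finset.disjoint_right.mp hEFEc hx), zero_add]
        have hsplitmem : ∀ x ∈ Finset.Icc 1 s, x ∈ EF ∨ x ∈ Ec := by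
          intro x hx
          by_cases h : x ∈ Ec
          · exact Or.inr h
          · exact Or.inl (Finset.mem_sdiff.mpr ⟨hx, h⟩)
        have hFibφ : Fib (Finset.Icc 1 s) (Finset.Icc 1 r) m (fun x => ψF x + ψc x) := by
          refine ⟨?_, ?_, ?_⟩
          · intro x hx
            have h1 : ψF x = 0 := hFibF.1 x (fun hc => hx ((Finset.mem_sdiff.mp hc).1))
            have h2 : ψc x = 0 := hFibc.1 x (fun hc => hx (hEcsub hc))
            simp [h1, h2]
          · intro x hx
            show ψF x + ψc x ∈ Finset.Icc 1 r
            rcases hsplitmem x hx with h | h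
            · rw [hφEF x h]; exact hF (hFibF.2.1 x h)
            · rw [hφEc x h]; exact hFcIcc (hFibc.2.1 x h)
          · intro i hiIcc
            show ((Finset.Icc 1 s).filter fun x => ψF x + ψc x = i).card = m i
            by_cases hiF : i ∈ F
            · have hfe : (Finset.Icc 1 s).filter (fun x => ψF x + ψc x = i)
                  = EF.filter (fun x => ψF x = i) := by
                ext x
                constructor
                · intro hx
                  obtain ⟨hxs, hxv⟩ := Finset.mem_filter.mp hx
                  rcases hsplitmem x hxs with h | h
                  · refine Finset.mem_filter.mpr ⟨h, ?_⟩
                    rw [← hφEF x h]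
                    exact hxv
                  · exfalso
                    rw [hφEc x h] at hxv
                    exact (Finset.mem_sdiff.mp (hFibc.2.1 x h)).2 (hxv ▸ hiF)
                · intro hx
                  obtain ⟨hxEF, hxv⟩ := Finset.mem_filter.mp hx
                  refine Finset.mem_filter.mpr ⟨(Finset.mem_sdiff.mp hxEF).1, ?_⟩
                  rw [hφEF x hxEF]
                  exact hxv
              rw [hfe]
              exact hFibF.2.2 i hiF
            · have hiFc : i ∈ Fc := Finset.mem_sdiff.mpr ⟨hiIcc, hiF⟩
              have hfe : (Finset.Icc 1 s).filter (fun x => ψF x + ψc x = i)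
                  = Ec.filter (fun x => ψc x = i) := by
                ext x
                constructor
                · intro hx
                  obtain ⟨hxs, hxv⟩ := Finset.mem_filter.mp hx
                  rcases hsplitmem x hxs with h | h
                  · exfalso
                    rw [hφEF x h] at hxv
                    exact hiF (hxv ▸ hFibF.2.1 x h)
                  · refine Finset.mem_filter.mpr ⟨h, ?_⟩
                    rw [← hφEc x h]
                    exact hxv
                · intro hx
                  obtain ⟨hxEc, hxv⟩ := Finset.mem_filter.mp hx
                  refine Finset.mem_filter.mpr ⟨hEcsub hxEc, ?_⟩
                  rw [hφEc x hxEc]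
                  exact hxv
              rw [hfe]
              exact hFibc.2.2 i hiFc
        have hrcφ : RC (fun x => ψF x + ψc x) := by
          intro j hjIcc hj1
          by_cases hjF : j ∈ F
          · have hRj : Rch (fun x => ψF x + ψc x) j := by
              refine rch_congr (S := (↑F : Set ℕ)) ?_ ?_ j hjF
                (hreach j (Finset.mem_erase.mpr ⟨hj1, hjF⟩))
              · intro x hx hx1
                exact hφEF x (hvertEF x hx hx1)
              · intro x hx hx1
                exact hFibF.2.1 x (hvertEF x hx hx1)
            exact ⟨fun _ => hRj, fun _ => hjF⟩
          · have hjFc : j ∈ Fc := Finset.mem_sdiff.mpr ⟨hjIcc, hjF⟩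
            have hnR : ¬ Rch (fun x => ψF x + ψc x) j := by
              refine not_rch (C := (↑Fc : Set ℕ)) ?_ (fun hc => h1Fc hc) j hjFc
              intro x hx
              rw [hφEc x (hFcEc hx)]
              exact hFibc.2.1 x (hFcEc hx)
            exact ⟨fun h => absurd h hjF, fun h => absurd h hnR⟩
        refine ⟨⟨fun x => ψF x + ψc x, hFibφ, hrcφ⟩, ?_⟩
        apply Subtype.ext
        show Bs (fun x => ψF x + ψc x) \ Fc = A
        have hBEc : Bs (fun x => ψF x + ψc x) = Ec := by
          ext x
          constructor
          · intro hx
            obtain ⟨hxs, hxφ⟩ := Finset.mem_filter.mp hx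
            rcases hsplitmem x hxs with h | h
            · exact absurd (show (fun x => ψF x + ψc x) x ∈ F by
                show ψF x + ψc x ∈ F
                rw [hφEF x h]; exact hFibF.2.1 x h) hxφ
            · exact h
          · intro hx
            refine Finset.mem_filter.mpr ⟨hEcsub hx, ?_⟩
            show ¬ ψF x + ψc x ∈ F
            rw [hφEc x hx]
            exact (Finset.mem_sdiff.mp (hFibc.2.1 x hx)).2
        rw [hBEc, hEcdef]
        ext x
        simp only [Finset.mem_sdiff, Finset.mem_union]
        constructor
        · rintro ⟨h | h, hxFc⟩
          · exact h
          · exact absurd h hxFc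
        · intro hxA
          exact ⟨Or.inl hxA, Finset.disjoint_left.mp hAFc hxA⟩
      · -- left_inv
        rintro ⟨⟨φ, hFib, hrc⟩, hfa⟩
        have hBA : Bs φ \ Fc = A := congrArg Subtype.val hfa
        have hBEc : Bs φ = Ec := by
          rw [hEcdef, ← hBA, Finset.sdiff_union_of_subset (hFcBs φ hFib hrc)]
        apply Subtype.ext
        apply Subtype.ext
        show (fun x => (if x ∈ EF then φ x else 0) + (if x ∈ Ec then φ x else 0)) = φ
        funext x
        by_cases hxs : x ∈ Finset.Icc 1 s
        · by_cases hxEc : x ∈ Ec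
          · rw [if_neg (fun hc => (Finset.mem_sdiff.mp hc).2 hxEc), if_pos hxEc, zero_add]
          · rw [if_pos (Finset.mem_sdiff.mpr ⟨hxs, hxEc⟩), if_neg hxEc, add_zero]
        · rw [if_neg (fun hc => hxs (Finset.mem_sdiff.mp hc).1),
            if_neg (fun hc => hxs (hEcsub hc)), hFib.1 x hxs]
      · -- right_inv
        rintro ⟨⟨ψF, hFibF, hreach⟩, ⟨ψc, hFibc, -⟩⟩
        refine Prod.ext ?_ ?_
        · apply Subtype.ext
          funext x
          show (if x ∈ EF then (ψF x + ψc x) else 0) = ψF x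
          by_cases hx : x ∈ EF
          · rw [if_pos hx,
              hFibc.1 x (Finset.disjoint_left.mp Finset.sdiff_disjoint hx), add_zero]
          · rw [if_neg hx, hFibF.1 x hx]
        · apply Subtype.ext
          funext x
          show (if x ∈ Ec then (ψF x + ψc x) else 0) = ψc x
          by_cases hx : x ∈ Ec
          · rw [if_pos hx,
              hFibF.1 x (Finset.disjoint_right.mp Finset.sdiff_disjoint hx), zero_add]
          · rw [if_neg hx, hFibc.1 x hx]
    rw [Nat.card_congr hequiv, Nat.card_prod,
      Tcount (∑ i ∈ F, m i) EF F m hEFcard h0F h1F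
        (fun x hx => hvertEF x (Finset.mem_erase.mp hx).2 (Finset.mem_erase.mp hx).1)
        rfl (fun _ => hm 1 h1Icc),
      Mcount Sc Ec Fc m hEccard h0Fc hScdef.symm]
  rw [Finset.sum_congr rfl (fun Ap _ => hfiber Ap), Finset.sum_const, Finset.card_attach,
    Finset.card_powersetCard, smul_eq_mul, hEfreecard]
  have hgFc : ∑ i ∈ Fc, g i = Sc := by
    rw [hScdef]
    refine Finset.sum_congr rfl (fun i hi => ?_)
    have := hFcsub2 hi
    rw [Finset.mem_Icc] at this
    exact hg2 i this.1
  have hCTg : CT = (∑ i ∈ F, g i).factorial / ∏ i ∈ F, (g i).factorial := by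
    rw [hCT]
    have h1 : Nat.multinomial F (Function.update m 1 (m 1 - 1)) = Nat.multinomial F g := by
      apply Nat.multinomial_congr
      intro i hi
      by_cases hi1 : i = 1
      · subst hi1; rw [Function.update_self, hg1]
      · rw [Function.update_of_ne hi1]
        have := hF hi
        rw [Finset.mem_Icc] at this
        exact (hg2 i (by omega)).symm
    rw [h1]
    rfl
  have hCMg : CM = (∑ i ∈ Fc, g i).factorial / ∏ i ∈ Fc, (g i).factorial := by
    rw [hCM]
    have h1 : Nat.multinomial Fc m = Nat.multinomial Fc g := by
      apply Nat.multinomial_congr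
      intro i hi
      have := hFcsub2 hi
      rw [Finset.mem_Icc] at this
      exact (hg2 i this.1).symm
    rw [h1]
    rfl
  rw [hCTg, hCMg, hgFc, hkkdef]
  ring
end
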